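/- arXiv:2304.01624 — 12 statements merged into one kernel-verified Lean document; each statement's English description precedes it below -/
import Mathlib

section
/- Let F ∈ ℂ^{n×n}, v ∈ ℂ^n, and let j < n be such that the vectors v, Fv, …, F^j v are linearly independent. Let 𝔮 be a polynomial of degree j whose roots s_1, …, s_j (counted with multiplicity) all lie outside the spectrum of F. Then there exist a matrix Z ∈ ℂ^{n×j}, a row vector h ∈ ℂ^{1×j}, and an upper triangular matrix H ∈ ℂ^{j×j} whose diagonal entries are s_1, …, s_j in this order, such that: (i) the matrix V = [v Z] ∈ ℂ^{n×(j+1)} has full column rank; (ii) F·Z = v·h + Z·H (equivalently, F·V·[0; I_j] = V·[h; H] is a rational Arnoldi decomposition with poles s_1, …, s_j); and (iii) the column span of Z equals the rational Krylov space 𝔮(F)^{-1}·span{v, Fv, …, F^{j−1}v}. -/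
open Matrix Polynomial

namespace Stmt0Aux

variable {j : ℕ}

/-- Extension of `s : Fin j → ℂ` to `ℕ`. -/
noncomputable def sc (s : Fin j → ℂ) (i : ℕ) : ℂ := if h : i < j then s ⟨i, h⟩ else 0

/-- The tail products `∏_{i=m}^{j-1} (X - s_i)`. -/
noncomputable def r (s : Fin j → ℂ) (m : ℕ) : Polynomial ℂ :=
  ∏ i ∈ Finset.Ico m j, (X - C (sc s i))

lemma sc_eq (s : Fin j → ℂ) (k : Fin j) : sc s (k : ℕ) = s k := by
  simp [sc, k.isLt]

lemma r_monic (s : Fin j → ℂ) (m : ℕ) : (r s m).Monic :=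
  monic_prod_of_monic _ _ fun _ _ => monic_X_sub_C _

lemma r_natDegree (s : Fin j → ℂ) (m : ℕ) : (r s m).natDegree = j - m := by
  rw [r, natDegree_prod_of_monic _ _ (fun i _ => monic_X_sub_C _)]
  simp [natDegree_X_sub_C]

lemma r_succ (s : Fin j → ℂ) {m : ℕ} (hm : m < j) :
    r s m = (X - C (sc s m)) * r s (m + 1) := by
  rw [r, r, Finset.prod_eq_prod_Ico_succ_bot hm]

lemma r_of_le (s : Fin j → ℂ) {m : ℕ} (hm : j ≤ m) : r s m = 1 := by
  rw [r, Finset.Ico_eq_empty (by omega), Finset.prod_empty]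

lemma sum_mulVec {n : ℕ} {ι : Type*} (t : Finset ι) (A : ι → Matrix (Fin n) (Fin n) ℂ)
    (v : Fin n → ℂ) : (∑ i ∈ t, A i) *ᵥ v = ∑ i ∈ t, (A i) *ᵥ v := by
  ext i
  simp only [mulVec, dotProduct, Matrix.sum_apply, Finset.sum_mul, Finset.sum_apply]
  rw [Finset.sum_comm]

end Stmt0Aux

/-- Existence of a rational Arnoldi decomposition in special form:
`F·Z = v·h + Z·H` with `H` upper triangular having the poles `s₁,…,s_j` on its
diagonal, `[v Z]` of full column rank, and the columns of `Z` spanning the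
rational Krylov space `𝔮(F)⁻¹·span{v, Fv, …, F^{j-1}v}`. -/
theorem stmt0 (n j : ℕ) (hj : j < n)
    (F : Matrix (Fin n) (Fin n) ℂ) (v : Fin n → ℂ)
    (hindep : LinearIndependent ℂ (fun k : Fin (j + 1) => (F ^ (k : ℕ)) *ᵥ v))
    (s : Fin j → ℂ) (hs : ∀ i, s i ∉ spectrum ℂ F) :
    ∃ (Z : Matrix (Fin n) (Fin j) ℂ) (h : Matrix (Fin 1) (Fin j) ℂ)
      (H : Matrix (Fin j) (Fin j) ℂ),
      (∀ i k : Fin j, k < i → H i k = 0) ∧ (∀ i : Fin j, H i i = s i) ∧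
      LinearIndependent ℂ
        (fun c : Fin 1 ⊕ Fin j =>
          (fromCols (Matrix.of fun i (_ : Fin 1) => v i) Z)ᵀ c) ∧
      F * Z = (Matrix.of fun i (_ : Fin 1) => v i) * h + Z * H ∧
      Submodule.span ℂ (Set.range fun k : Fin j => Zᵀ k) =
        Submodule.comap
          (Matrix.mulVecLin (aeval F (∏ i : Fin j, (X - Polynomial.C (s i)))))
          (Submodule.span ℂ (Set.range fun k : Fin j => (F ^ (k : ℕ)) *ᵥ v)) := by
  classical
  -- the polynomial in the statement is `r s 0`
  have hq0 : (∏ i : Fin j, (X - C (s i))) = Stmt0Aux.r s 0 := by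
    rw [Stmt0Aux.r, ← Finset.range_eq_Ico,
      ← Fin.prod_univ_eq_prod_range (fun i => X - C (Stmt0Aux.sc s i)) j]
    exact Finset.prod_congr rfl fun i _ => by rw [Stmt0Aux.sc_eq]
  -- invertibility of evaluated factors
  have hfac : ∀ c : ℂ, c ∉ spectrum ℂ F →
      IsUnit (aeval F (X - C c) : Matrix (Fin n) (Fin n) ℂ) := by
    intro c hc
    rw [spectrum.notMem_iff] at hc
    have he : (aeval F (X - C c) : Matrix (Fin n) (Fin n) ℂ)
        = -(algebraMap ℂ _ c - F) := by
      rw [_root_.map_sub, aeval_X, aeval_C, neg_sub]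
    rw [he]
    exact hc.neg
  have hunit : ∀ k m : ℕ, j ≤ m + k → IsUnit (aeval F (Stmt0Aux.r s m)) := by
    intro k
    induction k with
    | zero =>
      intro m hm
      rw [Stmt0Aux.r_of_le s (by omega)]
      simp
    | succ k ih =>
      intro m hm
      by_cases h : m < j
      · rw [Stmt0Aux.r_succ s h, _root_.map_mul]
        refine (hfac _ ?_).mul (ih (m + 1) (by omega))
        have : Stmt0Aux.sc s m = s ⟨m, h⟩ := dif_pos h
        rw [this]; exact hs _
      · rw [Stmt0Aux.r_of_le s (by omega)]
        simp
  obtain ⟨Q, hQdef⟩ : ∃ Q : Matrix (Fin n) (Fin n) ℂ, Q = aeval F (Stmt0Aux.r s 0) :=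
    ⟨_, rfl⟩
  have hQ : IsUnit Q := by rw [hQdef]; exact hunit j 0 (by omega)
  obtain ⟨Qi, hQidef⟩ : ∃ Qi : Matrix (Fin n) (Fin n) ℂ, Qi = Ring.inverse Q := ⟨_, rfl⟩
  have hQiQ : Qi * Q = 1 := by rw [hQidef]; exact Ring.inverse_mul_cancel _ hQ
  have hQQi : Q * Qi = 1 := by rw [hQidef]; exact Ring.mul_inverse_cancel _ hQ
  -- commutation
  have hFQ : F * Q = Q * F := by
    have h1 : F * Q = aeval F (X * Stmt0Aux.r s 0) := by
      rw [hQdef, _root_.map_mul, aeval_X]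
    have h2 : Q * F = aeval F (Stmt0Aux.r s 0 * X) := by
      rw [hQdef, _root_.map_mul, aeval_X]
    rw [h1, h2, mul_comm (X : Polynomial ℂ)]
  have hFQi : F * Qi = Qi * F := by
    have e1 : Qi * (Q * F) * Qi = F * Qi := by rw [← mul_assoc, hQiQ, one_mul]
    have e2 : Qi * (F * Q) * Qi = Qi * F := by rw [mul_assoc, mul_assoc, hQQi, mul_one]
    rw [← e1, ← hFQ, e2]
  -- key vector families
  obtain ⟨u, hu⟩ : ∃ u : ℕ → (Fin n → ℂ),
      ∀ m, u m = (aeval F (Stmt0Aux.r s m)) *ᵥ v := ⟨_, fun _ => rfl⟩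
  obtain ⟨y, hy⟩ : ∃ y : ℕ → (Fin n → ℂ), ∀ m, y m = Qi *ᵥ u m := ⟨_, fun _ => rfl⟩
  have hQu0 : Q *ᵥ v = u 0 := by rw [hu 0, hQdef]
  have hy0 : y 0 = v := by
    rw [hy 0, ← hQu0, mulVec_mulVec, hQiQ, one_mulVec]
  have hQy : ∀ m, Q *ᵥ y m = u m := by
    intro m
    rw [hy m, mulVec_mulVec, hQQi, one_mulVec]
  -- the recurrences
  have hurec : ∀ m, m < j → F *ᵥ u (m + 1) = u m + Stmt0Aux.sc s m • u (m + 1) := by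
    intro m hm
    have h2 : (aeval F (X - C (Stmt0Aux.sc s m)) : Matrix (Fin n) (Fin n) ℂ)
        = F - Stmt0Aux.sc s m • 1 := by
      rw [_root_.map_sub, aeval_X, aeval_C, Algebra.algebraMap_eq_smul_one]
    have h1 : u m = (F - Stmt0Aux.sc s m • 1) *ᵥ u (m + 1) := by
      rw [hu m, hu (m + 1), mulVec_mulVec, ← h2, ← _root_.map_mul,
        ← Stmt0Aux.r_succ s hm]
    rw [h1, sub_mulVec, smul_mulVec, one_mulVec]
    abel
  have hyrec : ∀ m, m < j → F *ᵥ y (m + 1) = y m + Stmt0Aux.sc s m • y (m + 1) := by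
    intro m hm
    have step : F *ᵥ y (m + 1) = Qi *ᵥ (F *ᵥ u (m + 1)) := by
      rw [hy (m + 1), mulVec_mulVec, mulVec_mulVec, hFQi]
    rw [step, hurec m hm, mulVec_add, mulVec_smul, ← hy m, ← hy (m + 1)]
  -- key: a polynomial of degree ≤ j killing v must be zero
  have key : ∀ p : Polynomial ℂ, p.natDegree < j + 1 → (aeval F p) *ᵥ v = 0 → p = 0 := by
    intro p hdeg hpv
    rw [aeval_eq_sum_range' hdeg, Stmt0Aux.sum_mulVec] at hpv
    have hpv' : ∑ i : Fin (j + 1), p.coeff (i : ℕ) • ((F ^ (i : ℕ)) *ᵥ v) = 0 := by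
      rw [Fin.sum_univ_eq_sum_range (fun i => p.coeff i • ((F ^ i) *ᵥ v)) (j + 1)]
      simpa [smul_mulVec] using hpv
    have hcoeff := (Fintype.linearIndependent_iff.mp hindep) _ hpv'
    ext k
    by_cases hk : k < j + 1
    · simpa using hcoeff ⟨k, hk⟩
    · have hlt : p.natDegree < k := by omega
      simp [coeff_eq_zero_of_natDegree_lt hlt]
  -- linear independence of the u's
  have hu_indep : LinearIndependent ℂ (fun m : Fin (j + 1) => u (m : ℕ)) := by
    rw [Fintype.linearIndependent_iff]
    intro g hg
    set p : Polynomial ℂ := ∑ m : Fin (j + 1), g m • Stmt0Aux.r s (m : ℕ) with hpdef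
    have hpdeg : p.natDegree < j + 1 := by
      refine Nat.lt_succ_of_le (natDegree_sum_le_of_forall_le _ _ fun m _ => ?_)
      refine le_trans (natDegree_smul_le _ _) ?_
      rw [Stmt0Aux.r_natDegree]; omega
    have hpv : (aeval F p) *ᵥ v = 0 := by
      rw [hpdef, _root_.map_sum, Stmt0Aux.sum_mulVec]
      have hterm : ∀ m : Fin (j + 1),
          (aeval F (g m • Stmt0Aux.r s (m : ℕ))) *ᵥ v = g m • u (m : ℕ) := by
        intro m
        rw [_root_.map_smul, smul_mulVec, ← hu (m : ℕ)]
      rw [Finset.sum_congr rfl fun m _ => hterm m]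
      exact hg
    have hp0 : p = 0 := key p hpdeg hpv
    have main : ∀ N : ℕ, ∀ m : Fin (j + 1), (m : ℕ) = N → g m = 0 := by
      intro N
      induction N using Nat.strong_induction_on with
      | _ N ih =>
        intro m hm
        have hc : p.coeff (j - (m : ℕ)) = g m := by
          rw [hpdef, finset_sum_coeff]
          rw [Finset.sum_eq_single m]
          · rw [coeff_smul]
            have h1 : (Stmt0Aux.r s (m : ℕ)).coeff (j - (m : ℕ)) = 1 := by
              have hmc := (Stmt0Aux.r_monic s (m : ℕ)).coeff_natDegree
              rwa [Stmt0Aux.r_natDegree] at hmc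
            rw [h1, smul_eq_mul, mul_one]
          · intro m' _ hne
            rcases lt_or_gt_of_ne (fun h : (m' : ℕ) = (m : ℕ) => hne (Fin.ext h)) with hlt | hgt
            · rw [ih (m' : ℕ) (by omega) m' rfl, zero_smul, coeff_zero]
            · rw [coeff_smul, coeff_eq_zero_of_natDegree_lt, smul_zero]
              rw [Stmt0Aux.r_natDegree]
              have := m'.isLt
              omega
          · intro hmem; exact absurd (Finset.mem_univ m) hmem
        rw [← hc, hp0, coeff_zero]
    intro m
    exact main (m : ℕ) m rfl
  -- linear independence of the y's
  have hy_indep : LinearIndependent ℂ (fun m : Fin (j + 1) => y (m : ℕ)) := by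
    refine LinearIndependent.of_comp (Matrix.mulVecLin Q) ?_
    have hcomp : (⇑(Matrix.mulVecLin Q) ∘ fun m : Fin (j + 1) => y (m : ℕ))
        = fun m : Fin (j + 1) => u (m : ℕ) := by
      funext m
      simp only [Function.comp_apply, mulVecLin_apply]
      exact hQy (m : ℕ)
    rw [hcomp]
    exact hu_indep
  -- data
  refine ⟨Matrix.of fun (i : Fin n) (k : Fin j) => y ((k : ℕ) + 1) i,
    Matrix.of fun (_ : Fin 1) (k : Fin j) => if (k : ℕ) = 0 then (1 : ℂ) else 0,
    Matrix.of fun (m k : Fin j) => (if m = k then s k else 0) +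
      (if (m : ℕ) + 1 = (k : ℕ) then (1 : ℂ) else 0), ?_, ?_, ?_, ?_, ?_⟩
  · -- strictly lower part of H vanishes
    intro i k hki
    have h1 : i ≠ k := fun e => absurd e.symm (ne_of_lt hki)
    have h2 : (i : ℕ) + 1 ≠ (k : ℕ) := by
      have : (k : ℕ) < (i : ℕ) := hki
      omega
    simp [h1, h2]
  · -- diagonal of H
    intro i
    simp
  · -- linear independence of [v Z]
    have hg_inj : Function.Injective
        (Sum.elim (fun _ : Fin 1 => (0 : Fin (j + 1))) (fun k : Fin j => k.succ)) := by
      intro a b hab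
      match a, b with
      | Sum.inl a, Sum.inl b => rw [Subsingleton.elim a b]
      | Sum.inl a, Sum.inr b => exact absurd hab.symm (Fin.succ_ne_zero b)
      | Sum.inr a, Sum.inl b => exact absurd hab (Fin.succ_ne_zero a)
      | Sum.inr a, Sum.inr b => rw [Fin.succ_injective _ hab]
    have hfam : (fun c : Fin 1 ⊕ Fin j =>
        (fromCols (Matrix.of fun i (_ : Fin 1) => v i)
          (Matrix.of fun (i : Fin n) (k : Fin j) => y ((k : ℕ) + 1) i))ᵀ c)
        = (fun m : Fin (j + 1) => y (m : ℕ))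
          ∘ (Sum.elim (fun _ : Fin 1 => (0 : Fin (j + 1))) (fun k : Fin j => k.succ)) := by
      funext c
      match c with
      | Sum.inl a =>
        funext i
        show v i = y 0 i
        rw [hy0]
      | Sum.inr k =>
        funext i
        rfl
    rw [hfam]
    exact hy_indep.comp _ hg_inj
  · -- matrix identity
    ext i k
    have hrec := congrFun (hyrec (k : ℕ) k.isLt) i
    have hL : (F * Matrix.of fun (i : Fin n) (k : Fin j) => y ((k : ℕ) + 1) i) i k
        = (F *ᵥ y ((k : ℕ) + 1)) i := by
      simp [mul_apply, mulVec, dotProduct]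
    have hZH : ((Matrix.of fun (i : Fin n) (k : Fin j) => y ((k : ℕ) + 1) i) *
        (Matrix.of fun (m k : Fin j) => (if m = k then s k else 0) +
          (if (m : ℕ) + 1 = (k : ℕ) then (1 : ℂ) else 0))) i k
        = y ((k : ℕ) + 1) i * s k
          + ∑ m : Fin j, y ((m : ℕ) + 1) i * (if (m : ℕ) + 1 = (k : ℕ) then (1 : ℂ) else 0) := by
      rw [mul_apply]
      have hterm : ∀ m : Fin j, (Matrix.of fun (i : Fin n) (k : Fin j) => y ((k : ℕ) + 1) i) i m *
          ((Matrix.of fun (m k : Fin j) => (if m = k then s k else 0) +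
            (if (m : ℕ) + 1 = (k : ℕ) then (1 : ℂ) else 0)) m k)
          = (if m = k then y ((m : ℕ) + 1) i * s k else 0)
            + y ((m : ℕ) + 1) i * (if (m : ℕ) + 1 = (k : ℕ) then (1 : ℂ) else 0) := by
        intro m
        simp only [Matrix.of_apply, mul_add, mul_ite, mul_zero]
      rw [Finset.sum_congr rfl fun m _ => hterm m, Finset.sum_add_distrib,
        Finset.sum_ite_eq' Finset.univ k (fun m => y ((m : ℕ) + 1) i * s k)]
      simp
    have hvh : ((Matrix.of fun i (_ : Fin 1) => v i) *
        (Matrix.of fun (_ : Fin 1) (k : Fin j) => if (k : ℕ) = 0 then (1 : ℂ) else 0)) i k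
        = v i * (if (k : ℕ) = 0 then (1 : ℂ) else 0) := by
      simp [mul_apply]
    rw [Matrix.add_apply, hL, hvh, hZH, hrec]
    by_cases hk : (k : ℕ) = 0
    · have hsum : ∑ m : Fin j, y ((m : ℕ) + 1) i *
          (if (m : ℕ) + 1 = (k : ℕ) then (1 : ℂ) else 0) = 0 := by
        apply Finset.sum_eq_zero
        intro m _
        rw [if_neg (by omega), mul_zero]
      rw [hsum, if_pos hk, Stmt0Aux.sc_eq, hk, hy0]
      simp only [Pi.add_apply, Pi.smul_apply, smul_eq_mul]
      ring
    · obtain ⟨t, ht⟩ : ∃ t, (k : ℕ) = t + 1 := ⟨(k : ℕ) - 1, by omega⟩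
      have htj : t < j := by have := k.isLt; omega
      have hsum : ∑ m : Fin j, y ((m : ℕ) + 1) i *
          (if (m : ℕ) + 1 = (k : ℕ) then (1 : ℂ) else 0) = y ((k : ℕ)) i := by
        rw [Finset.sum_eq_single (⟨t, htj⟩ : Fin j)]
        · rw [if_pos (by simp [ht]), mul_one]
          show y (t + 1) i = y ((k : ℕ)) i
          rw [ht]
        · intro m _ hne
          rw [if_neg, mul_zero]
          intro he
          exact hne (Fin.ext (show (m : ℕ) = t by omega))
        · intro hmem; exact absurd (Finset.mem_univ _) hmem
      rw [hsum, if_neg hk, Stmt0Aux.sc_eq]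
      simp only [Pi.add_apply, Pi.smul_apply, smul_eq_mul]
      ring
  · -- span equality
    rw [hq0, ← hQdef]
    have hmemK : ∀ p : Polynomial ℂ, p.natDegree < j → (aeval F p) *ᵥ v ∈
        Submodule.span ℂ (Set.range fun k : Fin j => (F ^ (k : ℕ)) *ᵥ v) := by
      intro p hdeg
      rw [aeval_eq_sum_range' hdeg, Stmt0Aux.sum_mulVec]
      apply Submodule.sum_mem
      intro i hi
      rw [smul_mulVec]
      apply Submodule.smul_mem
      apply Submodule.subset_span
      exact ⟨⟨i, Finset.mem_range.mp hi⟩, rfl⟩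
    have hu'indep : LinearIndependent ℂ (fun k : Fin j => u ((k : ℕ) + 1)) :=
      hu_indep.comp (Fin.succ) (Fin.succ_injective j)
    have hKindep : LinearIndependent ℂ (fun k : Fin j => (F ^ (k : ℕ)) *ᵥ v) :=
      hindep.comp (Fin.castSucc) (Fin.castSucc_injective j)
    have hspanle : Submodule.span ℂ (Set.range fun k : Fin j => u ((k : ℕ) + 1)) ≤
        Submodule.span ℂ (Set.range fun k : Fin j => (F ^ (k : ℕ)) *ᵥ v) := by
      rw [Submodule.span_le]
      rintro x ⟨k, rfl⟩
      show u ((k : ℕ) + 1) ∈ _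
      rw [hu ((k : ℕ) + 1)]
      apply hmemK
      rw [Stmt0Aux.r_natDegree]
      have := k.isLt
      omega
    have hspanU : Submodule.span ℂ (Set.range fun k : Fin j => u ((k : ℕ) + 1)) =
        Submodule.span ℂ (Set.range fun k : Fin j => (F ^ (k : ℕ)) *ᵥ v) := by
      apply Submodule.eq_of_le_of_finrank_le hspanle
      rw [finrank_span_eq_card hu'indep, finrank_span_eq_card hKindep]
    have hinj : Function.Injective (Matrix.mulVecLin Q) := by
      intro a b hab
      have h2 : Qi *ᵥ (Q *ᵥ a) = Qi *ᵥ (Q *ᵥ b) := by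
        simp only [mulVecLin_apply] at hab
        rw [hab]
      rwa [mulVec_mulVec, mulVec_mulVec, hQiQ, one_mulVec, one_mulVec] at h2
    have hmap : Submodule.map (Matrix.mulVecLin Q)
        (Submodule.span ℂ (Set.range fun k : Fin j => y ((k : ℕ) + 1)))
        = Submodule.span ℂ (Set.range fun k : Fin j => (F ^ (k : ℕ)) *ᵥ v) := by
      rw [Submodule.map_span, ← Set.range_comp, ← hspanU]
      congr 1
      apply congrArg
      funext k
      simp only [Function.comp_apply, mulVecLin_apply]
      exact hQy ((k : ℕ) + 1)
    have hZcols : (fun k : Fin j => (Matrix.of fun (i : Fin n) (k : Fin j) => y ((k : ℕ) + 1) i)ᵀ k)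
        = fun k : Fin j => y ((k : ℕ) + 1) := by
      funext k
      rfl
    rw [hZcols, ← hmap, Submodule.comap_map_eq_of_injective hinj]
end

section
/- Let F ∈ ℂ^{n×n}, v ∈ ℂ^n, and let j < n be such that the vectors v, Fv, …, F^j v are linearly independent. Let 𝔮 be a polynomial of degree j such that 𝔮(F) is invertible. Then v does not belong to the rational Krylov subspace 𝔮(F)^{-1}·span{v, Fv, …, F^{j−1}v}. -/
open Matrix Polynomial

/-- If `v, Fv, …, F^j v` are linearly independent and `𝔮` is a degree-`j`
polynomial with `𝔮(F)` invertible, then `v` does not lie in the rational Krylov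
subspace `𝔮(F)⁻¹·span{v, Fv, …, F^{j-1}v}`. -/
theorem stmt1 (n j : ℕ) (hj : j < n)
    (F : Matrix (Fin n) (Fin n) ℂ) (v : Fin n → ℂ)
    (hindep : LinearIndependent ℂ (fun k : Fin (j + 1) => (F ^ (k : ℕ)) *ᵥ v))
    (𝔮 : Polynomial ℂ) (hdeg : 𝔮.degree = j) (hunit : IsUnit (aeval F 𝔮)) :
    v ∉ Submodule.comap (Matrix.mulVecLin (aeval F 𝔮))
        (Submodule.span ℂ (Set.range fun k : Fin j => (F ^ (k : ℕ)) *ᵥ v)) := by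
  intro h
  rw [Submodule.mem_comap] at h
  set w : Fin (j + 1) → (Fin n → ℂ) := fun k => (F ^ (k : ℕ)) *ᵥ v with hw
  have hq0 : 𝔮 ≠ 0 := fun h0 => by simp [h0] at hdeg
  have hnd : 𝔮.natDegree = j := natDegree_eq_of_degree_eq_some hdeg
  have hc : 𝔮.coeff j ≠ 0 := by
    rw [← hnd]; exact mt leadingCoeff_eq_zero.mp hq0
  set T := Submodule.span ℂ (w '' {Fin.last j}ᶜ) with hT
  have hsub : Submodule.span ℂ (Set.range fun k : Fin j => (F ^ (k : ℕ)) *ᵥ v) ≤ T := by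
    apply Submodule.span_mono
    rintro _ ⟨k, rfl⟩
    exact ⟨k.castSucc, by simp [Fin.ext_iff, k.is_lt.ne], by simp [hw]⟩
  have heval : (aeval F 𝔮).mulVecLin v
      = ∑ i ∈ Finset.range (j + 1), 𝔮.coeff i • ((F ^ i) *ᵥ v) := by
    rw [aeval_eq_sum_range, hnd]
    have key : ∀ s : Finset ℕ, (∑ i ∈ s, 𝔮.coeff i • F ^ i) *ᵥ v
        = ∑ i ∈ s, 𝔮.coeff i • ((F ^ i) *ᵥ v) := by
      intro s
      induction s using Finset.induction with
      | empty => simp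
      | insert a s hmem ih =>
        rw [Finset.sum_insert hmem, Finset.sum_insert hmem, Matrix.add_mulVec,
          Matrix.smul_mulVec, ih]
    simpa using key (Finset.range (j + 1))
  have hsumsplit : ∑ i ∈ Finset.range (j + 1), 𝔮.coeff i • ((F ^ i) *ᵥ v)
      = (∑ i ∈ Finset.range j, 𝔮.coeff i • ((F ^ i) *ᵥ v)) + 𝔮.coeff j • ((F ^ j) *ᵥ v) :=
    Finset.sum_range_succ _ _
  have hinT : (aeval F 𝔮).mulVecLin v ∈ T := hsub h
  have hlow : ∑ i ∈ Finset.range j, 𝔮.coeff i • ((F ^ i) *ᵥ v) ∈ T := by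
    apply Submodule.sum_mem
    intro i hi
    apply Submodule.smul_mem
    apply Submodule.subset_span
    refine ⟨⟨i, Nat.lt_succ_of_lt (Finset.mem_range.mp hi)⟩, ?_, by simp [hw]⟩
    simp [Fin.ext_iff, (Finset.mem_range.mp hi).ne]
  have hlast : 𝔮.coeff j • ((F ^ j) *ᵥ v) ∈ T := by
    have : 𝔮.coeff j • ((F ^ j) *ᵥ v)
        = (aeval F 𝔮).mulVecLin v - ∑ i ∈ Finset.range j, 𝔮.coeff i • ((F ^ i) *ᵥ v) := by
      rw [heval, hsumsplit]; abel
    rw [this]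
    exact Submodule.sub_mem _ hinT hlow
  have hwl : w (Fin.last j) ∈ T := by
    have := Submodule.smul_mem T (𝔮.coeff j)⁻¹ hlast
    rwa [smul_smul, inv_mul_cancel₀ hc, one_smul] at this
  exact hindep.notMem_span_image (by simp) hwl
end

section
/- Let F ∈ ℂ^{n×n}, 𝐯 ∈ ℂ^{n×p}, Z ∈ ℂ^{n×q} with Z of full column rank, h ∈ ℂ^{p×q} and H ∈ ℂ^{q×q}, and suppose F·Z = 𝐯·h + Z·H. If z ∈ ℂ^q is nonzero, H·z = s·z for some s ∈ ℂ, and s is not an eigenvalue of F, then h·z ≠ 0. (In particular, if no eigenvalue of H is an eigenvalue of F, the pair (h, H) is observable.) -/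
open Matrix

/-- From a (block) rational Arnoldi decomposition `F·Z = V·h + Z·H` with `Z`
of full column rank: any eigenvector `z` of `H` whose eigenvalue `s` is not an
eigenvalue of `F` satisfies `h·z ≠ 0` (observability of the pair `(h, H)`). -/
theorem stmt2 (n p q : ℕ)
    (F : Matrix (Fin n) (Fin n) ℂ) (V : Matrix (Fin n) (Fin p) ℂ)
    (Z : Matrix (Fin n) (Fin q) ℂ)
    (hZ : LinearIndependent ℂ (fun c : Fin q => Zᵀ c))
    (h : Matrix (Fin p) (Fin q) ℂ) (H : Matrix (Fin q) (Fin q) ℂ)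
    (hbrad : F * Z = V * h + Z * H)
    (z : Fin q → ℂ) (hz : z ≠ 0) (s : ℂ) (hev : H *ᵥ z = s • z)
    (hs : s ∉ spectrum ℂ F) :
    h *ᵥ z ≠ 0 := by
  intro hc
  -- From the decomposition: F (Z z) = s • (Z z)
  have key : F *ᵥ (Z *ᵥ z) = s • (Z *ᵥ z) := by
    rw [mulVec_mulVec, hbrad, add_mulVec, ← mulVec_mulVec, ← mulVec_mulVec,
      hc, mulVec_zero, zero_add, hev, mulVec_smul]
  -- s not in the spectrum: (s • 1 - F) is a unit
  have hunit : IsUnit (s • (1 : Matrix (Fin n) (Fin n) ℂ) - F) := by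
    rw [spectrum.mem_iff, not_not] at hs
    simpa [Algebra.algebraMap_eq_smul_one] using hs
  have hZz : (s • (1 : Matrix (Fin n) (Fin n) ℂ) - F) *ᵥ (Z *ᵥ z) = 0 := by
    rw [sub_mulVec, smul_mulVec, one_mulVec, key, sub_self]
  have hZz0 : Z *ᵥ z = 0 := by
    have := hunit.invertible
    have := congrArg (fun w => (s • (1 : Matrix (Fin n) (Fin n) ℂ) - F)⁻¹ *ᵥ w) hZz
    simpa [mulVec_mulVec, Matrix.nonsing_inv_mul _
      ((Matrix.isUnit_iff_isUnit_det _).mp hunit)] using this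
  -- linear independence of columns of Z forces z = 0
  apply hz
  have := Fintype.linearIndependent_iff.mp hZ z ?_
  · funext i; exact this i
  · funext r
    have : (Z *ᵥ z) r = 0 := by rw [hZz0]; rfl
    simpa [mulVec, dotProduct, mul_comm] using this
end

section
/- Let F ∈ ℂ^{n×n}, v ∈ ℂ^n, Z ∈ ℂ^{n×j}, h ∈ ℂ^{1×j} and let H ∈ ℂ^{j×j} be upper triangular with diagonal entries s_1, …, s_j. Assume: the matrix [v Z] ∈ ℂ^{n×(j+1)} has full column rank; F·Z = v·h + Z·H; every s_i has positive real part; and no s_i is an eigenvalue of F. Then, for any B ∈ ℂ^{n×m}, the Lyapunov equation Ỹ·H + Hᴴ·Ỹ − (Zᴴ B Bᴴ Z + hᴴ h) = 0 has a unique Hermitian solution Ỹ ∈ ℂ^{j×j}, and this solution is positive definite. -/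
open Matrix
open scoped ComplexOrder

private lemma diag_mul_triangular {j : ℕ} (A B : Matrix (Fin j) (Fin j) ℂ)
    (hA : A.BlockTriangular id) (hB : B.BlockTriangular id) (i : Fin j) :
    (A * B) i i = A i i * B i i := by
  rw [Matrix.mul_apply]
  refine Finset.sum_eq_single i (fun l _ hl => ?_) (by simp)
  rcases lt_or_gt_of_ne hl with hlt | hgt
  · rw [hA (show (id l : Fin j) < id i from hlt), zero_mul]
  · rw [hB (show (id i : Fin j) < id l from hgt), mul_zero]

private lemma sylvester_inj {j : ℕ} (H : Matrix (Fin j) (Fin j) ℂ) (s : Fin j → ℂ)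
    (htri : ∀ i k : Fin j, k < i → H i k = 0) (hdiag : ∀ i : Fin j, H i i = s i)
    (hre : ∀ i, 0 < (s i).re) (X : Matrix (Fin j) (Fin j) ℂ)
    (hX : X * H + Hᴴ * X = 0) : X = 0 := by
  have key : ∀ N : ℕ, ∀ i k : Fin j, (i : ℕ) + (k : ℕ) = N → X i k = 0 := by
    intro N
    induction N using Nat.strong_induction_on with
    | _ N IH =>
      intro i k hik
      have e : (X * H + Hᴴ * X) i k = 0 := by rw [hX]; rfl
      rw [Matrix.add_apply, Matrix.mul_apply, Matrix.mul_apply] at e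
      have h1 : ∑ l, X i l * H l k = X i k * s k := by
        have h0 : ∀ l ∈ Finset.univ, l ≠ k → X i l * H l k = 0 := by
          intro l _ hl
          rcases lt_or_gt_of_ne hl with hlt | hgt
          · have hlk : (l : ℕ) < k := hlt
            rw [IH ((i : ℕ) + l) (by omega) i l rfl, zero_mul]
          · rw [htri l k hgt, mul_zero]
        rw [Finset.sum_eq_single k h0 (by simp), hdiag]
      have h2 : ∑ l, Hᴴ i l * X l k = star (s i) * X i k := by
        have h0 : ∀ l ∈ Finset.univ, l ≠ i → Hᴴ i l * X l k = 0 := by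
          intro l _ hl
          rcases lt_or_gt_of_ne hl with hlt | hgt
          · have hli : (l : ℕ) < i := hlt
            rw [IH ((l : ℕ) + k) (by omega) l k rfl, mul_zero]
          · rw [Matrix.conjTranspose_apply, htri l i hgt, star_zero, zero_mul]
        rw [Finset.sum_eq_single i h0 (by simp), Matrix.conjTranspose_apply, hdiag]
      rw [h1, h2] at e
      have hfac : s k + star (s i) ≠ 0 := by
        intro hc
        have h3 : (s k + star (s i)).re = 0 := by rw [hc]; rfl
        rw [Complex.add_re, Complex.star_def, Complex.conj_re] at h3
        have := hre i; have := hre k; linarith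
      have hz : X i k * (s k + star (s i)) = 0 := by linear_combination e
      rcases mul_eq_zero.mp hz with h' | h'
      · exact h'
      · exact absurd h' hfac
  ext i k
  simpa using key ((i : ℕ) + k) i k rfl

private lemma sylvester_solve {j : ℕ} (H : Matrix (Fin j) (Fin j) ℂ) (s : Fin j → ℂ)
    (htri : ∀ i k : Fin j, k < i → H i k = 0) (hdiag : ∀ i : Fin j, H i i = s i)
    (hre : ∀ i, 0 < (s i).re) (Q : Matrix (Fin j) (Fin j) ℂ) :
    ∃ Yt : Matrix (Fin j) (Fin j) ℂ, Yt * H + Hᴴ * Yt = Q ∧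
      ∀ Y', Y' * H + Hᴴ * Y' = Q → Y' = Yt := by
  let L : Matrix (Fin j) (Fin j) ℂ →ₗ[ℂ] Matrix (Fin j) (Fin j) ℂ :=
    { toFun := fun X => X * H + Hᴴ * X
      map_add' := fun X Y => by
        simp only [add_mul, mul_add]; abel
      map_smul' := fun c X => by
        simp only [smul_mul_assoc, mul_smul_comm, smul_add, RingHom.id_apply] }
  have hinj : Function.Injective L := by
    intro X Y hXY
    have hXY' : X * H + Hᴴ * X = Y * H + Hᴴ * Y := hXY
    have h0 : (X - Y) * H + Hᴴ * (X - Y) = 0 := by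
      rw [sub_mul, mul_sub,
        show X * H - Y * H + (Hᴴ * X - Hᴴ * Y) = X * H + Hᴴ * X - (Y * H + Hᴴ * Y) from by abel,
        hXY', sub_self]
    exact sub_eq_zero.mp (sylvester_inj H s htri hdiag hre (X - Y) h0)
  have hsurj : Function.Surjective L := LinearMap.injective_iff_surjective.mp hinj
  obtain ⟨Yt, hYt⟩ := hsurj Q
  refine ⟨Yt, hYt, fun Y' hY' => hinj ?_⟩
  show L Y' = L Yt
  rw [hYt]
  exact hY'

private lemma row_bound_mulVec {j : ℕ} (A : Matrix (Fin j) (Fin j) ℂ) (ρ : ℝ)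
    (hρ : 0 ≤ ρ) (hrow : ∀ i, ∑ k, ‖A i k‖ ≤ ρ) (w : Fin j → ℂ) :
    ‖A *ᵥ w‖ ≤ ρ * ‖w‖ := by
  rw [pi_norm_le_iff_of_nonneg (mul_nonneg hρ (norm_nonneg w))]
  intro i
  calc ‖(A *ᵥ w) i‖ = ‖∑ k, A i k * w k‖ := rfl
    _ ≤ ∑ k, ‖A i k * w k‖ := norm_sum_le _ _
    _ ≤ ∑ k, ‖A i k‖ * ‖w‖ := by
        refine Finset.sum_le_sum fun k _ => ?_
        rw [norm_mul]
        exact mul_le_mul_of_nonneg_left (norm_le_pi_norm w k) (norm_nonneg _)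
    _ = (∑ k, ‖A i k‖) * ‖w‖ := by rw [Finset.sum_mul]
    _ ≤ ρ * ‖w‖ := mul_le_mul_of_nonneg_right (hrow i) (norm_nonneg w)

private lemma pow_mulVec_decay {j : ℕ} (hj : 0 < j) (C : Matrix (Fin j) (Fin j) ℂ)
    (hC : C.BlockTriangular id) (hd : ∀ i, ‖C i i‖ < 1) (x : Fin j → ℂ) :
    ∃ c ρ : ℝ, 0 ≤ c ∧ 0 ≤ ρ ∧ ρ < 1 ∧ ∀ N : ℕ, ‖(C ^ N) *ᵥ x‖ ≤ c * ρ ^ N := by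
  haveI : Nonempty (Fin j) := Fin.pos_iff_nonempty.mp hj
  set r : ℝ := Finset.univ.sup' Finset.univ_nonempty (fun i => ‖C i i‖) with hr
  have hr1 : r < 1 := (Finset.sup'_lt_iff _).mpr fun i _ => hd i
  obtain ⟨a⟩ := ‹Nonempty (Fin j)›
  have hr0 : 0 ≤ r :=
    le_trans (norm_nonneg (C a a)) (Finset.le_sup' (fun i => ‖C i i‖) (Finset.mem_univ a))
  set G : ℝ := (∑ i, ∑ k, ‖C i k‖) + 1 with hG
  have hG0 : 0 < G := by positivity
  have hGrow : ∀ i, ∑ k, ‖C i k‖ ≤ G - 1 := by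
    intro i
    have : ∑ k, ‖C i k‖ ≤ ∑ i', ∑ k, ‖C i' k‖ :=
      Finset.single_le_sum (f := fun i' => ∑ k, ‖C i' k‖)
        (fun i' _ => Finset.sum_nonneg fun k _ => norm_nonneg _) (Finset.mem_univ i)
    simp only [hG]; linarith
  set ε : ℝ := min 1 ((1 - r) / (2 * G)) with hε
  have hε0 : 0 < ε := lt_min one_pos (div_pos (by linarith) (by positivity))
  have hε1 : ε ≤ 1 := min_le_left _ _
  have hεG : ε * G ≤ (1 - r) / 2 := by
    have h1 : ε ≤ (1 - r) / (2 * G) := min_le_right _ _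
    calc ε * G ≤ ((1 - r) / (2 * G)) * G := mul_le_mul_of_nonneg_right h1 hG0.le
      _ = (1 - r) / 2 := by field_simp
  set d : Fin j → ℂ := fun i => (ε : ℂ) ^ (i : ℕ) with hdd
  have hd0 : ∀ i, d i ≠ 0 := fun i => pow_ne_zero _ (by exact_mod_cast hε0.ne')
  set D : Matrix (Fin j) (Fin j) ℂ := Matrix.diagonal d with hD
  set Dinv : Matrix (Fin j) (Fin j) ℂ := Matrix.diagonal (fun i => (d i)⁻¹) with hDinv
  have hDD : D * Dinv = 1 := by
    rw [hD, hDinv, Matrix.diagonal_mul_diagonal]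
    rw [show (fun i => d i * (d i)⁻¹) = fun _ => (1 : ℂ) by
      funext i; exact mul_inv_cancel₀ (hd0 i)]
    exact Matrix.diagonal_one
  have hDD' : Dinv * D = 1 := by
    rw [hDinv, hD, Matrix.diagonal_mul_diagonal]
    rw [show (fun i => (d i)⁻¹ * d i) = fun _ => (1 : ℂ) by
      funext i; exact inv_mul_cancel₀ (hd0 i)]
    exact Matrix.diagonal_one
  set M : Matrix (Fin j) (Fin j) ℂ := Dinv * C * D with hM
  have hCM : C = D * M * Dinv := by
    rw [hM]
    calc C = 1 * C * 1 := by rw [one_mul, mul_one]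
      _ = (D * Dinv) * C * (D * Dinv) := by rw [hDD]
      _ = D * (Dinv * C * D) * Dinv := by noncomm_ring
  have hpow : ∀ N : ℕ, C ^ N = D * M ^ N * Dinv := by
    intro N
    induction N with
    | zero => simp [hDD]
    | succ N ih =>
      rw [pow_succ, ih, hCM, pow_succ]
      calc D * M ^ N * Dinv * (D * M * Dinv) = D * M ^ N * (Dinv * D) * M * Dinv := by
            noncomm_ring
        _ = D * (M ^ N * M) * Dinv := by rw [hDD']; noncomm_ring
  set ρ : ℝ := (1 + r) / 2 with hρdef
  have hρ0 : 0 ≤ ρ := by positivity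
  have hρ1 : ρ < 1 := by rw [hρdef]; linarith
  have hMij : ∀ i k : Fin j, M i k = (d i)⁻¹ * C i k * d k := by
    intro i k
    rw [hM, mul_assoc, hDinv, hD, Matrix.diagonal_mul, Matrix.mul_diagonal, mul_assoc]
  have hrowM : ∀ i, ∑ k, ‖M i k‖ ≤ ρ := by
    intro i
    have hsplit : ∑ k, ‖M i k‖ = ‖M i i‖ + ∑ k ∈ Finset.univ.erase i, ‖M i k‖ :=
      (Finset.add_sum_erase _ _ (Finset.mem_univ i)).symm
    have hMii : ‖M i i‖ = ‖C i i‖ := by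
      rw [hMij i i, mul_comm, ← mul_assoc, mul_inv_cancel₀ (hd0 i), one_mul]
    have hterm : ∀ k ∈ Finset.univ.erase i, ‖M i k‖ ≤ ε * ‖C i k‖ := by
      intro k hk
      have hki : k ≠ i := Finset.ne_of_mem_erase hk
      rcases lt_or_gt_of_ne hki with hlt | hgt
      · rw [hMij, hC (show (id k : Fin j) < id i from hlt)]
        simp [mul_nonneg hε0.le (norm_nonneg _)]
      · have hik : (i : ℕ) + 1 ≤ (k : ℕ) := hgt
        rw [hMij, norm_mul, norm_mul, norm_inv]
        have hnd : ∀ l : Fin j, ‖d l‖ = ε ^ (l : ℕ) := by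
          intro l
          rw [hdd]
          simp [abs_of_pos hε0]
        rw [hnd, hnd]
        have hεpow : ε ^ (k : ℕ) ≤ ε ^ ((i : ℕ) + 1) :=
          pow_le_pow_of_le_one hε0.le hε1 hik
        have h1 : (ε ^ (i : ℕ))⁻¹ * ‖C i k‖ * ε ^ (k : ℕ)
            ≤ (ε ^ (i : ℕ))⁻¹ * ‖C i k‖ * ε ^ ((i : ℕ) + 1) := by
          refine mul_le_mul_of_nonneg_left hεpow ?_
          positivity
        calc (ε ^ (i : ℕ))⁻¹ * ‖C i k‖ * ε ^ (k : ℕ)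
            ≤ (ε ^ (i : ℕ))⁻¹ * ‖C i k‖ * ε ^ ((i : ℕ) + 1) := h1
          _ = ε * ‖C i k‖ := by
              rw [pow_succ]
              field_simp
    have hsum2 : ∑ k ∈ Finset.univ.erase i, ‖M i k‖ ≤ ε * (G - 1) := by
      calc ∑ k ∈ Finset.univ.erase i, ‖M i k‖ ≤ ∑ k ∈ Finset.univ.erase i, ε * ‖C i k‖ :=
            Finset.sum_le_sum hterm
        _ = ε * ∑ k ∈ Finset.univ.erase i, ‖C i k‖ := by rw [Finset.mul_sum]
        _ ≤ ε * ∑ k, ‖C i k‖ := by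
            refine mul_le_mul_of_nonneg_left ?_ hε0.le
            exact Finset.sum_le_sum_of_subset_of_nonneg (Finset.erase_subset _ _)
              (fun k _ _ => norm_nonneg _)
        _ ≤ ε * (G - 1) := mul_le_mul_of_nonneg_left (hGrow i) hε0.le
    have hεG1 : ε * (G - 1) ≤ (1 - r) / 2 := by nlinarith
    have : ‖C i i‖ ≤ r := Finset.le_sup' (fun i => ‖C i i‖) (Finset.mem_univ i)
    rw [hsplit, hMii, hρdef]
    have hB : ∑ k ∈ Finset.univ.erase i, ‖M i k‖ ≤ (1 - r) / 2 := le_trans hsum2 hεG1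
    linarith
  have hMpow : ∀ (N : ℕ) (w : Fin j → ℂ), ‖(M ^ N) *ᵥ w‖ ≤ ρ ^ N * ‖w‖ := by
    intro N
    induction N with
    | zero => intro w; simp
    | succ N ih =>
      intro w
      rw [pow_succ, ← Matrix.mulVec_mulVec]
      calc ‖(M ^ N) *ᵥ (M *ᵥ w)‖ ≤ ρ ^ N * ‖M *ᵥ w‖ := ih _
        _ ≤ ρ ^ N * (ρ * ‖w‖) := by
            refine mul_le_mul_of_nonneg_left ?_ (by positivity)
            exact row_bound_mulVec M ρ hρ0 hrowM w
        _ = ρ ^ (N + 1) * ‖w‖ := by ring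
  have hDbound : ∀ w : Fin j → ℂ, ‖D *ᵥ w‖ ≤ 1 * ‖w‖ := by
    intro w
    refine row_bound_mulVec D 1 zero_le_one (fun i => ?_) w
    rw [hD]
    have : ∀ k, ‖(Matrix.diagonal d) i k‖ = if k = i then ‖d i‖ else 0 := by
      intro k
      by_cases hk : k = i
      · subst hk; simp [Matrix.diagonal_apply_eq]
      · rw [Matrix.diagonal_apply_ne _ (fun hc => hk hc.symm)]; simp [hk]
    rw [Finset.sum_congr rfl (fun k _ => this k)]
    rw [Finset.sum_ite_eq' Finset.univ i (fun _ => ‖d i‖)]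
    simp only [Finset.mem_univ, if_true]
    have : ‖d i‖ = ε ^ (i : ℕ) := by rw [hdd]; simp [abs_of_pos hε0]
    rw [this]
    exact pow_le_one₀ hε0.le hε1
  refine ⟨‖Dinv *ᵥ x‖, ρ, norm_nonneg _, hρ0, hρ1, fun N => ?_⟩
  rw [hpow N, ← Matrix.mulVec_mulVec, ← Matrix.mulVec_mulVec]
  calc ‖D *ᵥ ((M ^ N) *ᵥ (Dinv *ᵥ x))‖ ≤ 1 * ‖(M ^ N) *ᵥ (Dinv *ᵥ x)‖ := hDbound _
    _ = ‖(M ^ N) *ᵥ (Dinv *ᵥ x)‖ := one_mul _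
    _ ≤ ρ ^ N * ‖Dinv *ᵥ x‖ := hMpow N _
    _ = ‖Dinv *ᵥ x‖ * ρ ^ N := mul_comm _ _

private lemma sum_mulVec_distrib {j : ℕ} {ι : Type*} (t : Finset ι)
    (f : ι → Matrix (Fin j) (Fin j) ℂ) (x : Fin j → ℂ) :
    (∑ k ∈ t, f k) *ᵥ x = ∑ k ∈ t, f k *ᵥ x := by
  induction t using Finset.cons_induction with
  | empty => simp [Matrix.zero_mulVec]
  | cons a t ha ih => rw [Finset.sum_cons, Finset.sum_cons, Matrix.add_mulVec, ih]

private lemma observability {n j : ℕ}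
    (F : Matrix (Fin n) (Fin n) ℂ) (v : Fin n → ℂ)
    (Z : Matrix (Fin n) (Fin j) ℂ) (h : Matrix (Fin 1) (Fin j) ℂ)
    (H : Matrix (Fin j) (Fin j) ℂ) (s : Fin j → ℂ)
    (htri : ∀ i k : Fin j, k < i → H i k = 0) (hdiag : ∀ i : Fin j, H i i = s i)
    (hrank : LinearIndependent ℂ
      (fun c : Fin 1 ⊕ Fin j =>
        (fromCols (Matrix.of fun i (_ : Fin 1) => v i) Z)ᵀ c))
    (hbrad : F * Z = (Matrix.of fun i (_ : Fin 1) => v i) * h + Z * H)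
    (hre : ∀ i, 0 < (s i).re) (hspec : ∀ i, s i ∉ spectrum ℂ F)
    (x : Fin j → ℂ) (hx : x ≠ 0) :
    ∃ k : ℕ, h *ᵥ ((H + 1)⁻¹ *ᵥ (((H - 1) * (H + 1)⁻¹) ^ k *ᵥ x)) ≠ 0 := by
  by_contra hcon
  push_neg at hcon
  set P : Matrix (Fin j) (Fin j) ℂ := H + 1 with hPdef
  set C : Matrix (Fin j) (Fin j) ℂ := (H - 1) * P⁻¹ with hCdef
  have htriH : H.BlockTriangular id := fun i k hik => htri i k hik
  have hs1 : ∀ i, s i + 1 ≠ 0 := by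
    intro i hc
    have : (s i + 1).re = 0 := by rw [hc]; rfl
    rw [Complex.add_re, Complex.one_re] at this
    have := hre i; linarith
  have hPtri : P.BlockTriangular id := htriH.add Matrix.blockTriangular_one
  have hPii : ∀ i, P i i = s i + 1 := by
    intro i; rw [hPdef, Matrix.add_apply, Matrix.one_apply_eq, hdiag]
  have hPdet : IsUnit P.det := by
    rw [Matrix.det_of_upperTriangular hPtri]
    rw [Finset.prod_congr rfl fun i _ => hPii i]
    exact (Finset.prod_ne_zero_iff.mpr fun i _ => hs1 i).isUnit
  haveI : Invertible P := P.invertibleOfIsUnitDet hPdet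
  have hPtriInv : P⁻¹.BlockTriangular id := Matrix.blockTriangular_inv_of_blockTriangular hPtri
  have hPP : P * P⁻¹ = 1 := Matrix.mul_nonsing_inv P hPdet
  have hPP' : P⁻¹ * P = 1 := Matrix.nonsing_inv_mul P hPdet
  have hPinvii : ∀ i, P⁻¹ i i = (s i + 1)⁻¹ := by
    intro i
    have h1 : (P * P⁻¹) i i = P i i * P⁻¹ i i := diag_mul_triangular P P⁻¹ hPtri hPtriInv i
    rw [hPP, Matrix.one_apply_eq, hPii] at h1
    exact (inv_eq_of_mul_eq_one_right h1.symm).symm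
  have hCtri : C.BlockTriangular id := (htriH.sub Matrix.blockTriangular_one).mul hPtriInv
  have hCii : ∀ i, C i i = (s i - 1) * (s i + 1)⁻¹ := by
    intro i
    rw [hCdef, diag_mul_triangular _ _ (htriH.sub Matrix.blockTriangular_one) hPtriInv,
      Matrix.sub_apply, Matrix.one_apply_eq, hdiag, hPinvii]
  have hex : ∃ dd : ℕ, ∃ p : Polynomial ℂ, p.Monic ∧ p.natDegree = dd ∧
      (Polynomial.aeval C) p *ᵥ x = 0 :=
    ⟨C.charpoly.natDegree, C.charpoly, C.charpoly_monic, rfl, by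
      rw [Matrix.aeval_self_charpoly]; simp⟩
  classical
  obtain ⟨p, hmon, hdeg, hvan⟩ := Nat.find_spec hex
  set d0 := Nat.find hex with hd0
  have hd0pos : 0 < d0 := by
    rcases Nat.eq_zero_or_pos d0 with h0 | h0
    · exfalso
      rw [h0] at hdeg
      rw [hmon.natDegree_eq_zero.mp hdeg] at hvan
      simp at hvan
      exact hx hvan
    · exact h0
  have hdegpos : 0 < p.degree := by
    have : 0 < p.natDegree := hdeg ▸ hd0pos
    exact Polynomial.natDegree_pos_iff_degree_pos.mp this
  obtain ⟨lam, hlam⟩ := Complex.exists_root hdegpos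
  obtain ⟨q, hq⟩ := Polynomial.dvd_iff_isRoot.mpr hlam
  have hqmon : q.Monic := (Polynomial.monic_X_sub_C lam).of_mul_monic_left (hq ▸ hmon)
  have hqdeg : q.natDegree = d0 - 1 := by
    have h1 : p.natDegree = (Polynomial.X - Polynomial.C lam).natDegree + q.natDegree := by
      rw [hq, Polynomial.natDegree_mul (Polynomial.X_sub_C_ne_zero lam) hqmon.ne_zero]
    rw [Polynomial.natDegree_X_sub_C] at h1
    omega
  set u : Fin j → ℂ := (Polynomial.aeval C) q *ᵥ x with hu
  have hu0 : u ≠ 0 := by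
    intro hc
    exact Nat.find_min hex (show d0 - 1 < d0 by omega) ⟨q, hqmon, hqdeg, hc⟩
  have hCu : C *ᵥ u = lam • u := by
    have h1 : (Polynomial.aeval C) p = (C - lam • 1) * (Polynomial.aeval C) q := by
      rw [hq, _root_.map_mul, _root_.map_sub, Polynomial.aeval_X, Polynomial.aeval_C,
        Algebra.algebraMap_eq_smul_one]
    have h2 : (C - lam • 1) *ᵥ u = 0 := by
      rw [hu, Matrix.mulVec_mulVec, ← h1, hvan]
    rw [Matrix.sub_mulVec, Matrix.smul_mulVec, Matrix.one_mulVec, sub_eq_zero] at h2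
    exact h2
  have hCl : (C - lam • 1).BlockTriangular id := by
    intro a b hab
    have hab' : a ≠ b := by intro hc; subst hc; exact lt_irrefl _ hab
    simp [Matrix.sub_apply, hCtri hab, Matrix.one_apply_ne hab']
  have hdet0 : (C - lam • 1).det = 0 := by
    rw [← Matrix.exists_mulVec_eq_zero_iff]
    refine ⟨u, hu0, ?_⟩
    rw [Matrix.sub_mulVec, Matrix.smul_mulVec, Matrix.one_mulVec, hCu, sub_self]
  rw [Matrix.det_of_upperTriangular hCl] at hdet0
  obtain ⟨i, _, hi⟩ := Finset.prod_eq_zero_iff.mp hdet0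
  have hlami : lam = (s i - 1) * (s i + 1)⁻¹ := by
    have := hi
    rw [Matrix.sub_apply, Matrix.smul_apply, Matrix.one_apply_eq, smul_eq_mul, mul_one,
      sub_eq_zero, hCii] at this
    exact this.symm
  set w : Fin j → ℂ := P⁻¹ *ᵥ u with hw
  have hw0 : w ≠ 0 := by
    intro hc
    apply hu0
    have : P *ᵥ (P⁻¹ *ᵥ u) = u := by rw [Matrix.mulVec_mulVec, hPP, Matrix.one_mulVec]
    rw [← this, ← hw, hc, Matrix.mulVec_zero]
  have hvec : (H - 1) *ᵥ w = lam • ((H + 1) *ᵥ w) := by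
    have h1 : C *ᵥ u = (H - 1) *ᵥ w := by
      conv_rhs => rw [hw, Matrix.mulVec_mulVec, ← hCdef]
    have h2 : u = (H + 1) *ᵥ w := by
      rw [hw, Matrix.mulVec_mulVec, ← hPdef, hPP, Matrix.one_mulVec]
    rw [← h1, hCu, ← h2]
  have hHw : H *ᵥ w = s i • w := by
    funext t
    have e : ((H - 1) *ᵥ w) t = lam * (((H + 1) *ᵥ w) t) := by
      rw [hvec]; rfl
    rw [Matrix.sub_mulVec, Matrix.add_mulVec, Matrix.one_mulVec] at e
    simp only [Pi.sub_apply, Pi.add_apply] at e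
    rw [hlami] at e
    show (H *ᵥ w) t = s i * w t
    have hc : (s i + 1) * (s i + 1)⁻¹ = 1 := mul_inv_cancel₀ (hs1 i)
    linear_combination ((s i + 1) / 2) * e
      + ((s i - 1) * ((H *ᵥ w) t + w t) / 2) * hc
  have hhw : h *ᵥ w = 0 := by
    have hqe : (Polynomial.aeval C) q = ∑ k ∈ Finset.range (q.natDegree + 1),
        q.coeff k • C ^ k := Polynomial.aeval_eq_sum_range C
    have hwsum : w = ∑ k ∈ Finset.range (q.natDegree + 1),
        q.coeff k • (P⁻¹ *ᵥ (C ^ k *ᵥ x)) := by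
      rw [hw, hu, hqe, sum_mulVec_distrib]
      rw [← Matrix.mulVecLin_apply, _root_.map_sum]
      refine Finset.sum_congr rfl fun k _ => ?_
      rw [Matrix.smul_mulVec, _root_.map_smul, Matrix.mulVecLin_apply]
    rw [hwsum, ← Matrix.mulVecLin_apply, _root_.map_sum]
    refine Finset.sum_eq_zero fun k _ => ?_
    rw [_root_.map_smul, Matrix.mulVecLin_apply, hcon k, smul_zero]
  have hZw0 : Z *ᵥ w ≠ 0 := by
    intro hc
    apply hw0
    have hli := Fintype.linearIndependent_iff.mp hrank
    have hzero : ∑ c : Fin 1 ⊕ Fin j,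
        (Sum.elim (0 : Fin 1 → ℂ) w c) •
          (fromCols (Matrix.of fun i (_ : Fin 1) => v i) Z)ᵀ c = 0 := by
      rw [Fintype.sum_sum_type]
      simp only [Sum.elim_inl, Sum.elim_inr, Pi.zero_apply, zero_smul,
        Finset.sum_const_zero, zero_add]
      funext i'
      have h5 : (∑ k : Fin j, w k • (fromCols (Matrix.of fun i (_ : Fin 1) => v i) Z)ᵀ
          (Sum.inr k)) i' = ∑ k : Fin j, w k * Z i' k := by
        rw [Finset.sum_apply]
        refine Finset.sum_congr rfl fun k _ => ?_
        rw [Pi.smul_apply, Matrix.transpose_apply, Matrix.fromCols_apply_inr, smul_eq_mul]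
      rw [h5]
      have h6 : ∑ k : Fin j, w k * Z i' k = (Z *ᵥ w) i' := by
        rw [Matrix.mulVec, dotProduct]
        exact Finset.sum_congr rfl fun k _ => mul_comm _ _
      rw [h6, hc]
    have := hli _ hzero
    funext k
    exact this (Sum.inr k)
  have hFZw : F *ᵥ (Z *ᵥ w) = s i • (Z *ᵥ w) := by
    have e := congrArg (fun M => M *ᵥ w) hbrad
    rw [Matrix.add_mulVec, ← Matrix.mulVec_mulVec, ← Matrix.mulVec_mulVec,
      ← Matrix.mulVec_mulVec, hhw, Matrix.mulVec_zero, zero_add, hHw,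
      Matrix.mulVec_smul] at e
    exact e
  apply hspec i
  rw [spectrum.mem_iff, Matrix.isUnit_iff_isUnit_det]
  have hdetF : (algebraMap ℂ (Matrix (Fin n) (Fin n) ℂ) (s i) - F).det = 0 := by
    rw [← Matrix.exists_mulVec_eq_zero_iff]
    refine ⟨Z *ᵥ w, hZw0, ?_⟩
    rw [Matrix.sub_mulVec, Algebra.algebraMap_eq_smul_one, Matrix.smul_mulVec,
      Matrix.one_mulVec, hFZw, sub_self]
  rw [hdetF]
  exact fun hc => by simpa using hc

private lemma star_dot_norm_le {j : ℕ} (a b : Fin j → ℂ) :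
    ‖star a ⬝ᵥ b‖ ≤ (j : ℝ) * (‖a‖ * ‖b‖) := by
  calc ‖star a ⬝ᵥ b‖ = ‖∑ i, star (a i) * b i‖ := rfl
    _ ≤ ∑ i, ‖star (a i) * b i‖ := norm_sum_le _ _
    _ ≤ ∑ _i : Fin j, ‖a‖ * ‖b‖ := by
        refine Finset.sum_le_sum fun i _ => ?_
        rw [norm_mul, norm_star]
        exact mul_le_mul (norm_le_pi_norm a i) (norm_le_pi_norm b i)
          (norm_nonneg _) (norm_nonneg _)
    _ = (j : ℝ) * (‖a‖ * ‖b‖) := by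
        rw [Finset.sum_const, Finset.card_univ, Fintype.card_fin, nsmul_eq_mul]

set_option maxHeartbeats 1600000 in
/-- Given a rational Arnoldi decomposition `F·Z = v·h + Z·H` with `[v Z]` of
full column rank, `H` upper triangular with diagonal entries `s i` of positive
real part and not eigenvalues of `F`, the Lyapunov equation
`Yt·H + Hᴴ·Yt − (ZᴴBBᴴZ + hᴴh) = 0` has a unique Hermitian solution, and it is
positive definite. -/
theorem stmt3 (n j m : ℕ)
    (F : Matrix (Fin n) (Fin n) ℂ) (v : Fin n → ℂ)
    (Z : Matrix (Fin n) (Fin j) ℂ) (h : Matrix (Fin 1) (Fin j) ℂ)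
    (H : Matrix (Fin j) (Fin j) ℂ) (s : Fin j → ℂ)
    (htri : ∀ i k : Fin j, k < i → H i k = 0) (hdiag : ∀ i : Fin j, H i i = s i)
    (hrank : LinearIndependent ℂ
      (fun c : Fin 1 ⊕ Fin j =>
        (fromCols (Matrix.of fun i (_ : Fin 1) => v i) Z)ᵀ c))
    (hbrad : F * Z = (Matrix.of fun i (_ : Fin 1) => v i) * h + Z * H)
    (hre : ∀ i, 0 < (s i).re) (hspec : ∀ i, s i ∉ spectrum ℂ F)
    (B : Matrix (Fin n) (Fin m) ℂ) :
    ∃ Yt : Matrix (Fin j) (Fin j) ℂ,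
      (Yt.IsHermitian ∧ Yt * H + Hᴴ * Yt - (Zᴴ * B * Bᴴ * Z + hᴴ * h) = 0 ∧
        Yt.PosDef) ∧
      ∀ Y' : Matrix (Fin j) (Fin j) ℂ,
        Y'.IsHermitian ∧ Y' * H + Hᴴ * Y' - (Zᴴ * B * Bᴴ * Z + hᴴ * h) = 0 →
          Y' = Yt := by
  obtain ⟨Yt, hYt, huniq⟩ := sylvester_solve H s htri hdiag hre (Zᴴ * B * Bᴴ * Z + hᴴ * h)
  have hQherm : (Zᴴ * B * Bᴴ * Z + hᴴ * h)ᴴ = Zᴴ * B * Bᴴ * Z + hᴴ * h := by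
    simp [Matrix.conjTranspose_add, Matrix.conjTranspose_mul, Matrix.mul_assoc]
  have hherm : Yt.IsHermitian := by
    have h2 : (Yt * H + Hᴴ * Yt)ᴴ = (Zᴴ * B * Bᴴ * Z + hᴴ * h)ᴴ := by rw [hYt]
    rw [Matrix.conjTranspose_add, Matrix.conjTranspose_mul, Matrix.conjTranspose_mul,
      Matrix.conjTranspose_conjTranspose, hQherm, add_comm] at h2
    exact huniq Ytᴴ h2
  rcases Nat.eq_zero_or_pos j with hj0 | hj
  · -- trivial case j = 0
    subst hj0
    have hmat : ∀ A A' : Matrix (Fin 0) (Fin 0) ℂ, A = A' := by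
      intro A A'; funext i; exact i.elim0
    have hvec : ∀ y : Fin 0 → ℂ, y = 0 := by
      intro y; funext i; exact i.elim0
    refine ⟨Yt, ⟨hherm, by rw [hYt, sub_self], Matrix.PosDef.of_dotProduct_mulVec_pos hherm fun y hy => absurd (hvec y) hy⟩,
      fun Y' hY' => huniq Y' (sub_eq_zero.mp hY'.2)⟩
  -- main case
  obtain hjpos := hj
  refine ⟨Yt, ⟨hherm, by rw [hYt, sub_self], Matrix.PosDef.of_dotProduct_mulVec_pos hherm ?_⟩,
    fun Y' hY' => huniq Y' (sub_eq_zero.mp hY'.2)⟩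
  intro x hx
  obtain ⟨k0, hk0⟩ := observability F v Z h H s htri hdiag hrank hbrad hre hspec x hx
  set P : Matrix (Fin j) (Fin j) ℂ := H + 1 with hPdef
  set C : Matrix (Fin j) (Fin j) ℂ := (H - 1) * P⁻¹ with hCdef
  clear_value P C
  have htriH : H.BlockTriangular id := fun i k hik => htri i k hik
  have hs1 : ∀ i, s i + 1 ≠ 0 := by
    intro i hc
    have : (s i + 1).re = 0 := by rw [hc]; rfl
    rw [Complex.add_re, Complex.one_re] at this
    have := hre i; linarith
  have hPtri : P.BlockTriangular id := hPdef ▸ htriH.add Matrix.blockTriangular_one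
  have hPii : ∀ i, P i i = s i + 1 := by
    intro i; rw [hPdef, Matrix.add_apply, Matrix.one_apply_eq, hdiag]
  have hPdet : IsUnit P.det := by
    rw [Matrix.det_of_upperTriangular hPtri]
    rw [Finset.prod_congr rfl fun i _ => hPii i]
    exact (Finset.prod_ne_zero_iff.mpr fun i _ => hs1 i).isUnit
  haveI : Invertible P := P.invertibleOfIsUnitDet hPdet
  have hPtriInv : P⁻¹.BlockTriangular id := Matrix.blockTriangular_inv_of_blockTriangular hPtri
  have hPP : P * P⁻¹ = 1 := Matrix.mul_nonsing_inv P hPdet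
  have hPP' : P⁻¹ * P = 1 := Matrix.nonsing_inv_mul P hPdet
  have hPinvii : ∀ i, P⁻¹ i i = (s i + 1)⁻¹ := by
    intro i
    have h1 : (P * P⁻¹) i i = P i i * P⁻¹ i i := diag_mul_triangular P P⁻¹ hPtri hPtriInv i
    rw [hPP, Matrix.one_apply_eq, hPii] at h1
    exact (inv_eq_of_mul_eq_one_right h1.symm).symm
  have hCtri : C.BlockTriangular id :=
    hCdef ▸ (htriH.sub Matrix.blockTriangular_one).mul hPtriInv
  have hCii : ∀ i, C i i = (s i - 1) * (s i + 1)⁻¹ := by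
    intro i
    rw [hCdef, diag_mul_triangular _ _ (htriH.sub Matrix.blockTriangular_one) hPtriInv,
      Matrix.sub_apply, Matrix.one_apply_eq, hdiag, hPinvii]
  have hCd : ∀ i, ‖C i i‖ < 1 := by
    intro i
    rw [hCii, norm_mul, norm_inv]
    have hsq : ∀ z : ℂ, ‖z‖ ^ 2 = Complex.normSq z := fun z => by
      rw [Complex.sq_norm]
    have hlt : ‖s i - 1‖ < ‖s i + 1‖ := by
      have h1 : ‖s i - 1‖ ^ 2 < ‖s i + 1‖ ^ 2 := by
        rw [hsq, hsq]
        simp only [Complex.normSq_apply, Complex.sub_re, Complex.sub_im, Complex.add_re,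
          Complex.add_im, Complex.one_re, Complex.one_im]
        have := hre i
        nlinarith
      nlinarith [norm_nonneg (s i - 1), norm_nonneg (s i + 1)]
    have hpos : 0 < ‖s i + 1‖ := by
      rw [norm_pos_iff]; exact hs1 i
    rw [mul_inv_lt_iff₀ hpos, one_mul]
    exact hlt
  have hPHdet : IsUnit Pᴴ.det := by
    rw [Matrix.det_conjTranspose]; exact hPdet.star
  have hPPH : (Pᴴ)⁻¹ * Pᴴ = 1 := Matrix.nonsing_inv_mul _ hPHdet
  set S : Matrix (Fin m ⊕ Fin 1) (Fin j) ℂ := fromRows (Bᴴ * Z) h with hSdef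
  set T : Matrix (Fin m ⊕ Fin 1) (Fin j) ℂ := S * P⁻¹ with hTdef
  clear_value S T
  have hQ : Sᴴ * S = Zᴴ * B * Bᴴ * Z + hᴴ * h := by
    rw [hSdef, Matrix.conjTranspose_fromRows_eq_fromCols_conjTranspose,
      Matrix.fromCols_mul_fromRows, Matrix.conjTranspose_mul,
      Matrix.conjTranspose_conjTranspose, ← Matrix.mul_assoc]
  have hkey : Pᴴ * Yt * P = (H - 1)ᴴ * Yt * (H - 1) +
      ((Zᴴ * B * Bᴴ * Z + hᴴ * h) + (Zᴴ * B * Bᴴ * Z + hᴴ * h)) := by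
    have e : Pᴴ * Yt * P - (H - 1)ᴴ * Yt * (H - 1)
        = (Yt * H + Hᴴ * Yt) + (Yt * H + Hᴴ * Yt) := by
      rw [hPdef]
      simp only [Matrix.conjTranspose_add, Matrix.conjTranspose_sub,
        Matrix.conjTranspose_one]
      noncomm_ring
    rw [hYt] at e
    have e2 := sub_eq_iff_eq_add.mp e
    rw [e2]; abel
  have hstein : Yt = Cᴴ * Yt * C + (Tᴴ * T + Tᴴ * T) := by
    have e1 : Yt = (Pᴴ)⁻¹ * (Pᴴ * Yt * P) * P⁻¹ := by
      calc Yt = ((Pᴴ)⁻¹ * Pᴴ) * Yt * (P * P⁻¹) := by rw [hPPH, hPP, one_mul, mul_one]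
        _ = (Pᴴ)⁻¹ * (Pᴴ * Yt * P) * P⁻¹ := by noncomm_ring
    rw [hkey, ← hQ] at e1
    have hCH : Cᴴ = (Pᴴ)⁻¹ * (H - 1)ᴴ := by
      rw [hCdef, Matrix.conjTranspose_mul, Matrix.conjTranspose_nonsing_inv]
    have hTH : Tᴴ = (Pᴴ)⁻¹ * Sᴴ := by
      rw [hTdef, Matrix.conjTranspose_mul, Matrix.conjTranspose_nonsing_inv]
    calc Yt = (Pᴴ)⁻¹ * ((H - 1)ᴴ * Yt * (H - 1) + (Sᴴ * S + Sᴴ * S)) * P⁻¹ := e1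
      _ = Cᴴ * Yt * C + (Tᴴ * T + Tᴴ * T) := by
          rw [hCH, hTH, hCdef, hTdef]
          simp only [mul_add, add_mul, Matrix.mul_assoc]
  -- the iterates
  set uu : ℕ → (Fin j → ℂ) := fun N => (C ^ N) *ᵥ x with huu
  set φ : ℕ → ℂ := fun N => star (uu N) ⬝ᵥ (Yt *ᵥ uu N) with hφ
  set qq : ℕ → ℂ := fun N => star (T *ᵥ uu N) ⬝ᵥ (T *ᵥ uu N) with hqq
  clear_value uu φ qq
  have hustep : ∀ N, uu (N + 1) = C *ᵥ uu N := by
    intro N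
    simp only [huu]
    rw [pow_succ', ← Matrix.mulVec_mulVec]
  have hφapp : ∀ N, φ N = star (uu N) ⬝ᵥ (Yt *ᵥ uu N) := fun N => by rw [hφ]
  have hqapp : ∀ N, qq N = star (T *ᵥ uu N) ⬝ᵥ (T *ᵥ uu N) := fun N => by rw [hqq]
  have htransferC : ∀ (a w : Fin j → ℂ), star a ⬝ᵥ (Cᴴ *ᵥ w) = star (C *ᵥ a) ⬝ᵥ w := by
    intro a w; rw [Matrix.star_mulVec, ← Matrix.dotProduct_mulVec]
  have htransferT : ∀ (a : Fin j → ℂ) (w : Fin m ⊕ Fin 1 → ℂ),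
      star a ⬝ᵥ (Tᴴ *ᵥ w) = star (T *ᵥ a) ⬝ᵥ w := by
    intro a w; rw [Matrix.star_mulVec, ← Matrix.dotProduct_mulVec]
  have hstep : ∀ N, φ N = φ (N + 1) + (qq N + qq N) := by
    intro N
    have e1 : star (uu N) ⬝ᵥ ((Cᴴ * Yt * C) *ᵥ uu N) = φ (N + 1) := by
      rw [Matrix.mul_assoc, ← Matrix.mulVec_mulVec, htransferC, ← Matrix.mulVec_mulVec,
        ← hustep N]
      exact (hφapp (N + 1)).symm
    have e2 : star (uu N) ⬝ᵥ ((Tᴴ * T) *ᵥ uu N) = qq N := by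
      rw [← Matrix.mulVec_mulVec, htransferT]
      exact (hqapp N).symm
    rw [hφapp N]
    conv_lhs => rw [hstein]
    rw [Matrix.add_mulVec, dotProduct_add, Matrix.add_mulVec,
      dotProduct_add, e1, e2]
  have htele : ∀ N, φ 0 = (∑ k ∈ Finset.range N, (qq k + qq k)) + φ N := by
    intro N
    induction N with
    | zero => simp
    | succ N ih =>
      rw [ih, hstep N, Finset.sum_range_succ]
      ring
  have hqnn : ∀ N, 0 ≤ (qq N).re ∧ (qq N).im = 0 := by
    intro N
    have h1 : (0 : ℂ) ≤ qq N := by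
      rw [hqapp N]; exact dotProduct_star_self_nonneg (T *ᵥ uu N)
    rw [Complex.le_def] at h1
    exact ⟨by simpa using h1.1, by simpa using h1.2.symm⟩
  have hTk0 : T *ᵥ uu k0 ≠ 0 := by
    intro hc
    apply hk0
    have heq : T *ᵥ uu k0 = S *ᵥ (P⁻¹ *ᵥ ((C ^ k0) *ᵥ x)) := by
      simp only [hTdef, huu]
      rw [← Matrix.mulVec_mulVec]
    rw [heq] at hc
    funext t
    have h3 := congrFun hc (Sum.inr t)
    rw [hSdef, Matrix.fromRows_mulVec] at h3
    simpa using h3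
  have hq0pos : 0 < (qq k0).re := by
    have h1 : (0 : ℂ) < qq k0 := by
      rw [hqapp k0]; exact Matrix.dotProduct_star_self_pos_iff.mpr hTk0
    rw [Complex.lt_def] at h1
    simpa using h1.1
  obtain ⟨c, ρ, hc0, hρ0, hρ1, hbound⟩ := pow_mulVec_decay hj C hCtri hCd x
  set Ybnd : ℝ := (∑ i, ∑ k, ‖Yt i k‖) + 1 with hYbnd
  have hYb0 : 0 < Ybnd := by positivity
  have hYrow : ∀ i, ∑ k, ‖Yt i k‖ ≤ Ybnd := by
    intro i
    have h1 : ∑ k, ‖Yt i k‖ ≤ ∑ i', ∑ k, ‖Yt i' k‖ :=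
      Finset.single_le_sum (f := fun i' => ∑ k, ‖Yt i' k‖)
        (fun i' _ => Finset.sum_nonneg fun k _ => norm_nonneg _) (Finset.mem_univ i)
    rw [hYbnd]; linarith
  have huubound : ∀ N, ‖uu N‖ ≤ c * ρ ^ N := by
    intro N; simp only [huu]; exact hbound N
  have hφbound : ∀ N, ‖φ N‖ ≤ ((j : ℝ) * Ybnd * (c * c)) * (ρ * ρ) ^ N := by
    intro N
    have h1 : ‖uu N‖ ≤ c * ρ ^ N := huubound N
    have h2 : ‖Yt *ᵥ uu N‖ ≤ Ybnd * ‖uu N‖ :=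
      row_bound_mulVec Yt Ybnd hYb0.le hYrow (uu N)
    calc ‖φ N‖ = ‖star (uu N) ⬝ᵥ (Yt *ᵥ uu N)‖ := by rw [hφapp N]
      _ ≤ (j : ℝ) * (‖uu N‖ * ‖Yt *ᵥ uu N‖) := star_dot_norm_le _ _
      _ ≤ (j : ℝ) * ((c * ρ ^ N) * (Ybnd * (c * ρ ^ N))) := by
          have h4 : ‖Yt *ᵥ uu N‖ ≤ Ybnd * (c * ρ ^ N) :=
            h2.trans (mul_le_mul_of_nonneg_left h1 hYb0.le)
          have h3 : ‖uu N‖ * ‖Yt *ᵥ uu N‖ ≤ (c * ρ ^ N) * (Ybnd * (c * ρ ^ N)) :=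
            mul_le_mul h1 h4 (norm_nonneg _) (by positivity)
          exact mul_le_mul_of_nonneg_left h3 (Nat.cast_nonneg j)
      _ = ((j : ℝ) * Ybnd * (c * c)) * (ρ * ρ) ^ N := by
          rw [mul_pow]; ring
  have hφlim : Filter.Tendsto (fun N => (φ N).re) Filter.atTop (nhds 0) := by
    have hgeo : Filter.Tendsto (fun N : ℕ => ((j : ℝ) * Ybnd * (c * c)) * (ρ * ρ) ^ N)
        Filter.atTop (nhds 0) := by
      have h1 : Filter.Tendsto (fun N : ℕ => (ρ * ρ) ^ N) Filter.atTop (nhds 0) :=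
        tendsto_pow_atTop_nhds_zero_of_lt_one (by positivity) (by nlinarith)
      simpa using h1.const_mul ((j : ℝ) * Ybnd * (c * c))
    refine squeeze_zero_norm (fun N => ?_) hgeo
    calc ‖(φ N).re‖ = |(φ N).re| := rfl
      _ ≤ ‖φ N‖ := Complex.abs_re_le_norm _
      _ = ‖φ N‖ := rfl
      _ ≤ ((j : ℝ) * Ybnd * (c * c)) * (ρ * ρ) ^ N := hφbound N
  have hfinal : 2 * (qq k0).re ≤ (φ 0).re := by
    have hev : ∀ N, k0 + 1 ≤ N → (φ N).re ≤ (φ 0).re - 2 * (qq k0).re := by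
      intro N hN
      have h2 : (φ 0).re = (∑ k ∈ Finset.range N, ((qq k).re + (qq k).re)) + (φ N).re := by
        rw [htele N, Complex.add_re, Complex.re_sum]
        simp only [Complex.add_re]
      have h3 : (qq k0).re + (qq k0).re ≤ ∑ k ∈ Finset.range N, ((qq k).re + (qq k).re) :=
        Finset.single_le_sum (f := fun k => (qq k).re + (qq k).re)
          (fun k _ => by
            show (0 : ℝ) ≤ (qq k).re + (qq k).re
            have := (hqnn k).1; linarith)
          (Finset.mem_range.mpr (by omega))
      linarith
    have hlim2 : Filter.Tendsto (fun N => (φ 0).re - (φ N).re) Filter.atTop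
        (nhds ((φ 0).re - 0)) := (tendsto_const_nhds).sub hφlim
    have h4 : (φ 0).re - 0 ≥ 2 * (qq k0).re := by
      refine ge_of_tendsto hlim2 ?_
      refine Filter.eventually_atTop.mpr ⟨k0 + 1, fun N hN => ?_⟩
      have := hev N hN
      linarith
    linarith
  have him : (φ 0).im = 0 := by
    have e0 : star (star (uu 0) ⬝ᵥ (Yt *ᵥ uu 0)) = star (Yt *ᵥ uu 0) ⬝ᵥ uu 0 := by
      conv_lhs => rw [Matrix.star_dotProduct, star_star]
    have e1 : star (Yt *ᵥ uu 0) ⬝ᵥ uu 0 = star (uu 0) ⬝ᵥ (Yt *ᵥ uu 0) := by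
      rw [Matrix.star_mulVec, hherm.eq, ← Matrix.dotProduct_mulVec]
    have hstar : star (φ 0) = φ 0 := by
      rw [hφapp 0, e0, e1]
    have := congrArg Complex.im hstar
    simp only [Complex.star_def, Complex.conj_im] at this
    linarith
  show 0 < star x ⬝ᵥ Yt *ᵥ x
  have hφ0 : φ 0 = star x ⬝ᵥ Yt *ᵥ x := by
    rw [hφapp 0]
    simp only [huu]
    rw [pow_zero, Matrix.one_mulVec]
  rw [← hφ0, Complex.lt_def]
  constructor
  · simpa using by linarith
  · simpa using him.symm
end

section
/- Let F ∈ ℂ^{n×n}, v ∈ ℂ^n, Z ∈ ℂ^{n×j}, h ∈ ℂ^{1×j} and let H ∈ ℂ^{j×j} be upper triangular with diagonal entries s_1, …, s_j. Assume: the matrix [v Z] ∈ ℂ^{n×(j+1)} has full column rank; F·Z = v·h + Z·H; every s_i has positive real part; and no s_i is an eigenvalue of F. Then, for any B ∈ ℂ^{n×m}, the algebraic Riccati equation H·Y + Y·Hᴴ − Y·(Zᴴ B Bᴴ Z + hᴴ h)·Y = 0 has a unique positive definite solution Y ∈ ℂ^{j×j}. -/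
open Matrix NormedSpace Filter
open scoped ComplexOrder

namespace Stmt4Aux

attribute [local instance] Matrix.linftyOpNormedAddCommGroup Matrix.linftyOpNormedRing
  Matrix.linftyOpNormedAlgebra

variable {j : ℕ}

lemma diag_mul {A B : Matrix (Fin j) (Fin j) ℂ} (hA : A.BlockTriangular id)
    (hB : B.BlockTriangular id) (i : Fin j) : (A * B) i i = A i i * B i i := by
  rw [Matrix.mul_apply]
  rw [Finset.sum_eq_single i (fun p _ hpi => ?_) (by simp)]
  rcases lt_or_gt_of_ne hpi with hl | hg
  · rw [hA hl, zero_mul]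
  · rw [hB hg, mul_zero]

lemma pow_tri {A : Matrix (Fin j) (Fin j) ℂ} (hA : A.BlockTriangular id) (m : ℕ) :
    (A ^ m).BlockTriangular id ∧ ∀ i, (A ^ m) i i = A i i ^ m := by
  induction m with
  | zero => exact ⟨by simpa using Matrix.blockTriangular_one, fun i => by simp⟩
  | succ m ih =>
    rw [pow_succ]
    exact ⟨ih.1.mul hA, fun i => by rw [diag_mul ih.1 hA, ih.2, pow_succ]⟩

/-- entry evaluation as a continuous linear map over ℝ -/
noncomputable def entryR (a b : Fin j) : Matrix (Fin j) (Fin j) ℂ →L[ℝ] ℂ :=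
  LinearMap.toContinuousLinearMap
    { toFun := fun M => M a b
      map_add' := fun _ _ => rfl
      map_smul' := fun _ _ => rfl }

@[simp] lemma entryR_apply (a b : Fin j) (M : Matrix (Fin j) (Fin j) ℂ) :
    entryR a b M = M a b := rfl

lemma exp_tri {A : Matrix (Fin j) (Fin j) ℂ} (hA : A.BlockTriangular id) :
    (exp A).BlockTriangular id ∧ ∀ i, (exp A) i i = Complex.exp (A i i) := by
  have hs := exp_series_hasSum_exp' (𝕂 := ℝ) A
  constructor
  · intro a b hba
    have h1 : HasSum (fun m : ℕ => entryR a b (((m.factorial : ℝ))⁻¹ • A ^ m)) (entryR a b (exp A)) :=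
      (entryR a b).hasSum hs
    have h2 : (fun m : ℕ => entryR a b (((m.factorial : ℝ))⁻¹ • A ^ m)) = fun _ => 0 := by
      funext m
      simp [(pow_tri hA m).1 hba]
    rw [h2] at h1
    simpa using h1.unique hasSum_zero
  · intro i
    have h1 : HasSum (fun m : ℕ => entryR i i (((m.factorial : ℝ))⁻¹ • A ^ m)) (entryR i i (exp A)) :=
      (entryR i i).hasSum hs
    have h2 : (fun m : ℕ => entryR i i (((m.factorial : ℝ))⁻¹ • A ^ m))
        = fun m : ℕ => ((m.factorial : ℝ))⁻¹ • (A i i) ^ m := by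
      funext m
      simp [(pow_tri hA m).2 i]
    rw [h2] at h1
    have h3 : HasSum (fun m : ℕ => ((m.factorial : ℝ))⁻¹ • (A i i) ^ m) (exp (A i i)) :=
      exp_series_hasSum_exp' (𝕂 := ℝ) (A i i)
    have h4 := h1.unique h3
    rw [entryR_apply] at h4
    rw [h4, ← Complex.exp_eq_exp_ℂ]

lemma spectrum_tri {A : Matrix (Fin j) (Fin j) ℂ} (hA : A.BlockTriangular id)
    {μ : ℂ} (hμ : μ ∈ spectrum ℂ A) : ∃ i, μ = A i i := by
  classical
  rw [spectrum.mem_iff, Matrix.isUnit_iff_isUnit_det] at hμ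
  have halg : algebraMap ℂ (Matrix (Fin j) (Fin j) ℂ) μ = Matrix.diagonal (fun _ => μ) := by
    ext a b
    by_cases hab : a = b <;>
      simp [Matrix.algebraMap_matrix_apply, Matrix.diagonal, hab]
  have htr : (algebraMap ℂ (Matrix (Fin j) (Fin j) ℂ) μ - A).BlockTriangular id := by
    rw [halg]
    exact (Matrix.blockTriangular_diagonal _).sub hA
  rw [Matrix.det_of_upperTriangular htr] at hμ
  rw [isUnit_iff_ne_zero, not_not, Finset.prod_eq_zero_iff] at hμ
  obtain ⟨i, _, hi⟩ := hμ
  refine ⟨i, ?_⟩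
  rw [halg] at hi
  simp only [Matrix.sub_apply, Matrix.diagonal_apply_eq] at hi
  exact sub_eq_zero.mp hi


lemma pow_tendsto_zero {A : Matrix (Fin j) (Fin j) ℂ}
    (hsp : ∀ μ ∈ spectrum ℂ A, ‖μ‖₊ < 1) :
    Tendsto (fun m : ℕ => A ^ m) atTop (nhds 0) := by
  rcases subsingleton_or_nontrivial (Matrix (Fin j) (Fin j) ℂ) with hs | hn
  · have : (fun m : ℕ => A ^ m) = fun _ => 0 := funext fun m => Subsingleton.elim _ _
    rw [this]; exact tendsto_const_nhds
  · have hρ : spectralRadius ℂ A < 1 := by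
      simpa using spectrum.spectralRadius_lt_of_forall_lt (a := A) (r := 1) hsp
    have hG := spectrum.pow_norm_pow_one_div_tendsto_nhds_spectralRadius A
    have hne : spectralRadius ℂ A ≠ ⊤ := (hρ.trans_le le_top).ne
    set ρ : ℝ := (spectralRadius ℂ A).toReal with hρdef
    have hρ1 : ρ < 1 := by
      have := (ENNReal.toReal_lt_toReal hne (by simp)).mpr hρ
      simpa using this
    have hG2 : Tendsto (fun m : ℕ => (ENNReal.ofReal (‖A ^ m‖ ^ (1 / (m:ℝ)))).toReal)
        atTop (nhds ρ) := (ENNReal.tendsto_toReal hne).comp hG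
    have hG3 : Tendsto (fun m : ℕ => ‖A ^ m‖ ^ (1 / (m:ℝ))) atTop (nhds ρ) := by
      refine hG2.congr fun m => ?_
      rw [ENNReal.toReal_ofReal (by positivity)]
    set r : ℝ := (ρ + 1) / 2 with hr
    have hρr : ρ < r := by rw [hr]; linarith
    have hr1 : r < 1 := by rw [hr]; linarith
    have hr0 : 0 ≤ r := by
      have : (0:ℝ) ≤ ρ := ENNReal.toReal_nonneg
      rw [hr]; linarith
    have hev : ∀ᶠ m : ℕ in atTop, ‖A ^ m‖ ^ (1 / (m:ℝ)) < r :=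
      hG3.eventually_lt_const hρr
    have hev2 : ∀ᶠ m : ℕ in atTop, ‖A ^ m‖ ≤ r ^ m := by
      filter_upwards [hev, Filter.eventually_ge_atTop 1] with m h1 h2
      have hmpos : (0:ℝ) < m := by exact_mod_cast h2
      have h3 : (‖A ^ m‖ ^ (1 / (m:ℝ))) ^ (m:ℝ) < r ^ (m:ℝ) :=
        Real.rpow_lt_rpow (by positivity) h1 hmpos
      have hL : (‖A ^ m‖ ^ (1 / (m:ℝ))) ^ (m:ℝ) = ‖A ^ m‖ := by
        rw [← Real.rpow_mul (norm_nonneg _), one_div, inv_mul_cancel₀ (ne_of_gt hmpos),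
          Real.rpow_one]
      rw [hL, Real.rpow_natCast] at h3
      exact h3.le
    exact squeeze_zero_norm' hev2 (tendsto_pow_atTop_nhds_zero_of_lt_one hr0 hr1)

lemma lyap_inj {H : Matrix (Fin j) (Fin j) ℂ} {s : Fin j → ℂ}
    (htri : ∀ i k : Fin j, k < i → H i k = 0) (hdiag : ∀ i, H i i = s i)
    (hre : ∀ i, 0 < (s i).re) {X : Matrix (Fin j) (Fin j) ℂ}
    (hX : Hᴴ * X + X * H = 0) : X = 0 := by
  have key : ∀ N : ℕ, ∀ i k : Fin j, (i : ℕ) + k < N → X i k = 0 := by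
    intro N
    induction N with
    | zero => intro i k hik; omega
    | succ N ih =>
      intro i k hik
      have h0 := congrFun (congrFun hX i) k
      simp only [Matrix.add_apply, Matrix.mul_apply, Matrix.zero_apply] at h0
      have e1 : ∑ p, Hᴴ i p * X p k = star (s i) * X i k := by
        rw [Finset.sum_eq_single i (fun p _ hpi => ?_) (by simp)]
        · rw [Matrix.conjTranspose_apply, hdiag]
        · rcases lt_or_gt_of_ne hpi with hl | hg
          · rw [ih p k (by omega), mul_zero]
          · rw [Matrix.conjTranspose_apply, htri p i hg, star_zero, zero_mul]
      have e2 : ∑ q, X i q * H q k = X i k * s k := by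
        rw [Finset.sum_eq_single k (fun q _ hqk => ?_) (by simp)]
        · rw [hdiag]
        · rcases lt_or_gt_of_ne hqk with hl | hg
          · rw [ih i q (by omega), zero_mul]
          · rw [htri q k hg, mul_zero]
      rw [e1, e2] at h0
      have hfac : star (s i) + s k ≠ 0 := by
        intro hc
        have h1 := hre i
        have h2 := hre k
        have h3 := congrArg Complex.re hc
        have h4 : (star (s i)).re = (s i).re := Complex.conj_re _
        simp only [Complex.add_re, Complex.zero_re, h4] at h3
        linarith
      have hXik : X i k * (star (s i) + s k) = 0 := by linear_combination h0
      rcases mul_eq_zero.mp hXik with h | h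
      · exact h
      · exact absurd h hfac
  ext i k
  exact key (i + k + 1) i k (by omega)

lemma lyap_unique {H : Matrix (Fin j) (Fin j) ℂ} {s : Fin j → ℂ}
    (htri : ∀ i k : Fin j, k < i → H i k = 0) (hdiag : ∀ i, H i i = s i)
    (hre : ∀ i, 0 < (s i).re) {X W M : Matrix (Fin j) (Fin j) ℂ}
    (hXeq : Hᴴ * X + X * H = M) (hWeq : Hᴴ * W + W * H = M) : X = W := by
  have h0 : Hᴴ * (X - W) + (X - W) * H = 0 := by
    have : Hᴴ * X + X * H - (Hᴴ * W + W * H) = 0 := by rw [hXeq, hWeq, sub_self]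
    rw [Matrix.mul_sub, Matrix.sub_mul]
    linear_combination (norm := noncomm_ring) this
  have := lyap_inj htri hdiag hre h0
  exact sub_eq_zero.mp this

lemma lyap_solve {H : Matrix (Fin j) (Fin j) ℂ} {s : Fin j → ℂ}
    (htri : ∀ i k : Fin j, k < i → H i k = 0) (hdiag : ∀ i, H i i = s i)
    (hre : ∀ i, 0 < (s i).re) (M : Matrix (Fin j) (Fin j) ℂ) :
    ∃ X : Matrix (Fin j) (Fin j) ℂ, Hᴴ * X + X * H = M := by
  let L : Matrix (Fin j) (Fin j) ℂ →ₗ[ℂ] Matrix (Fin j) (Fin j) ℂ :=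
    { toFun := fun X => Hᴴ * X + X * H
      map_add' := fun X W => by
        simp only [Matrix.mul_add, Matrix.add_mul]; abel
      map_smul' := fun c X => by
        simp only [Matrix.mul_smul, Matrix.smul_mul, RingHom.id_apply, smul_add] }
  have hinj : Function.Injective L := by
    intro X W hXW
    have h0 : Hᴴ * (X - W) + (X - W) * H = 0 := by
      have : L X - L W = 0 := by rw [hXW, sub_self]
      simp only [L, LinearMap.coe_mk, AddHom.coe_mk] at this
      rw [Matrix.mul_sub, Matrix.sub_mul]
      linear_combination (norm := noncomm_ring) this
    exact sub_eq_zero.mp (lyap_inj htri hdiag hre h0)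
  have hsurj : Function.Surjective L :=
    (LinearMap.injective_iff_surjective_of_finrank_eq_finrank rfl).mp hinj
  exact hsurj M

lemma herm_form_conj {X : Matrix (Fin j) (Fin j) ℂ} (hX : Xᴴ = X) (x : Fin j → ℂ) :
    star (star x ⬝ᵥ (X *ᵥ x)) = star x ⬝ᵥ (X *ᵥ x) := by
  conv_lhs => rw [Matrix.star_dotProduct, star_star, Matrix.star_mulVec, hX,
    ← Matrix.dotProduct_mulVec]

lemma herm_form_im {X : Matrix (Fin j) (Fin j) ℂ} (hX : Xᴴ = X) (x : Fin j → ℂ) :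
    (star x ⬝ᵥ (X *ᵥ x)).im = 0 :=
  Complex.conj_eq_iff_im.mp (herm_form_conj hX x)

lemma bilin_expand (X : Matrix (Fin j) (Fin j) ℂ) (w x : Fin j → ℂ) :
    ∑ i, ∑ k, ((starRingEnd ℂ) (w i) * (X i k * x k) + (starRingEnd ℂ) (x i) * (X i k * w k))
      = star w ⬝ᵥ (X *ᵥ x) + star x ⬝ᵥ (X *ᵥ w) := by
  simp only [dotProduct, Matrix.mulVec, Pi.star_apply, Finset.mul_sum,
    Finset.sum_add_distrib, RCLike.star_def]

lemma psd_sol {H M X : Matrix (Fin j) (Fin j) ℂ} {s : Fin j → ℂ}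
    (htri : ∀ i k : Fin j, k < i → H i k = 0) (hdiag : ∀ i, H i i = s i)
    (hre : ∀ i, 0 < (s i).re)
    (hMps : M.PosSemidef) (hXH : Xᴴ = X) (hXeq : Hᴴ * X + X * H = M) :
    X.PosSemidef := by
  have htriH : H.BlockTriangular id := fun a b hb => htri a b hb
  refine Matrix.posSemidef_iff_dotProduct_mulVec.mpr ⟨hXH, fun x₀ => ?_⟩
  set u : ℝ → Matrix (Fin j) (Fin j) ℂ := fun t => exp (t • (-H)) with hu
  set xt : ℝ → (Fin j → ℂ) := fun t => (u t) *ᵥ x₀ with hxt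
  have hderiv_u : ∀ t : ℝ, HasDerivAt u (u t * (-H)) t := fun t =>
    hasDerivAt_exp_smul_const (-H) t
  have hcomm : ∀ t : ℝ, u t * (-H) = (-H) * u t := fun t =>
    (((Commute.refl (-H)).smul_left t).exp_left).eq
  have hderiv_x : ∀ (i : Fin j) (t : ℝ),
      HasDerivAt (fun t => xt t i) (((-H) *ᵥ xt t) i) t := by
    intro i t
    have h1 : ∀ (a b : Fin j) (t : ℝ), HasDerivAt (fun t => u t a b) ((u t * (-H)) a b) t :=
      fun a b t => ((entryR a b).hasFDerivAt.comp_hasDerivAt t (hderiv_u t))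
    have h2 : HasDerivAt (fun t => ∑ k, u t i k * x₀ k) (∑ k, (u t * (-H)) i k * x₀ k) t :=
      HasDerivAt.fun_sum fun k _ => (h1 i k t).mul_const (x₀ k)
    have h3 : (fun t => xt t i) = fun t => ∑ k, u t i k * x₀ k := by
      funext t; simp [hxt, Matrix.mulVec, dotProduct]
    have h5 : (u t * (-H)) *ᵥ x₀ = (-H) *ᵥ xt t := by
      rw [hcomm t, ← Matrix.mulVec_mulVec]
    have h4 : ((-H) *ᵥ xt t) i = ∑ k, (u t * (-H)) i k * x₀ k := by
      rw [← h5]; simp [Matrix.mulVec, dotProduct]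
    rw [h3, h4]
    exact h2
  set q : ℝ → ℂ := fun t => star (xt t) ⬝ᵥ (X *ᵥ xt t) with hq
  have hderiv_q : ∀ t : ℝ, HasDerivAt q (-(star (xt t) ⬝ᵥ (M *ᵥ xt t))) t := by
    intro t
    have h1 : HasDerivAt (fun t => ∑ i, ∑ k, (starRingEnd ℂ) (xt t i) * (X i k * xt t k))
        (∑ i, ∑ k, ((starRingEnd ℂ) (((-H) *ᵥ xt t) i) * (X i k * xt t k)
          + (starRingEnd ℂ) (xt t i) * (X i k * ((-H) *ᵥ xt t) k))) t := by
      refine HasDerivAt.fun_sum fun i _ => HasDerivAt.fun_sum fun k _ => ?_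
      have ha : HasDerivAt (fun t => (starRingEnd ℂ) (xt t i))
          ((starRingEnd ℂ) (((-H) *ᵥ xt t) i)) t := (hderiv_x i t).star
      have hb : HasDerivAt (fun t => X i k * xt t k) (X i k * ((-H) *ᵥ xt t) k) t :=
        (hderiv_x k t).const_mul (X i k)
      exact ha.mul hb
    have h2 : q = fun t => ∑ i, ∑ k, (starRingEnd ℂ) (xt t i) * (X i k * xt t k) := by
      funext t
      simp only [hq, dotProduct, Matrix.mulVec, Pi.star_apply, Finset.mul_sum,
        RCLike.star_def]
    have e1 : star ((-H) *ᵥ xt t) ⬝ᵥ (X *ᵥ xt t)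
        = -(star (xt t) ⬝ᵥ ((Hᴴ * X) *ᵥ xt t)) := by
      rw [Matrix.neg_mulVec, star_neg, neg_dotProduct, Matrix.star_mulVec,
        ← Matrix.dotProduct_mulVec, Matrix.mulVec_mulVec]
    have e2 : star (xt t) ⬝ᵥ (X *ᵥ ((-H) *ᵥ xt t))
        = -(star (xt t) ⬝ᵥ ((X * H) *ᵥ xt t)) := by
      rw [Matrix.neg_mulVec, Matrix.mulVec_neg, dotProduct_neg, Matrix.mulVec_mulVec]
    have h3 : (∑ i, ∑ k, ((starRingEnd ℂ) (((-H) *ᵥ xt t) i) * (X i k * xt t k)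
          + (starRingEnd ℂ) (xt t i) * (X i k * ((-H) *ᵥ xt t) k)))
        = -(star (xt t) ⬝ᵥ (M *ᵥ xt t)) := by
      rw [bilin_expand, e1, e2, ← neg_add, ← dotProduct_add, ← Matrix.add_mulVec, hXeq]
    rw [h2, ← h3]
    exact h1
  set f : ℝ → ℝ := fun t => (q t).re with hf
  have hderiv_f : ∀ t : ℝ, HasDerivAt f (-(star (xt t) ⬝ᵥ (M *ᵥ xt t))).re t := fun t =>
    Complex.reCLM.hasFDerivAt.comp_hasDerivAt t (hderiv_q t)
  have hf_anti : Antitone f := by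
    apply antitone_of_deriv_nonpos (fun t => (hderiv_f t).differentiableAt)
    intro t
    rw [(hderiv_f t).deriv]
    have h2 : 0 ≤ (star (xt t) ⬝ᵥ (M *ᵥ xt t)).re := by
      simpa using hMps.re_dotProduct_nonneg (xt t)
    rw [Complex.neg_re]
    linarith
  set A : Matrix (Fin j) (Fin j) ℂ := exp (-H) with hA
  have hspA : ∀ μ ∈ spectrum ℂ A, ‖μ‖₊ < 1 := by
    intro μ hμ
    obtain ⟨i, hi⟩ := spectrum_tri (exp_tri htriH.neg).1 hμ
    have h1 : ‖μ‖ < 1 := by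
      rw [hi, (exp_tri htriH.neg).2 i, Complex.norm_exp,
        Matrix.neg_apply, hdiag, Complex.neg_re]
      exact Real.exp_lt_one_iff.mpr (by linarith [hre i])
    exact_mod_cast h1
  have hpow := pow_tendsto_zero hspA
  have hun : ∀ m : ℕ, u (m : ℝ) = A ^ m := by
    intro m
    show exp ((m:ℝ) • -H) = A ^ m
    rw [Nat.cast_smul_eq_nsmul, Matrix.exp_nsmul]
  have hxt_lim : Tendsto (fun m : ℕ => xt (m:ℝ)) atTop (nhds 0) := by
    have hcont : Continuous (fun N : Matrix (Fin j) (Fin j) ℂ => N *ᵥ x₀) := by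
      let L2 : Matrix (Fin j) (Fin j) ℂ →ₗ[ℂ] (Fin j → ℂ) :=
        { toFun := fun N => N *ᵥ x₀
          map_add' := fun _ _ => Matrix.add_mulVec _ _ _
          map_smul' := fun c N => Matrix.smul_mulVec c N x₀ }
      exact L2.continuous_of_finiteDimensional
    have h1 := (hcont.tendsto 0).comp hpow
    have h2 : (fun m : ℕ => xt (m:ℝ))
        = (fun N : Matrix (Fin j) (Fin j) ℂ => N *ᵥ x₀) ∘ (fun m : ℕ => A ^ m) := by
      funext m
      simp only [Function.comp_apply, hxt, hun m]
    rw [h2]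
    simpa using h1
  have hq_lim : Tendsto (fun m : ℕ => q (m:ℝ)) atTop (nhds 0) := by
    have hφ : Continuous (fun y : Fin j → ℂ => star y ⬝ᵥ (X *ᵥ y)) :=
      Continuous.dotProduct (continuous_star) (continuous_const.matrix_mulVec continuous_id)
    have h1 := (hφ.tendsto 0).comp hxt_lim
    simp at h1; exact h1
  have hf_lim : Tendsto (fun m : ℕ => f (m:ℝ)) atTop (nhds 0) := by
    have := (Complex.continuous_re.tendsto 0).comp hq_lim
    simp at this; exact this
  have h0le : (0:ℝ) ≤ f 0 :=
    le_of_tendsto hf_lim (Filter.Eventually.of_forall fun m => hf_anti (Nat.cast_nonneg m))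
  have hu0 : u 0 = 1 := by
    show exp ((0:ℝ) • -H) = 1
    rw [zero_smul, exp_zero]
  have hq0 : q 0 = star x₀ ⬝ᵥ (X *ᵥ x₀) := by
    show star (u 0 *ᵥ x₀) ⬝ᵥ (X *ᵥ (u 0 *ᵥ x₀)) = _
    rw [hu0, Matrix.one_mulVec]
  refine Complex.le_def.mpr ⟨?_, ?_⟩
  · have h5 : f 0 = (star x₀ ⬝ᵥ (X *ᵥ x₀)).re := by
      show (q 0).re = _
      rw [hq0]
    rw [show ((0:ℂ)).re = (0:ℝ) from rfl, ← h5]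
    exact h0le
  · simp [herm_form_im hXH x₀]


lemma mem_spectrum_of_eigen {k : ℕ} {N : Matrix (Fin k) (Fin k) ℂ} {μ : ℂ} {x : Fin k → ℂ}
    (hx : x ≠ 0) (heig : N *ᵥ x = μ • x) : μ ∈ spectrum ℂ N := by
  rw [spectrum.mem_iff]
  intro hunit
  obtain ⟨Ninv, hNinv⟩ := hunit.exists_left_inv
  have h0 : (algebraMap ℂ (Matrix (Fin k) (Fin k) ℂ) μ - N) *ᵥ x = 0 := by
    rw [Matrix.sub_mulVec, Algebra.algebraMap_eq_smul_one, Matrix.smul_mulVec,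
      Matrix.one_mulVec, heig, sub_self]
  apply hx
  have h1 := congrArg (fun P : Matrix (Fin k) (Fin k) ℂ => P *ᵥ x) hNinv
  simpa [← Matrix.mulVec_mulVec, h0, Matrix.mulVec_zero, Matrix.one_mulVec] using h1.symm

end Stmt4Aux

set_option maxHeartbeats 1000000 in
/-- Given a rational Arnoldi decomposition `F·Z = v·h + Z·H` with `[v Z]` of
full column rank, `H` upper triangular with diagonal entries `s i` of positive
real part and not eigenvalues of `F`, the algebraic Riccati equation
`H·Y + Y·Hᴴ − Y·(ZᴴBBᴴZ + hᴴh)·Y = 0` has a unique positive definite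
solution. -/
theorem stmt4 (n j m : ℕ)
    (F : Matrix (Fin n) (Fin n) ℂ) (v : Fin n → ℂ)
    (Z : Matrix (Fin n) (Fin j) ℂ) (h : Matrix (Fin 1) (Fin j) ℂ)
    (H : Matrix (Fin j) (Fin j) ℂ) (s : Fin j → ℂ)
    (htri : ∀ i k : Fin j, k < i → H i k = 0) (hdiag : ∀ i : Fin j, H i i = s i)
    (hrank : LinearIndependent ℂ
      (fun c : Fin 1 ⊕ Fin j =>
        (fromCols (Matrix.of fun i (_ : Fin 1) => v i) Z)ᵀ c))
    (hbrad : F * Z = (Matrix.of fun i (_ : Fin 1) => v i) * h + Z * H)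
    (hre : ∀ i, 0 < (s i).re) (hspec : ∀ i, s i ∉ spectrum ℂ F)
    (B : Matrix (Fin n) (Fin m) ℂ) :
    ∃! Y : Matrix (Fin j) (Fin j) ℂ,
      Y.PosDef ∧ H * Y + Y * Hᴴ - Y * (Zᴴ * B * Bᴴ * Z + hᴴ * h) * Y = 0 := by
  classical
  set vm : Matrix (Fin n) (Fin 1) ℂ := Matrix.of fun i (_ : Fin 1) => v i with hvm
  set M : Matrix (Fin j) (Fin j) ℂ := Zᴴ * B * Bᴴ * Z + hᴴ * h with hMdef
  have htriH : H.BlockTriangular id := fun a b hb => htri a b hb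
  have hMfac : Zᴴ * B * Bᴴ * Z = (Bᴴ * Z)ᴴ * (Bᴴ * Z) := by
    rw [Matrix.conjTranspose_mul, Matrix.conjTranspose_conjTranspose]
    exact Matrix.mul_assoc _ _ _
  have hMps : M.PosSemidef := by
    rw [hMdef, hMfac]
    exact (Matrix.posSemidef_conjTranspose_mul_self _).add
      (Matrix.posSemidef_conjTranspose_mul_self _)
  obtain ⟨X, hXeq⟩ := Stmt4Aux.lyap_solve htri hdiag hre M
  have hXH : Xᴴ = X := by
    have hMH : Mᴴ = M := hMps.1
    have h2 : Hᴴ * Xᴴ + Xᴴ * H = M := by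
      have h1 := congrArg Matrix.conjTranspose hXeq
      rw [Matrix.conjTranspose_add, Matrix.conjTranspose_mul, Matrix.conjTranspose_mul,
        Matrix.conjTranspose_conjTranspose, hMH] at h1
      rw [← h1]
      abel
    exact Stmt4Aux.lyap_unique htri hdiag hre h2 hXeq
  have hXpsd := Stmt4Aux.psd_sol htri hdiag hre hMps hXH hXeq
  have hMker : ∀ x : Fin j → ℂ, X *ᵥ x = 0 → M *ᵥ x = 0 := by
    intro x hx
    have hq : star x ⬝ᵥ (M *ᵥ x) = 0 := by
      rw [← hXeq, Matrix.add_mulVec, dotProduct_add]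
      have t1 : star x ⬝ᵥ ((Hᴴ * X) *ᵥ x) = 0 := by
        rw [← Matrix.mulVec_mulVec, hx, Matrix.mulVec_zero, dotProduct_zero]
      have t2 : star x ⬝ᵥ ((X * H) *ᵥ x) = 0 := by
        rw [← Matrix.mulVec_mulVec, Matrix.dotProduct_mulVec]
        have h4 : star x ᵥ* Xᴴ = 0 := by rw [← Matrix.star_mulVec, hx, star_zero]
        rw [hXH] at h4
        rw [h4, zero_dotProduct]
      rw [t1, t2, add_zero]
    exact (hMps.dotProduct_mulVec_zero_iff x).mp hq
  have hker : ∀ x : Fin j → ℂ, X *ᵥ x = 0 → x = 0 := by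
    intro x0 hx0
    by_contra hne0
    set S := LinearMap.ker X.mulVecLin with hS
    have hx0S : x0 ∈ S := by simpa [hS, LinearMap.mem_ker] using hx0
    haveI hSnt : Nontrivial S :=
      ⟨⟨⟨x0, hx0S⟩, 0, fun hc => hne0 (by simpa [Subtype.ext_iff] using hc)⟩⟩
    have hmap : ∀ y ∈ S, H.mulVecLin y ∈ S := by
      intro y hy
      have hy' : X *ᵥ y = 0 := by simpa [hS, LinearMap.mem_ker] using hy
      have h5 : X * H = M - Hᴴ * X := by rw [← hXeq]; abel
      have h6 : X *ᵥ (H *ᵥ y) = 0 := by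
        rw [Matrix.mulVec_mulVec, h5, Matrix.sub_mulVec, hMker y hy', ← Matrix.mulVec_mulVec,
          hy', Matrix.mulVec_zero, zero_sub, neg_zero]
      simpa [hS, LinearMap.mem_ker, ← Matrix.mulVec_mulVec] using h6
    let e : Module.End ℂ S := (Matrix.mulVecLin H).restrict hmap
    obtain ⟨μ, hμ⟩ := Module.End.exists_eigenvalue e
    obtain ⟨w, hw⟩ := hμ.exists_hasEigenvector
    set x : Fin j → ℂ := (w : Fin j → ℂ) with hxdef
    have hxne : x ≠ 0 := fun hc => hw.2 (Submodule.coe_eq_zero.mp (by rw [← hxdef]; exact hc))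
    have hxker : X *ᵥ x = 0 := by
      have h5 : X.mulVecLin (w : Fin j → ℂ) = 0 := LinearMap.mem_ker.mp w.2
      rw [Matrix.mulVecLin_apply] at h5
      rw [hxdef]
      exact h5
    have hHx : H *ᵥ x = μ • x := by
      have h6 := hw.apply_eq_smul
      have h7 := congrArg (Subtype.val) h6
      rw [LinearMap.restrict_coe_apply] at h7
      rw [hxdef]
      simpa [Matrix.mulVecLin_apply] using h7
    have hMx : M *ᵥ x = 0 := hMker x hxker
    have hhx : h *ᵥ x = 0 := by
      have h9 : star x ⬝ᵥ ((Zᴴ * B * Bᴴ * Z) *ᵥ x) + star x ⬝ᵥ ((hᴴ * h) *ᵥ x) = 0 := by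
        rw [← dotProduct_add, ← Matrix.add_mulVec, ← hMdef, hMx, dotProduct_zero]
      have ha : star x ⬝ᵥ ((Zᴴ * B * Bᴴ * Z) *ᵥ x)
          = star ((Bᴴ * Z) *ᵥ x) ⬝ᵥ ((Bᴴ * Z) *ᵥ x) := by
        rw [hMfac, ← Matrix.mulVec_mulVec, Matrix.dotProduct_mulVec, ← Matrix.star_mulVec]
      have hb : star x ⬝ᵥ ((hᴴ * h) *ᵥ x) = star (h *ᵥ x) ⬝ᵥ (h *ᵥ x) := by
        rw [← Matrix.mulVec_mulVec, Matrix.dotProduct_mulVec, ← Matrix.star_mulVec]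
      rw [ha, hb] at h9
      have ha0 : 0 ≤ star ((Bᴴ * Z) *ᵥ x) ⬝ᵥ ((Bᴴ * Z) *ᵥ x) :=
        dotProduct_star_self_nonneg _
      have hb0 : 0 ≤ star (h *ᵥ x) ⬝ᵥ (h *ᵥ x) := dotProduct_star_self_nonneg _
      have hbneg : star (h *ᵥ x) ⬝ᵥ (h *ᵥ x) = -(star ((Bᴴ * Z) *ᵥ x) ⬝ᵥ ((Bᴴ * Z) *ᵥ x)) := by
        linear_combination h9
      have hb1 : star (h *ᵥ x) ⬝ᵥ (h *ᵥ x) = 0 :=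
        le_antisymm (hbneg ▸ neg_nonpos_of_nonneg ha0) hb0
      exact dotProduct_star_self_eq_zero.mp hb1
    have hZx : Z *ᵥ x ≠ 0 := by
      intro hZ0
      have hli := hrank.comp Sum.inr Sum.inr_injective
      have hfam : ((fun c : Fin 1 ⊕ Fin j => (fromCols vm Z)ᵀ c) ∘ Sum.inr)
          = fun k : Fin j => Zᵀ k := by
        funext k
        funext i
        simp [Matrix.fromCols]
      rw [hfam] at hli
      have hzero : ∑ k, x k • Zᵀ k = (0 : Fin n → ℂ) := by
        funext i
        have h10 := congrFun hZ0 i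
        simp only [Matrix.mulVec, dotProduct, Pi.zero_apply] at h10
        simp only [Finset.sum_apply, Pi.smul_apply, Matrix.transpose_apply, smul_eq_mul,
          Pi.zero_apply]
        rw [← h10]
        exact Finset.sum_congr rfl fun k _ => mul_comm _ _
      have := Fintype.linearIndependent_iff.mp hli x hzero
      exact hxne (funext fun k => this k)
    have hFe : F *ᵥ (Z *ᵥ x) = μ • (Z *ᵥ x) := by
      rw [Matrix.mulVec_mulVec, hbrad, Matrix.add_mulVec, ← Matrix.mulVec_mulVec,
        ← Matrix.mulVec_mulVec, hhx, Matrix.mulVec_zero, zero_add, hHx, Matrix.mulVec_smul]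
    have hμF : μ ∈ spectrum ℂ F := Stmt4Aux.mem_spectrum_of_eigen hZx hFe
    obtain ⟨i, hi⟩ := Stmt4Aux.spectrum_tri htriH (Stmt4Aux.mem_spectrum_of_eigen hxne hHx)
    rw [hi, hdiag i] at hμF
    exact hspec i hμF
  have hXpd : X.PosDef := by
    refine Matrix.posDef_iff_dotProduct_mulVec.mpr ⟨hXH, fun x hx => ?_⟩
    rcases eq_or_lt_of_le ((Matrix.posSemidef_iff_dotProduct_mulVec.mp hXpsd).2 x) with heq | hlt
    · exact absurd (hker x ((hXpsd.dotProduct_mulVec_zero_iff x).mp heq.symm)) hx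
    · exact hlt
  have hdetX : IsUnit X.det := (Matrix.isUnit_iff_isUnit_det X).mp hXpd.isUnit
  have hXinv1 : X * X⁻¹ = 1 := Matrix.mul_nonsing_inv X hdetX
  have hXinv2 : X⁻¹ * X = 1 := Matrix.nonsing_inv_mul X hdetX
  refine ⟨X⁻¹, ⟨hXpd.inv, ?_⟩, ?_⟩
  · have hMYY : X⁻¹ * M * X⁻¹ = H * X⁻¹ + X⁻¹ * Hᴴ := by
      calc X⁻¹ * M * X⁻¹ = X⁻¹ * (Hᴴ * X + X * H) * X⁻¹ := by rw [hXeq]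
        _ = X⁻¹ * Hᴴ * (X * X⁻¹) + X⁻¹ * X * (H * X⁻¹) := by noncomm_ring
        _ = H * X⁻¹ + X⁻¹ * Hᴴ := by
            rw [hXinv1, hXinv2, mul_one, one_mul]
            exact add_comm _ _
    rw [hMYY, sub_self]
  · rintro Y' ⟨hY'pd, hY'eq⟩
    have hdetY' : IsUnit Y'.det := (Matrix.isUnit_iff_isUnit_det Y').mp hY'pd.isUnit
    have hinv1 : Y' * Y'⁻¹ = 1 := Matrix.mul_nonsing_inv Y' hdetY'
    have hinv2 : Y'⁻¹ * Y' = 1 := Matrix.nonsing_inv_mul Y' hdetY'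
    have hEq : H * Y' + Y' * Hᴴ = Y' * M * Y' := by
      rw [← sub_eq_zero]
      linear_combination (norm := noncomm_ring) hY'eq
    have hW : Hᴴ * Y'⁻¹ + Y'⁻¹ * H = M := by
      have h1 : Y'⁻¹ * (H * Y' + Y' * Hᴴ) * Y'⁻¹ = Y'⁻¹ * (Y' * M * Y') * Y'⁻¹ := by rw [hEq]
      have h2 : Y'⁻¹ * (H * Y' + Y' * Hᴴ) * Y'⁻¹
          = Y'⁻¹ * H * (Y' * Y'⁻¹) + (Y'⁻¹ * Y') * (Hᴴ * Y'⁻¹) := by noncomm_ring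
      have h3 : Y'⁻¹ * (Y' * M * Y') * Y'⁻¹ = (Y'⁻¹ * Y') * M * (Y' * Y'⁻¹) := by noncomm_ring
      rw [h2, h3, hinv1, hinv2] at h1
      simp only [mul_one, one_mul] at h1
      rw [← h1]
      exact add_comm _ _
    have hWX : Y'⁻¹ = X := Stmt4Aux.lyap_unique htri hdiag hre hW hXeq
    rw [← hWX]
    exact (Matrix.nonsing_inv_nonsing_inv Y' hdetY').symm
end

section
/- Let F ∈ ℂ^{n×n} and 𝐯 ∈ ℂ^{n×p}, and suppose the (j+1)p columns of the matrix [𝐯, F𝐯, …, F^j𝐯] are linearly independent. Let s_1, …, s_j ∈ ℂ be outside the spectrum of F and let 𝔮 be a polynomial of degree j with roots s_1, …, s_j. Then there exist Z ∈ ℂ^{n×jp}, h ∈ ℂ^{p×jp}, and H ∈ ℂ^{jp×jp} such that: (i) [𝐯 Z] ∈ ℂ^{n×(j+1)p} has full column rank; (ii) F·Z = 𝐯·h + Z·H; (iii) with respect to the partition of H into p×p blocks, H is block upper triangular with i-th diagonal block equal to s_i·I_p; and (iv) the column span of Z equals the column span of 𝔮(F)^{-1}·[𝐯, F𝐯, …,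 F^{j−1}𝐯]. -/
open Matrix Polynomial


lemma polyP1 (m : ℕ) (g : ℂ[X]) (hg : g.degree < m) :
    g ∈ Submodule.span ℂ (Set.range fun k : Fin m => (X : ℂ[X]) ^ (k : ℕ)) := by
  by_cases h0 : g = 0
  · simp [h0]
  · have hnd : g.natDegree < m := (Polynomial.natDegree_lt_iff_degree_lt h0).mpr hg
    nth_rewrite 1 [Polynomial.as_sum_range' g m hnd]
    apply Submodule.sum_mem
    intro i hi
    rw [← Polynomial.smul_X_eq_monomial]
    exact Submodule.smul_mem _ _
      (Submodule.subset_span (Set.mem_range_self (⟨i, Finset.mem_range.mp hi⟩ : Fin m)))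

lemma polyP2 {ι : Type*} (m : ℕ) (g : ι → ℂ[X])
    (hdeg : ∀ d < m, ∃ i, (g i).Monic ∧ (g i).natDegree = d) :
    ∀ k < m, (X : ℂ[X]) ^ k ∈ Submodule.span ℂ (Set.range g) := by
  intro k
  induction k using Nat.strong_induction_on with
  | _ k ih =>
    intro hk
    obtain ⟨i, hmon, hnd⟩ := hdeg k hk
    have hgd : (g i).degree = (k : WithBot ℕ) := by
      rw [Polynomial.degree_eq_natDegree hmon.ne_zero, hnd]
    have hdeq : (g i).degree = ((X : ℂ[X]) ^ k).degree := by
      rw [Polynomial.degree_X_pow, hgd]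
    have hsub : g i - X ^ k ∈ Submodule.span ℂ (Set.range g) := by
      by_cases h0 : g i - X ^ k = 0
      · simp [h0]
      · have hdlt : (g i - X ^ k).degree < (k : WithBot ℕ) := by
          have := Polynomial.degree_sub_lt hdeq hmon.ne_zero
            (by rw [hmon.leadingCoeff, (Polynomial.monic_X_pow k).leadingCoeff])
          rwa [hgd] at this
        have hmem := polyP1 k _ hdlt
        refine Submodule.span_le.mpr ?_ hmem
        rintro _ ⟨l, rfl⟩
        exact ih (l : ℕ) l.isLt (lt_trans l.isLt hk)
    have := Submodule.sub_mem _ (Submodule.subset_span (Set.mem_range_self i)) hsub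
    simpa using this

noncomputable def polyColMap {n p : ℕ} (F : Matrix (Fin n) (Fin n) ℂ)
    (V : Matrix (Fin n) (Fin p) ℂ) (c : Fin p) : ℂ[X] →ₗ[ℂ] (Fin n → ℂ) where
  toFun q := ((aeval F q) * V)ᵀ c
  map_add' x y := by
    funext r
    simp only [map_add, Matrix.add_mul, Matrix.transpose_apply, Matrix.add_apply, Pi.add_apply]
  map_smul' a x := by
    funext r
    simp only [_root_.map_smul, Matrix.smul_mul, Matrix.transpose_apply, Matrix.smul_apply,
      RingHom.id_apply, Pi.smul_apply, smul_eq_mul]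

lemma polyColMap_apply {n p : ℕ} (F : Matrix (Fin n) (Fin n) ℂ)
    (V : Matrix (Fin n) (Fin p) ℂ) (c : Fin p) (q : ℂ[X]) :
    polyColMap F V c q = ((aeval F q) * V)ᵀ c := rfl

lemma mem_span_polyCols {n p : ℕ} {ι κ : Type*} (F : Matrix (Fin n) (Fin n) ℂ)
    (V : Matrix (Fin n) (Fin p) ℂ) (c : Fin p) (g1 : ℂ[X]) (g2 : ι → ℂ[X])
    (fam : κ → (Fin n → ℂ))
    (hg : g1 ∈ Submodule.span ℂ (Set.range g2))
    (hmap : ∀ i, ∃ k, polyColMap F V c (g2 i) = fam k) :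
    polyColMap F V c g1 ∈ Submodule.span ℂ (Set.range fam) := by
  have h1 := Submodule.apply_mem_span_image_of_mem_span (polyColMap F V c) hg
  refine Submodule.span_le.mpr ?_ h1
  rintro _ ⟨_, ⟨i, rfl⟩, rfl⟩
  obtain ⟨k, hk⟩ := hmap i
  exact Submodule.subset_span ⟨k, hk.symm⟩

lemma eq_ringInverse {M₀ : Type*} [MonoidWithZero M₀] {A x : M₀} (hA : IsUnit A)
    (h : x * A = 1) : x = Ring.inverse A := by
  calc x = x * (A * Ring.inverse A) := by rw [Ring.mul_inverse_cancel _ hA, mul_one]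
  _ = (x * A) * Ring.inverse A := by rw [mul_assoc]
  _ = Ring.inverse A := by rw [h, one_mul]

lemma commute_ringInverse {M₀ : Type*} [MonoidWithZero M₀] {a b : M₀} (ha : IsUnit a)
    (h : Commute a b) : Commute (Ring.inverse a) b := by
  have h2 : Ring.inverse a * b * (a * Ring.inverse a) = Ring.inverse a * b := by
    rw [Ring.mul_inverse_cancel _ ha, mul_one]
  show Ring.inverse a * b = b * Ring.inverse a
  rw [← h2]
  simp only [mul_assoc]
  rw [← mul_assoc b a, ← h.eq, mul_assoc a b, ← mul_assoc (Ring.inverse a) a,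
    Ring.inverse_mul_cancel _ ha, one_mul]


/-- Existence of a block rational Arnoldi decomposition in special form:
`F·Z = V·h + Z·H` with `H` block upper triangular having diagonal blocks
`s_i·I_p`, `[V Z]` of full column rank, and the columns of `Z` spanning the
block rational Krylov space `𝔮(F)⁻¹·[V, FV, …, F^{j-1}V]`. -/
theorem stmt5 (n p j : ℕ)
    (F : Matrix (Fin n) (Fin n) ℂ) (V : Matrix (Fin n) (Fin p) ℂ)
    (hindep : LinearIndependent ℂ
      (fun kc : Fin (j + 1) × Fin p => ((F ^ (kc.1 : ℕ)) * V)ᵀ kc.2))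
    (s : Fin j → ℂ) (hs : ∀ i, s i ∉ spectrum ℂ F) :
    ∃ (Z : Matrix (Fin n) (Fin j × Fin p) ℂ)
      (h : Matrix (Fin p) (Fin j × Fin p) ℂ)
      (H : Matrix (Fin j × Fin p) (Fin j × Fin p) ℂ),
      LinearIndependent ℂ
        (fun c : Fin p ⊕ (Fin j × Fin p) => (fromCols V Z)ᵀ c) ∧
      F * Z = V * h + Z * H ∧
      (∀ (i k : Fin j) (a b : Fin p), k < i → H (i, a) (k, b) = 0) ∧
      (∀ (i : Fin j) (a b : Fin p),
        H (i, a) (i, b) = if a = b then s i else 0) ∧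
      Submodule.span ℂ (Set.range fun c : Fin j × Fin p => Zᵀ c) =
        Submodule.comap
          (Matrix.mulVecLin (aeval F (∏ i : Fin j, (X - Polynomial.C (s i)))))
          (Submodule.span ℂ
            (Set.range fun kc : Fin j × Fin p => ((F ^ (kc.1 : ℕ)) * V)ᵀ kc.2)) := by
  classical
  set P : Finset (Fin j) → Matrix (Fin n) (Fin n) ℂ :=
    fun t => aeval F (∏ l ∈ t, (X - Polynomial.C (s l))) with hP
  have hcomm : ∀ p1 p2 : ℂ[X], Commute (aeval F p1) (aeval F p2) := by
    intro p1 p2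
    show _ = _
    rw [← _root_.map_mul, ← _root_.map_mul, mul_comm]
  have hfac : ∀ l : Fin j, IsUnit (aeval F (X - Polynomial.C (s l))) := by
    intro l
    have h1 := spectrum.notMem_iff.mp (hs l)
    have h2 : aeval F (X - Polynomial.C (s l)) = -((algebraMap ℂ _) (s l) - F) := by
      simp
    rw [h2]
    exact h1.neg
  have hu : ∀ t : Finset (Fin j), IsUnit (P t) := by
    intro t
    induction t using Finset.induction_on with
    | empty => simp [hP]
    | @insert a t hnotmem ih =>
      show IsUnit ((aeval F) (∏ l ∈ insert a t, (X - Polynomial.C (s l))))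
      rw [Finset.prod_insert hnotmem, _root_.map_mul]
      exact (hfac _).mul ih
  set Z : Matrix (Fin n) (Fin j × Fin p) ℂ :=
    Matrix.of fun r kc => (Ring.inverse (P (Finset.Iic kc.1)) * V) r kc.2 with hZ
  set h : Matrix (Fin p) (Fin j × Fin p) ℂ :=
    Matrix.of fun a kc => if ((kc.1 : ℕ) = 0 ∧ a = kc.2) then (1 : ℂ) else 0 with hh
  set H : Matrix (Fin j × Fin p) (Fin j × Fin p) ℂ :=
    Matrix.of fun ia kc => (if ia = kc then s kc.1 else 0) +
      (if ((ia.1 : ℕ) + 1 = (kc.1 : ℕ) ∧ ia.2 = kc.2) then (1 : ℂ) else 0) with hHdef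
  -- shared machinery for parts (i) and (iv)
  set rr : Fin j → ℂ[X] := fun i => ∏ l ∈ Finset.Ioi i, (X - Polynomial.C (s l)) with hrr
  have hrrmonic : ∀ i, (rr i).Monic := fun i =>
    monic_prod_of_monic _ _ fun l _ => monic_X_sub_C (s l)
  have hrrdeg : ∀ i, (rr i).natDegree = j - 1 - (i : ℕ) := by
    intro i
    simp only [hrr]
    rw [natDegree_prod_of_monic _ _ fun l _ => monic_X_sub_C (s l)]
    simp [natDegree_X_sub_C, Fin.card_Ioi]
  have hqmonic : (∏ l : Fin j, (X - Polynomial.C (s l))).Monic :=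
    monic_prod_of_monic _ _ fun l _ => monic_X_sub_C (s l)
  have hqdeg : (∏ l : Fin j, (X - Polynomial.C (s l))).natDegree = j := by
    rw [natDegree_prod_of_monic _ _ fun l _ => monic_X_sub_C (s l)]
    simp [natDegree_X_sub_C]
  have hQ : IsUnit (aeval F (∏ l : Fin j, (X - Polynomial.C (s l)))) := hu Finset.univ
  have hqsplit : ∀ k : Fin j, (∏ l : Fin j, (X - Polynomial.C (s l))) =
      (∏ l ∈ Finset.Iic k, (X - Polynomial.C (s l))) * rr k := by
    intro k
    have hdis : Disjoint (Finset.Iic k) (Finset.Ioi k) :=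
      Finset.disjoint_left.mpr fun l h1 h2 =>
        absurd (Finset.mem_Ioi.mp h2) (not_lt.mpr (Finset.mem_Iic.mp h1))
    have hun : Finset.Iic k ∪ Finset.Ioi k = Finset.univ := by
      ext l
      simp [le_or_gt]
    simp only [hrr]
    rw [← Finset.prod_union hdis, hun]
  have hcolmul : ∀ (M : Matrix (Fin n) (Fin n) ℂ) (N : Matrix (Fin n) (Fin p) ℂ) (c : Fin p),
      M.mulVec (Nᵀ c) = (M * N)ᵀ c := by
    intro M N c
    funext r
    simp [Matrix.mulVec, Matrix.mul_apply, dotProduct]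
  have hZcol : ∀ k : Fin j, Ring.inverse (P (Finset.Iic k)) * V =
      aeval F (rr k) * (Ring.inverse (aeval F (∏ l : Fin j, (X - Polynomial.C (s l)))) * V) := by
    intro k
    have hinv2 : Ring.inverse (P (Finset.Iic k)) = aeval F (rr k) *
        Ring.inverse (aeval F (∏ l : Fin j, (X - Polynomial.C (s l)))) := by
      refine (eq_ringInverse (hu (Finset.Iic k)) ?_).symm
      have hcQ : Commute (Ring.inverse (aeval F (∏ l : Fin j, (X - Polynomial.C (s l)))))
          (P (Finset.Iic k)) := commute_ringInverse hQ (hcomm _ _)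
      rw [mul_assoc, hcQ.eq, ← mul_assoc, ← _root_.map_mul, mul_comm (rr k), ← hqsplit k,
        Ring.mul_inverse_cancel _ hQ]
    rw [hinv2, Matrix.mul_assoc]
  have hQZ : ∀ k : Fin j, aeval F (∏ l : Fin j, (X - Polynomial.C (s l))) *
      (Ring.inverse (P (Finset.Iic k)) * V) = aeval F (rr k) * V := by
    intro k
    rw [hZcol k, ← Matrix.mul_assoc, (hcomm (∏ l : Fin j, (X - Polynomial.C (s l))) (rr k)).eq,
      Matrix.mul_assoc, ← Matrix.mul_assoc (aeval F (∏ l : Fin j, (X - Polynomial.C (s l)))),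
      Ring.mul_inverse_cancel _ hQ, Matrix.one_mul]
  refine ⟨Z, h, H, ?_, ?_, ?_, ?_, ?_⟩
  · -- (i) full column rank
    set imfam : (Fin p ⊕ (Fin j × Fin p)) → (Fin n → ℂ) :=
      Sum.elim (fun c => polyColMap F V c (∏ l : Fin j, (X - Polynomial.C (s l))))
        (fun kc => polyColMap F V kc.2 (rr kc.1)) with him
    have hcomp : (⇑(aeval F (∏ l : Fin j, (X - Polynomial.C (s l)))).mulVecLin ∘
        fun c : Fin p ⊕ (Fin j × Fin p) => (fromCols V Z)ᵀ c) = imfam := by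
      funext t
      cases t with
      | inl c =>
        show (aeval F (∏ l : Fin j, (X - Polynomial.C (s l)))).mulVec
          ((fromCols V Z)ᵀ (Sum.inl c)) = _
        have hv : (fromCols V Z)ᵀ (Sum.inl c) = Vᵀ c := by
          funext r
          simp [Matrix.fromCols]
        rw [hv, hcolmul]
        rfl
      | inr kc =>
        show (aeval F (∏ l : Fin j, (X - Polynomial.C (s l)))).mulVec
          ((fromCols V Z)ᵀ (Sum.inr kc)) = _
        have hv : (fromCols V Z)ᵀ (Sum.inr kc) =
            (Ring.inverse (P (Finset.Iic kc.1)) * V)ᵀ kc.2 := by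
          funext r
          simp [Matrix.fromCols, hZ]
        rw [hv, hcolmul, hQZ kc.1]
        rfl
    have aevalpow : ∀ k : ℕ, aeval F ((X : ℂ[X]) ^ k) = F ^ k := fun k => by
      rw [map_pow, aeval_X]
    set W : Submodule ℂ (Fin n → ℂ) := Submodule.span ℂ
      (Set.range (fun kc : Fin (j + 1) × Fin p => ((F ^ (kc.1 : ℕ)) * V)ᵀ kc.2)) with hWdef
    have hmono : ∀ (c : Fin p) (g : ℂ[X]), g.degree < (j + 1 : ℕ) →
        polyColMap F V c g ∈ W := by
      intro c g hg
      refine mem_span_polyCols F V c g (fun d : Fin (j + 1) => (X : ℂ[X]) ^ (d : ℕ))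
        (fun kc : Fin (j + 1) × Fin p => ((F ^ (kc.1 : ℕ)) * V)ᵀ kc.2) (polyP1 _ _ hg) ?_
      intro d
      exact ⟨(d, c), by rw [polyColMap_apply, aevalpow]⟩
    have hmemW : ∀ t, imfam t ∈ W := by
      intro t
      cases t with
      | inl c =>
        refine hmono c _ ?_
        rw [Polynomial.degree_eq_natDegree hqmonic.ne_zero, hqdeg]
        exact_mod_cast (by omega : j < j + 1)
      | inr kc =>
        refine hmono kc.2 _ ?_
        rw [Polynomial.degree_eq_natDegree (hrrmonic kc.1).ne_zero, hrrdeg kc.1]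
        exact_mod_cast (by omega : j - 1 - (kc.1 : ℕ) < j + 1)
    set gcomb : Fin (j + 1) → ℂ[X] := fun d =>
      if hd : (d : ℕ) < j then rr ⟨(d : ℕ), hd⟩ else (∏ l : Fin j, (X - Polynomial.C (s l)))
      with hgcomb
    have hWle : W ≤ Submodule.span ℂ (Set.range imfam) := by
      rw [hWdef, Submodule.span_le]
      rintro x ⟨⟨k, c⟩, rfl⟩
      have hx : ((F ^ (k : ℕ)) * V)ᵀ c = polyColMap F V c ((X : ℂ[X]) ^ (k : ℕ)) := by
        rw [polyColMap_apply, aevalpow]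
      show ((F ^ (k : ℕ)) * V)ᵀ c ∈ Submodule.span ℂ (Set.range imfam)
      rw [hx]
      refine mem_span_polyCols F V c _ gcomb imfam ?_ ?_
      · refine polyP2 (j + 1) gcomb ?_ (k : ℕ) k.isLt
        intro d hd
        by_cases hdj : d < j
        · have hlt : j - 1 - d < j + 1 := by omega
          refine ⟨⟨j - 1 - d, hlt⟩, ?_⟩
          have hcond : ((⟨j - 1 - d, hlt⟩ : Fin (j + 1)) : ℕ) < j := by
            show j - 1 - d < j
            omega
          rw [hgcomb]
          simp only [dif_pos hcond]
          refine ⟨hrrmonic _, ?_⟩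
          rw [hrrdeg]
          show j - 1 - (j - 1 - d) = d
          omega
        · have hdj2 : d = j := by omega
          refine ⟨⟨j, by omega⟩, ?_⟩
          have hcond : ¬ ((⟨j, by omega⟩ : Fin (j + 1)) : ℕ) < j := by
            show ¬ j < j
            omega
          rw [hgcomb]
          simp only [dif_neg hcond]
          exact ⟨hqmonic, by rw [hqdeg, hdj2]⟩
      · intro i
        by_cases hij : (i : ℕ) < j
        · refine ⟨Sum.inr (⟨(i : ℕ), hij⟩, c), ?_⟩
          rw [hgcomb]
          simp only [dif_pos hij]
          rfl
        · refine ⟨Sum.inl c, ?_⟩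
          rw [hgcomb]
          simp only [dif_neg hij]
          rfl
    have hspanim : Submodule.span ℂ (Set.range imfam) = W := by
      refine le_antisymm (Submodule.span_le.mpr ?_) hWle
      rintro x ⟨t, rfl⟩
      exact hmemW t
    set w : (Fin p ⊕ (Fin j × Fin p)) → W := fun t => ⟨imfam t, hmemW t⟩ with hw
    have hspanw : ⊤ ≤ Submodule.span ℂ (Set.range w) := by
      have hmapeq : Submodule.map W.subtype (Submodule.span ℂ (Set.range w)) =
          Submodule.map W.subtype ⊤ := by
        rw [Submodule.map_span, ← Set.range_comp, Submodule.map_subtype_top]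
        have hcw : (⇑W.subtype ∘ w) = imfam := rfl
        rw [hcw, hspanim]
      have hinj : Function.Injective (Submodule.map W.subtype) :=
        Submodule.map_injective_of_injective W.injective_subtype
      exact le_of_eq (hinj hmapeq).symm
    have hcard : Fintype.card (Fin p ⊕ (Fin j × Fin p)) = Module.finrank ℂ W := by
      rw [hWdef, finrank_span_eq_card hindep]
      simp
      ring
    have hwind := linearIndependent_of_top_le_span_of_card_eq_finrank hspanw hcard
    have himind : LinearIndependent ℂ imfam := by
      have h5 := hwind.map' W.subtype W.ker_subtype
      exact h5
    apply LinearIndependent.of_comp (aeval F (∏ l : Fin j, (X - Polynomial.C (s l)))).mulVecLin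
    rw [hcomp]
    exact himind
  · -- (ii)
    have key : ∀ k : Fin j, F * (Ring.inverse (P (Finset.Iic k)) * V) =
        s k • (Ring.inverse (P (Finset.Iic k)) * V) + Ring.inverse (P (Finset.Iio k)) * V := by
      intro k
      have hPI : P (Finset.Iic k) = aeval F (X - Polynomial.C (s k)) * P (Finset.Iio k) := by
        show (aeval F) (∏ l ∈ Finset.Iic k, (X - Polynomial.C (s l))) =
          (aeval F) (X - Polynomial.C (s k)) *
            (aeval F) (∏ l ∈ Finset.Iio k, (X - Polynomial.C (s l)))
        rw [← _root_.map_mul]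
        congr 1
        rw [← Finset.Iio_insert k, Finset.prod_insert (by simp : k ∉ Finset.Iio k)]
      have hEcomm : Commute (aeval F (X - Polynomial.C (s k))) (P (Finset.Iio k)) := hcomm _ _
      have hc : Commute (aeval F (X - Polynomial.C (s k))) (Ring.inverse (P (Finset.Iio k))) :=
        (commute_ringInverse (hu _) hEcomm.symm).symm
      have hinv : aeval F (X - Polynomial.C (s k)) * Ring.inverse (P (Finset.Iic k)) =
          Ring.inverse (P (Finset.Iio k)) := by
        rw [hPI, Ring.mul_inverse_rev' hEcomm, ← mul_assoc, hc.eq, mul_assoc,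
          Ring.mul_inverse_cancel _ (hfac k), mul_one]
      have hF : F = aeval F (X - Polynomial.C (s k)) + (s k) • (1 : Matrix (Fin n) (Fin n) ℂ) := by
        simp [Algebra.algebraMap_eq_smul_one]
      conv_lhs => rw [hF]
      rw [Matrix.add_mul, Matrix.smul_mul, Matrix.one_mul, ← Matrix.mul_assoc, hinv, add_comm]
    ext r kc
    obtain ⟨k, b⟩ := kc
    have hL : (F * Z) r (k, b) = (F * (Ring.inverse (P (Finset.Iic k)) * V)) r b := by
      simp [Matrix.mul_apply, hZ]
    rw [hL, key k]
    by_cases hk0 : (k : ℕ) = 0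
    · have hIio : Finset.Iio k = (∅ : Finset (Fin j)) := by
        ext l
        simp only [Finset.mem_Iio, Finset.notMem_empty, iff_false, not_lt, Fin.le_def, hk0]
        omega
      have hVh : (V * h) r (k, b) = V r b := by
        simp [Matrix.mul_apply, hh, hk0, ite_and]
      have hZH : (Z * H) r (k, b) = Z r (k, b) * s k := by
        rw [Matrix.mul_apply]
        have hco : ∀ ia : Fin j × Fin p, Z r ia * H ia (k, b) =
            if ia = (k, b) then Z r (k, b) * s k else 0 := by
          intro ia
          by_cases hia : ia = (k, b)
          · subst hia; simp [hHdef, hk0]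
          · have hc2 : ¬((ia.1 : ℕ) + 1 = (k : ℕ) ∧ ia.2 = b) := by
              rintro ⟨h1, _⟩; omega
            simp [hHdef, hia, hc2]
        rw [Finset.sum_congr rfl fun ia _ => hco ia]
        simp
      have hP0 : Ring.inverse (P (∅ : Finset (Fin j))) * V = V := by
        show Ring.inverse ((aeval F) (∏ l ∈ (∅ : Finset (Fin j)), (X - Polynomial.C (s l)))) * V = V
        simp
      rw [hIio, hP0]
      conv_rhs => rw [Matrix.add_apply, hVh, hZH]
      simp only [Matrix.add_apply, Matrix.smul_apply, smul_eq_mul]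
      simp [hZ]
      ring
    · obtain ⟨m, hm⟩ : ∃ m, (k : ℕ) = m + 1 := ⟨(k : ℕ) - 1, by omega⟩
      have hmlt : m < j := by omega
      set k' : Fin j := ⟨m, hmlt⟩ with hk'
      have hkk' : (k, b) ≠ (k', b) := by
        simp only [ne_eq, Prod.mk.injEq, and_true]
        intro hc2
        rw [Fin.ext_iff] at hc2
        simp [hk'] at hc2
        omega
      have hIio : Finset.Iio k = Finset.Iic k' := by
        ext l
        simp only [Finset.mem_Iio, Finset.mem_Iic, Fin.lt_def, Fin.le_def, hm, hk']
        omega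
      have hVh : (V * h) r (k, b) = 0 := by
        simp [Matrix.mul_apply, hh, hk0, ite_and]
      have hZH : (Z * H) r (k, b) = Z r (k, b) * s k + Z r (k', b) := by
        rw [Matrix.mul_apply]
        have hco : ∀ ia : Fin j × Fin p, Z r ia * H ia (k, b) =
            (if ia = (k, b) then Z r (k, b) * s k else 0) +
            (if ia = (k', b) then Z r (k', b) else 0) := by
          intro ia
          by_cases hia : ia = (k, b)
          · subst hia
            simp [hHdef, hkk', hm]
          · by_cases hia2 : ia = (k', b)
            · subst hia2
              simp [hHdef, hkk'.symm, hk', hm, hia,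
                  (show (⟨m, hmlt⟩ : Fin j) ≠ k from fun e => by rw [Fin.ext_iff] at e; simp at e; omega)]
            · have hc2 : ¬((ia.1 : ℕ) + 1 = (k : ℕ) ∧ ia.2 = b) := by
                rintro ⟨h1, h2⟩
                apply hia2
                refine Prod.ext (Fin.ext ?_) h2
                simp [hk']; omega
              simp [hHdef, hia, hia2, hc2]
        rw [Finset.sum_congr rfl fun ia _ => hco ia]
        rw [Finset.sum_add_distrib]
        simp
      rw [hIio]
      conv_rhs => rw [Matrix.add_apply, hVh, hZH]
      simp only [Matrix.add_apply, Matrix.smul_apply, smul_eq_mul]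
      simp [hZ]
      ring
  · intro i k a b hki
    have h1 : (i, a) ≠ (k, b) := by
      intro hcontra
      rw [Prod.mk.injEq] at hcontra
      exact absurd hcontra.1 (by intro hh'; subst hh'; exact lt_irrefl _ hki)
    have h2 : ¬((i : ℕ) + 1 = (k : ℕ) ∧ a = b) := by
      rintro ⟨h3, _⟩
      have : (k : ℕ) < (i : ℕ) := hki
      omega
    simp [hHdef, h1, h2]
  · intro i a b
    have h2 : ¬((i : ℕ) + 1 = (i : ℕ) ∧ a = b) := by rintro ⟨h3, _⟩; omega
    by_cases hab : a = b
    · subst hab; simp [hHdef, h2]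
    · have h1 : (i, a) ≠ (i, b) := by
        intro hcontra
        exact hab (congrArg Prod.snd hcontra)
      simp [hHdef, h1, h2, hab]
  · -- (iv)
    have h1 : (aeval F (∏ l : Fin j, (X - Polynomial.C (s l)))).mulVecLin ∘ₗ
        (Ring.inverse (aeval F (∏ l : Fin j, (X - Polynomial.C (s l))))).mulVecLin =
        LinearMap.id := by
      rw [← Matrix.mulVecLin_mul, Ring.mul_inverse_cancel _ hQ, Matrix.mulVecLin_one]
    have h2 : (Ring.inverse (aeval F (∏ l : Fin j, (X - Polynomial.C (s l))))).mulVecLin ∘ₗ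
        (aeval F (∏ l : Fin j, (X - Polynomial.C (s l)))).mulVecLin = LinearMap.id := by
      rw [← Matrix.mulVecLin_mul, Ring.inverse_mul_cancel _ hQ, Matrix.mulVecLin_one]
    set e : (Fin n → ℂ) ≃ₗ[ℂ] (Fin n → ℂ) := LinearEquiv.ofLinear
      (aeval F (∏ l : Fin j, (X - Polynomial.C (s l)))).mulVecLin
      (Ring.inverse (aeval F (∏ l : Fin j, (X - Polynomial.C (s l))))).mulVecLin h1 h2 with he
    have hco : Matrix.mulVecLin (aeval F (∏ l : Fin j, (X - Polynomial.C (s l)))) =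
        (e : (Fin n → ℂ) →ₗ[ℂ] (Fin n → ℂ)) := rfl
    rw [hco, Submodule.comap_equiv_eq_map_symm, Submodule.map_span, ← Set.range_comp]
    have hgen1 : (fun c : Fin j × Fin p => Zᵀ c) = fun kc : Fin j × Fin p =>
        polyColMap F (Ring.inverse (aeval F (∏ l : Fin j, (X - Polynomial.C (s l)))) * V)
          kc.2 (rr kc.1) := by
      funext kc
      funext r
      show Z r kc = _
      rw [hZ]
      show (Ring.inverse (P (Finset.Iic kc.1)) * V) r kc.2 = _
      rw [hZcol kc.1, polyColMap_apply]
      rfl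
    have hgen2 : (⇑e.symm ∘ fun kc : Fin j × Fin p => ((F ^ (kc.1 : ℕ)) * V)ᵀ kc.2) =
        fun kc : Fin j × Fin p =>
          polyColMap F (Ring.inverse (aeval F (∏ l : Fin j, (X - Polynomial.C (s l)))) * V)
            kc.2 (X ^ (kc.1 : ℕ)) := by
      funext kc
      have hsymm : ⇑e.symm = fun x =>
          (Ring.inverse (aeval F (∏ l : Fin j, (X - Polynomial.C (s l))))).mulVec x := by
        funext x
        rw [he]
        rfl
      show e.symm (((F ^ (kc.1 : ℕ)) * V)ᵀ kc.2) = _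
      rw [hsymm]
      show (Ring.inverse (aeval F (∏ l : Fin j, (X - Polynomial.C (s l))))).mulVec
        (((F ^ (kc.1 : ℕ)) * V)ᵀ kc.2) = _
      rw [hcolmul, polyColMap_apply]
      have hcp : Commute (Ring.inverse (aeval F (∏ l : Fin j, (X - Polynomial.C (s l)))))
          (F ^ (kc.1 : ℕ)) := by
        have := commute_ringInverse hQ (hcomm (∏ l : Fin j, (X - Polynomial.C (s l)))
          ((X : ℂ[X]) ^ (kc.1 : ℕ)))
        rwa [aeval_X_pow] at this
      rw [← Matrix.mul_assoc, hcp.eq, Matrix.mul_assoc, aeval_X_pow]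
    rw [hgen1]
    simp only [LinearEquiv.coe_coe]
    rw [hgen2]
    apply le_antisymm
    · rw [Submodule.span_le]
      rintro x ⟨⟨k, c⟩, rfl⟩
      refine mem_span_polyCols F _ c (rr k) (fun d : Fin j => (X : ℂ[X]) ^ (d : ℕ)) _ ?_ ?_
      · apply polyP1
        rw [Polynomial.degree_eq_natDegree (hrrmonic k).ne_zero, hrrdeg k]
        have hk := k.isLt
        exact_mod_cast (by omega : j - 1 - (k : ℕ) < j)
      · intro d
        exact ⟨(d, c), rfl⟩
    · rw [Submodule.span_le]
      rintro x ⟨⟨k, c⟩, rfl⟩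
      refine mem_span_polyCols F _ c ((X : ℂ[X]) ^ (k : ℕ)) rr _ ?_ ?_
      · refine polyP2 j rr ?_ (k : ℕ) k.isLt
        intro d hd
        refine ⟨⟨j - 1 - d, by omega⟩, hrrmonic _, ?_⟩
        rw [hrrdeg]
        simp only []
        omega
      · intro i
        exact ⟨(i, c), rfl⟩
end

section
/- Let F ∈ ℂ^{n×n}, 𝐯 ∈ ℂ^{n×p}, Z ∈ ℂ^{n×jp}, h ∈ ℂ^{p×jp}, and let H ∈ ℂ^{jp×jp} be block upper triangular with respect to the partition into p×p blocks, with i-th diagonal block s_i·I_p. Assume: [𝐯 Z] ∈ ℂ^{n×(j+1)p} has full column rank; F·Z = 𝐯·h + Z·H; every s_i has positive real part; and no s_i is an eigenvalue of F. Then, for any B ∈ ℂ^{n×m}, the Lyapunov equation Ỹ·H + Hᴴ·Ỹ − Zᴴ B Bᴴ Z − hᴴ h = 0 has a unique Hermitian solution Ỹ ∈ ℂ^{jp×jp}, and this solution is positive definite. -/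
open Matrix Filter
open scoped ComplexOrder ENNReal NNReal Topology

namespace Stmt6Aux

private def prodAsc {R : Type*} [Monoid R] (f : ℕ → R) : ℕ → R
  | 0 => 1
  | k+1 => prodAsc f k * f k

private lemma prodAsc_commute {R : Type*} [Monoid R] (f : ℕ → R)
    (hf : ∀ a b, Commute (f a) (f b)) (a k : ℕ) : Commute (f a) (prodAsc f k) := by
  induction k with
  | zero => exact Commute.one_right _
  | succ k ih => exact ih.mul_right (hf a k)

private lemma conjT_commute {ι : Type*} [Fintype ι] [DecidableEq ι] (f : ℕ → Matrix ι ι ℂ)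
    (hf : ∀ a b, Commute (f a) (f b)) (a b : ℕ) : Commute (f a)ᴴ (f b)ᴴ := by
  have := congrArg Matrix.conjTranspose (hf b a).eq
  simpa [Commute, SemiconjBy, Matrix.conjTranspose_mul] using this

private lemma prodAsc_conjTranspose {ι : Type*} [Fintype ι] [DecidableEq ι]
    (f : ℕ → Matrix ι ι ℂ) (hf : ∀ a b, Commute (f a) (f b)) (k : ℕ) :
    (prodAsc f k)ᴴ = prodAsc (fun i => (f i)ᴴ) k := by
  induction k with
  | zero => show (1 : Matrix ι ι ℂ)ᴴ = 1; simp
  | succ k ih =>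
      show (prodAsc f k * f k)ᴴ = prodAsc (fun i => (f i)ᴴ) k * (f k)ᴴ
      rw [Matrix.conjTranspose_mul, ih]
      exact (prodAsc_commute (fun i => (f i)ᴴ) (conjT_commute f hf) k k).eq

private lemma prodAsc_isUnit {ι : Type*} [Fintype ι] [DecidableEq ι] (f : ℕ → Matrix ι ι ℂ)
    (hf : ∀ a, IsUnit (f a)) (k : ℕ) : IsUnit (prodAsc f k) := by
  induction k with
  | zero => exact isUnit_one
  | succ k ih => exact ih.mul (hf k)

variable {j p : ℕ}

private lemma aux_isUnit (H : Matrix (Fin j × Fin p) (Fin j × Fin p) ℂ) (s : Fin j → ℂ)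
    (htri : ∀ (i k : Fin j) (a b : Fin p), k < i → H (i, a) (k, b) = 0)
    (hdiag : ∀ (i : Fin j) (a b : Fin p), H (i, a) (i, b) = if a = b then s i else 0)
    (lam : ℂ) (hne : ∀ i, s i ≠ lam) : IsUnit (H - lam • 1) := by
  rw [Matrix.isUnit_iff_isUnit_det, isUnit_iff_ne_zero]
  have hbt : (H - lam • 1).BlockTriangular (Prod.fst : Fin j × Fin p → Fin j) := by
    intro x y hxy
    obtain ⟨i, a⟩ := x; obtain ⟨k, b⟩ := y
    simp only [Matrix.sub_apply, Matrix.smul_apply, Matrix.one_apply, htri i k a b hxy]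
    have : (i, a) ≠ (k, b) := by
      intro hh; exact absurd (congrArg Prod.fst hh) (ne_of_gt hxy)
    simp [this]
  rw [hbt.det_fintype]
  refine Finset.prod_ne_zero_iff.2 fun k _ => ?_
  have hblock : (H - lam • 1).toSquareBlock Prod.fst k = (s k - lam) • (1 : Matrix _ _ ℂ) := by
    refine Matrix.ext fun x y => ?_
    obtain ⟨⟨i, a⟩, hi⟩ := x
    obtain ⟨⟨i', b⟩, hi'⟩ := y
    simp only at hi hi'
    subst hi; subst hi'
    by_cases hab : a = b
    · subst hab
      simp [Matrix.toSquareBlock_def, hdiag]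
    · have hne2 : ∀ (q : Fin j), ((q, a) : Fin j × Fin p) ≠ (q, b) :=
        fun q hh => hab (congrArg Prod.snd hh)
      simp [Matrix.toSquareBlock_def, hdiag, hab, Subtype.ext_iff, hne2]
  rw [hblock, Matrix.det_smul, Matrix.det_one, mul_one]
  exact pow_ne_zero _ (sub_ne_zero.2 (hne k))

private noncomputable def NN (H : Matrix (Fin j × Fin p) (Fin j × Fin p) ℂ) (s : Fin j → ℂ)
    (k : ℕ) : Matrix (Fin j × Fin p) (Fin j × Fin p) ℂ :=
  if h : k < j then s ⟨k, h⟩ • 1 - H else 1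

private lemma NN_commute (H : Matrix (Fin j × Fin p) (Fin j × Fin p) ℂ) (s : Fin j → ℂ)
    (a b : ℕ) : Commute (NN H s a) (NN H s b) := by
  unfold NN
  split_ifs with h1 h2 h2
  · show _ * _ = _ * _
    simp only [Matrix.sub_mul, Matrix.mul_sub, Matrix.smul_mul, Matrix.mul_smul, Matrix.one_mul,
      Matrix.mul_one, smul_smul]
    module
  · exact Commute.one_right _
  · exact Commute.one_left _
  · exact Commute.one_right _

private lemma NN_kill (H : Matrix (Fin j × Fin p) (Fin j × Fin p) ℂ) (s : Fin j → ℂ)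
    (htri : ∀ (i k : Fin j) (a b : Fin p), k < i → H (i, a) (k, b) = 0)
    (hdiag : ∀ (i : Fin j) (a b : Fin p), H (i, a) (i, b) = if a = b then s i else 0) :
    ∀ (k : ℕ) (v : Fin j × Fin p → ℂ),
      (∀ (i : Fin j) (a : Fin p), v (i, a) ≠ 0 → (i : ℕ) < k) →
      prodAsc (NN H s) k *ᵥ v = 0 := by
  intro k
  induction k with
  | zero =>
      intro v hv
      have : v = 0 := by
        funext x
        obtain ⟨i, a⟩ := x
        by_contra hx
        exact absurd (hv i a hx) (Nat.not_lt_zero _)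
      simp [this]
  | succ k ih =>
      intro v hv
      show (prodAsc (NN H s) k * NN H s k) *ᵥ v = 0
      rw [← Matrix.mulVec_mulVec]
      apply ih
      intro i a hia
      by_contra hik
      push_neg at hik  -- k ≤ i
      apply hia
      by_cases hkj : k < j
      · have hNk : NN H s k = s ⟨k, hkj⟩ • 1 - H := dif_pos hkj
        rw [hNk]
        simp only [Matrix.mulVec, dotProduct]
        apply Finset.sum_eq_zero
        intro x _
        obtain ⟨l, b⟩ := x
        by_cases hvx : v (l, b) = 0
        · simp [hvx]
        · have hlk : (l : ℕ) < k + 1 := hv l b hvx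
          have hli : (l : ℕ) ≤ (i : ℕ) := le_trans (Nat.lt_succ_iff.1 hlk) hik
          rcases lt_or_eq_of_le hli with hlt | heq
          · have hH : H (i, a) (l, b) = 0 := htri i l a b (by exact hlt)
            have hne : ((i, a) : Fin j × Fin p) ≠ (l, b) := by
              intro hh
              exact absurd (congrArg Prod.fst hh) (by simp [Fin.ext_iff]; omega)
            simp [Matrix.sub_apply, Matrix.smul_apply, Matrix.one_apply, hH, hne]
          · have hik2 : (i : ℕ) = k := le_antisymm (by omega) hik
            have hil : i = l := Fin.ext heq.symm
            have hik3 : (⟨k, hkj⟩ : Fin j) = i := Fin.ext hik2.symm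
            subst hil
            rw [← hik3]
            simp only [Matrix.sub_apply, Matrix.smul_apply, Matrix.one_apply, hdiag]
            by_cases hab : a = b
            · subst hab; simp
            · have : ((i, a) : Fin j × Fin p) ≠ (i, b) := fun hh => hab (congrArg Prod.snd hh)
              simp [hab, this]
      · exact absurd (lt_of_lt_of_le i.isLt (le_of_not_gt hkj)) (not_lt.2 hik)

private lemma NN_prod_zero (H : Matrix (Fin j × Fin p) (Fin j × Fin p) ℂ) (s : Fin j → ℂ)
    (htri : ∀ (i k : Fin j) (a b : Fin p), k < i → H (i, a) (k, b) = 0)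
    (hdiag : ∀ (i : Fin j) (a b : Fin p), H (i, a) (i, b) = if a = b then s i else 0) :
    prodAsc (NN H s) j = 0 := by
  have h0 : ∀ v, prodAsc (NN H s) j *ᵥ v = 0 :=
    fun v => NN_kill H s htri hdiag j v (fun i a _ => i.isLt)
  ext x y
  have := congrFun (h0 (Pi.single y 1)) x
  simpa [Matrix.mulVec_single] using this

private lemma NN_eigen (H : Matrix (Fin j × Fin p) (Fin j × Fin p) ℂ) (s : Fin j → ℂ)
    (htri : ∀ (i k : Fin j) (a b : Fin p), k < i → H (i, a) (k, b) = 0)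
    (hdiag : ∀ (i : Fin j) (a b : Fin p), H (i, a) (i, b) = if a = b then s i else 0)
    (x : Fin j × Fin p → ℂ) (hx : x ≠ 0) :
    ∃ (k : Fin j) (y : Fin j × Fin p → ℂ), y ≠ 0 ∧ H *ᵥ y = s k • y ∧
      ∀ (U : Submodule ℂ (Fin j × Fin p → ℂ)), x ∈ U → (∀ u ∈ U, H *ᵥ u ∈ U) → y ∈ U := by
  have hzero := NN_prod_zero H s htri hdiag
  have main : ∀ (t : ℕ) (x : Fin j × Fin p → ℂ), x ≠ 0 → prodAsc (NN H s) t *ᵥ x = 0 →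
      ∃ (k : Fin j) (y : Fin j × Fin p → ℂ), y ≠ 0 ∧ H *ᵥ y = s k • y ∧
        ∀ (U : Submodule ℂ (Fin j × Fin p → ℂ)), x ∈ U → (∀ u ∈ U, H *ᵥ u ∈ U) → y ∈ U := by
    intro t
    induction t with
    | zero =>
        intro x hx h0
        rw [show prodAsc (NN H s) 0 = 1 from rfl, Matrix.one_mulVec] at h0
        exact absurd h0 hx
    | succ t ih =>
        intro x hx h0
        rw [show prodAsc (NN H s) (t+1) = prodAsc (NN H s) t * NN H s t from rfl,
          ← Matrix.mulVec_mulVec] at h0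
        set z := NN H s t *ᵥ x with hzdef
        by_cases hz : z = 0
        · by_cases htj : t < j
          · refine ⟨⟨t, htj⟩, x, hx, ?_, fun U hxU _ => hxU⟩
            have : (s ⟨t, htj⟩ • (1 : Matrix _ _ ℂ) - H) *ᵥ x = 0 := by
              rw [hzdef] at hz; rwa [show NN H s t = s ⟨t, htj⟩ • 1 - H from dif_pos htj] at hz
            rw [Matrix.sub_mulVec, sub_eq_zero, Matrix.smul_mulVec, Matrix.one_mulVec]
              at this
            exact this.symm
          · rw [hzdef, show NN H s t = 1 from dif_neg htj, Matrix.one_mulVec] at hz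
            exact absurd hz hx
        · obtain ⟨k, y, hy, heig, hU⟩ := ih z hz h0
          refine ⟨k, y, hy, heig, fun U hxU hHU => ?_⟩
          apply hU U ?_ hHU
          rw [hzdef]
          by_cases htj : t < j
          · rw [show NN H s t = s ⟨t, htj⟩ • 1 - H from dif_pos htj, Matrix.sub_mulVec,
              Matrix.smul_mulVec, Matrix.one_mulVec]
            exact U.sub_mem (U.smul_mem _ hxU) (hHU x hxU)
          · rw [show NN H s t = 1 from dif_neg htj, Matrix.one_mulVec]
            exact hxU
  exact main j x hx (by rw [hzero, Matrix.zero_mulVec])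


private lemma lyap_unique (H : Matrix (Fin j × Fin p) (Fin j × Fin p) ℂ) (s : Fin j → ℂ)
    (htri : ∀ (i k : Fin j) (a b : Fin p), k < i → H (i, a) (k, b) = 0)
    (hdiag : ∀ (i : Fin j) (a b : Fin p), H (i, a) (i, b) = if a = b then s i else 0)
    (hre : ∀ i, 0 < (s i).re)
    (Y : Matrix (Fin j × Fin p) (Fin j × Fin p) ℂ) (hY : Y * H + Hᴴ * Y = 0) : Y = 0 := by
  classical
  set g : ℕ → Matrix (Fin j × Fin p) (Fin j × Fin p) ℂ :=
    fun k => if h : k < j then H - (-(starRingEnd ℂ (s ⟨k, h⟩))) • 1 else 1 with hg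
  have hYH : Y * H = -(Hᴴ * Y) := by
    rw [← add_eq_zero_iff_eq_neg] at *; exact hY
  have key : ∀ k, Y * prodAsc g k = prodAsc (fun i => (NN H s i)ᴴ) k * Y := by
    intro k
    induction k with
    | zero => simp [prodAsc]
    | succ k ih =>
        show Y * (prodAsc g k * g k) = prodAsc (fun i => (NN H s i)ᴴ) k * (NN H s k)ᴴ * Y
        rw [← Matrix.mul_assoc, ih, Matrix.mul_assoc, Matrix.mul_assoc]
        congr 1
        by_cases hkj : k < j
        · rw [hg]
          simp only [dif_pos hkj]
          rw [show NN H s k = s ⟨k, hkj⟩ • 1 - H from dif_pos hkj]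
          rw [Matrix.conjTranspose_sub, Matrix.conjTranspose_smul, Matrix.conjTranspose_one]
          rw [Matrix.mul_sub, hYH]
          simp only [Matrix.mul_smul, Matrix.mul_one, Matrix.smul_mul, Matrix.one_mul,
            Matrix.sub_mul, neg_smul, neg_neg, sub_neg_eq_add, RCLike.star_def,
            Matrix.mul_neg, Matrix.neg_mul, smul_smul]
          module
        · rw [hg]
          simp only [dif_neg hkj]
          rw [show NN H s k = 1 from dif_neg hkj]
          simp
  have hzero : prodAsc (fun i => (NN H s i)ᴴ) j = 0 := by
    rw [← prodAsc_conjTranspose (NN H s) (NN_commute H s) j, NN_prod_zero H s htri hdiag]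
    simp
  have hY0 : Y * prodAsc g j = 0 := by rw [key j, hzero, Matrix.zero_mul]
  have hunit : IsUnit (prodAsc g j) := by
    apply prodAsc_isUnit
    intro a
    rw [hg]
    by_cases haj : a < j
    · simp only [dif_pos haj]
      apply aux_isUnit H s htri hdiag
      intro i hi
      have h1 : 0 < (s i).re := hre i
      have h2 : (-(starRingEnd ℂ (s ⟨a, haj⟩))).re = -(s ⟨a, haj⟩).re := by
        simp [Complex.neg_re, Complex.conj_re]
      rw [hi] at h1
      rw [h2] at h1
      exact absurd h1 (by simpa using (hre ⟨a, haj⟩).le)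
    · simp only [dif_neg haj]; exact isUnit_one
  obtain ⟨u, hu⟩ := hunit
  calc Y = Y * (prodAsc g j * ↑u⁻¹) := by rw [← hu, Units.mul_inv, Matrix.mul_one]
  _ = Y * prodAsc g j * ↑u⁻¹ := by rw [Matrix.mul_assoc]
  _ = 0 := by rw [hY0, Matrix.zero_mul]

section Extra
variable {ι : Type*} [Fintype ι] [DecidableEq ι]
variable {j p : ℕ}


private lemma stein_transform (H Y C G : Matrix ι ι ℂ) (hG : (H + 1) * G = 1)
    (hY : Y * H + Hᴴ * Y = C) :
    Y - ((H - 1) * G)ᴴ * Y * ((H - 1) * G) = Gᴴ * ((2:ℂ) • C) * G := by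
  have hGH : Gᴴ * (H + 1)ᴴ = 1 := by
    rw [← Matrix.conjTranspose_mul, hG, Matrix.conjTranspose_one]
  have h1 : Y = Gᴴ * ((H + 1)ᴴ * Y * (H + 1)) * G := by
    calc Y = (Gᴴ * (H + 1)ᴴ) * Y * ((H + 1) * G) := by rw [hGH, hG, Matrix.one_mul, Matrix.mul_one]
    _ = Gᴴ * ((H + 1)ᴴ * Y * (H + 1)) * G := by
        simp only [Matrix.mul_assoc]
  have h2 : ((H - 1) * G)ᴴ * Y * ((H - 1) * G) = Gᴴ * ((H - 1)ᴴ * Y * (H - 1)) * G := by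
    rw [Matrix.conjTranspose_mul]
    simp only [Matrix.mul_assoc]
  have h3 : (H + 1)ᴴ * Y * (H + 1) - (H - 1)ᴴ * Y * (H - 1) = (2:ℂ) • C := by
    rw [← hY]
    simp only [Matrix.conjTranspose_add, Matrix.conjTranspose_sub, Matrix.conjTranspose_one,
      Matrix.add_mul, Matrix.mul_add, Matrix.sub_mul, Matrix.mul_sub, Matrix.one_mul,
      Matrix.mul_one, smul_add]
    rw [two_smul, two_smul]
    abel
  rw [h2]
  nth_rewrite 1 [h1]
  rw [← Matrix.sub_mul, ← Matrix.mul_sub, h3]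

private lemma telescope (A Y Q : Matrix ι ι ℂ) (hQ : Q = Y - Aᴴ * Y * A) (x : ι → ℂ) :
    ∀ N : ℕ, star x ⬝ᵥ (Y *ᵥ x) =
      (∑ k ∈ Finset.range N, star (A ^ k *ᵥ x) ⬝ᵥ (Q *ᵥ (A ^ k *ᵥ x))) +
        star (A ^ N *ᵥ x) ⬝ᵥ (Y *ᵥ (A ^ N *ᵥ x)) := by
  intro N
  induction N with
  | zero => simp
  | succ N ih =>
      rw [Finset.sum_range_succ, ih]
      have key : star (A ^ N *ᵥ x) ⬝ᵥ (Y *ᵥ (A ^ N *ᵥ x)) =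
          star (A ^ N *ᵥ x) ⬝ᵥ (Q *ᵥ (A ^ N *ᵥ x)) +
            star (A ^ (N+1) *ᵥ x) ⬝ᵥ (Y *ᵥ (A ^ (N+1) *ᵥ x)) := by
        have hAv : A ^ (N+1) *ᵥ x = A *ᵥ (A ^ N *ᵥ x) := by
          rw [Matrix.mulVec_mulVec, ← pow_succ']
        rw [hAv]
        have : star (A *ᵥ (A ^ N *ᵥ x)) ⬝ᵥ (Y *ᵥ (A *ᵥ (A ^ N *ᵥ x))) =
            star (A ^ N *ᵥ x) ⬝ᵥ ((Aᴴ * Y * A) *ᵥ (A ^ N *ᵥ x)) := by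
          rw [Matrix.star_mulVec, ← Matrix.dotProduct_mulVec, Matrix.mulVec_mulVec,
            Matrix.mulVec_mulVec]
        rw [this, hQ, Matrix.sub_mulVec, dotProduct_sub]
        ring
      rw [key]
      ring


private lemma pow_entry_tendsto (A : Matrix ι ι ℂ) (r : ℝ≥0) (hr : r < 1)
    (hspec : ∀ μ ∈ spectrum ℂ A, ‖μ‖₊ ≤ r) (i k : ι) :
    Tendsto (fun N => (A ^ N) i k) atTop (𝓝 0) := by
  letI := Matrix.linftyOpNormedRing (n := ι) (α := ℂ)
  letI := Matrix.linftyOpNormedAlgebra (R := ℂ) (n := ι) (α := ℂ)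
  letI : CompleteSpace (Matrix ι ι ℂ) := FiniteDimensional.complete ℂ _
  have hentry : ∀ (M : Matrix ι ι ℂ) (i k : ι), ‖M i k‖₊ ≤ ‖M‖₊ := by
    intro M i k
    rw [Matrix.linfty_opNNNorm_def]
    exact le_trans
      (Finset.single_le_sum (f := fun j => ‖M i j‖₊) (fun _ _ => zero_le) (Finset.mem_univ k))
      (Finset.le_sup (f := fun i => ∑ j : ι, ‖M i j‖₊) (Finset.mem_univ i))
  have hsr : spectralRadius ℂ A ≤ (r : ℝ≥0∞) := by
    refine iSup₂_le fun μ hμ => ?_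
    exact_mod_cast ENNReal.coe_le_coe.2 (hspec μ hμ)
  set r' : ℝ≥0 := (r + 1) / 2 with hr'
  have hrr' : r < r' := by
    rw [hr']
    rw [lt_div_iff₀ (by norm_num)]
    calc r * 2 = r + r := by ring
    _ < r + 1 := by exact add_lt_add_right hr _
  have hr'1 : r' < 1 := by
    rw [hr']
    rw [div_lt_iff₀ (by norm_num)]
    calc r + 1 < 1 + 1 := add_lt_add_left hr _
    _ = 1 * 2 := by ring
  have hgel := spectrum.pow_nnnorm_pow_one_div_tendsto_nhds_spectralRadius A
  have hlt : spectralRadius ℂ A < (r' : ℝ≥0∞) :=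
    lt_of_le_of_lt hsr (by exact_mod_cast hrr')
  have hev : ∀ᶠ N : ℕ in atTop, (‖A ^ N‖₊ : ℝ≥0∞) ^ (1 / (N:ℝ)) < (r' : ℝ≥0∞) :=
    hgel.eventually_lt_const hlt
  have hev2 : ∀ᶠ N in atTop, ‖(A ^ N) i k‖ ≤ ((r' : ℝ)) ^ N := by
    filter_upwards [hev, eventually_ge_atTop 1] with N hN hN1
    have hNne : (N : ℝ) ≠ 0 := by positivity
    have hpow : (‖A ^ N‖₊ : ℝ≥0∞) < (r' : ℝ≥0∞) ^ (N : ℕ) := by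
      have := ENNReal.rpow_lt_rpow hN (by positivity : (0:ℝ) < (N:ℝ))
      rwa [← ENNReal.rpow_mul, one_div, inv_mul_cancel₀ hNne, ENNReal.rpow_one,
        ENNReal.rpow_natCast] at this
    have hpow2 : ‖A ^ N‖₊ < r' ^ N := by
      rw [← ENNReal.coe_pow, ENNReal.coe_lt_coe] at hpow
      exact hpow
    calc ‖(A ^ N) i k‖ ≤ ‖A ^ N‖ := by exact_mod_cast hentry (A ^ N) i k
    _ ≤ (r' : ℝ) ^ N := by
        have := hpow2.le
        exact_mod_cast this
  refine squeeze_zero_norm' hev2 ?_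
  exact tendsto_pow_atTop_nhds_zero_of_lt_one (by positivity) (by exact_mod_cast hr'1)


private lemma isUnit_left {ι : Type*} [Fintype ι] [DecidableEq ι] (M N : Matrix ι ι ℂ)
    (h : M * N = 1) : IsUnit M := by
  rw [Matrix.isUnit_iff_isUnit_det]
  exact IsUnit.of_mul_eq_one N.det (by rw [← Matrix.det_mul, h, Matrix.det_one])

private lemma cayley_spec (H : Matrix (Fin j × Fin p) (Fin j × Fin p) ℂ) (s : Fin j → ℂ)
    (hre : ∀ i, 0 < (s i).re)
    (hunit : ∀ lam : ℂ, (∀ i, s i ≠ lam) → IsUnit (H - lam • 1))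
    (G : Matrix (Fin j × Fin p) (Fin j × Fin p) ℂ)
    (hG : (H + 1) * G = 1) (hG2 : G * (H + 1) = 1) :
    ∃ r : ℝ≥0, r < 1 ∧ ∀ μ ∈ spectrum ℂ ((H - 1) * G), ‖μ‖₊ ≤ r := by
  classical
  have hs1 : ∀ i, s i + 1 ≠ 0 := by
    intro i hi
    have : (s i).re + 1 = 0 := by
      have := congrArg Complex.re hi
      simpa using this
    linarith [hre i]
  set cay : Fin j → ℂ := fun i => (s i - 1) / (s i + 1) with hcay
  have hcaylt : ∀ i, ‖cay i‖₊ < 1 := by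
    intro i
    rw [hcay]
    have habs : ‖s i - 1‖ < ‖s i + 1‖ := by
      have hsq : ‖s i - 1‖ ^ 2 < ‖s i + 1‖ ^ 2 := by
        rw [Complex.sq_norm, Complex.sq_norm, Complex.normSq_apply, Complex.normSq_apply]
        simp only [Complex.sub_re, Complex.sub_im, Complex.add_re, Complex.add_im,
          Complex.one_re, Complex.one_im]
        nlinarith [hre i]
      exact lt_of_pow_lt_pow_left₀ 2 (norm_nonneg _) hsq
    have : ‖(s i - 1) / (s i + 1)‖ < 1 := by
      rw [norm_div, div_lt_one (by simpa using
        (norm_pos_iff.2 (hs1 i)))]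
      simpa using habs
    simpa [← NNReal.coe_lt_coe] using this
  refine ⟨Finset.univ.sup fun i => ‖cay i‖₊, ?_, ?_⟩
  · exact (Finset.sup_lt_iff (by norm_num : (⊥ : ℝ≥0) < 1)).2 fun i _ => hcaylt i
  · intro μ hμ
    by_contra hgt
    push_neg at hgt
    have hμne : ∀ i, μ ≠ cay i := by
      intro i hi
      rw [hi] at hgt
      exact absurd (Finset.le_sup (f := fun i => ‖cay i‖₊) (Finset.mem_univ i)) (not_le.2 hgt)
    rw [spectrum.mem_iff] at hμ
    apply hμ
    have hGu : IsUnit G := isUnit_left G (H + 1) hG2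
    have halg : (algebraMap ℂ (Matrix (Fin j × Fin p) (Fin j × Fin p) ℂ)) μ = μ • 1 :=
      Algebra.algebraMap_eq_smul_one μ
    by_cases hμ1 : μ = 1
    · subst hμ1
      have h2G : (1 : ℂ) • 1 - (H - 1) * G = ((2:ℂ) • 1) * G := by
        calc (1 : ℂ) • 1 - (H - 1) * G = (H + 1) * G - (H - 1) * G := by
              rw [one_smul]; nth_rewrite 1 [← hG]; rfl
        _ = ((H + 1) - (H - 1)) * G := (Matrix.sub_mul _ _ _).symm
        _ = ((2:ℂ) • 1) * G := by
            congr 1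
            rw [two_smul]
            abel
      rw [halg, h2G]
      refine IsUnit.mul ?_ hGu
      exact isUnit_left _ (((2:ℂ)⁻¹) • 1) (by
        rw [Matrix.smul_mul, Matrix.mul_smul, smul_smul, Matrix.one_mul]
        norm_num)
    · set lam : ℂ := (1 + μ) / (1 - μ) with hlam
      have h1μ : (1:ℂ) - μ ≠ 0 := fun hh => hμ1 (by linear_combination -hh)
      have hslam : ∀ i, s i ≠ lam := by
        intro i hi
        apply hμne i
        show μ = (s i - 1) / (s i + 1)
        rw [eq_div_iff (hs1 i)]
        rw [hlam] at hi
        have hi2 : s i * (1 - μ) = 1 + μ := by rw [hi]; field_simp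
        linear_combination -hi2
      have hkey : μ • (1 : Matrix (Fin j × Fin p) (Fin j × Fin p) ℂ) - (H - 1) * G =
          (((μ - 1) • 1) * (H - lam • 1)) * G := by
        have hscal : (μ - 1) * lam = -(μ + 1) := by
          rw [hlam, mul_div_assoc', div_eq_iff h1μ]; ring
        calc μ • (1 : Matrix (Fin j × Fin p) (Fin j × Fin p) ℂ) - (H - 1) * G
            = μ • ((H + 1) * G) - (H - 1) * G := by rw [hG]
        _ = (μ • (H + 1) - (H - 1)) * G := by rw [← Matrix.smul_mul, ← Matrix.sub_mul]
        _ = ((μ - 1) • H + (μ + 1) • 1) * G := by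
            congr 1
            module
        _ = (((μ - 1) • 1) * (H - lam • 1)) * G := by
            congr 1
            rw [Matrix.smul_mul, Matrix.one_mul, smul_sub, smul_smul, hscal]
            module
      rw [halg, hkey]
      refine IsUnit.mul (IsUnit.mul ?_ (hunit lam hslam)) hGu
      exact isUnit_left _ ((μ - 1)⁻¹ • 1) (by
        rw [Matrix.smul_mul, Matrix.mul_smul, smul_smul, Matrix.one_mul,
          mul_inv_cancel₀ (sub_ne_zero.2 hμ1), one_smul])
end Extra

end Stmt6Aux

open Stmt6Aux

/-- Block version: given a block rational Arnoldi decomposition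
`F·Z = V·h + Z·H` with `[V Z]` of full column rank and `H` block upper
triangular with diagonal blocks `s_i·I_p`, where each `s i` has positive real
part and is not an eigenvalue of `F`, the Lyapunov equation
`Yt·H + Hᴴ·Yt − ZᴴBBᴴZ − hᴴh = 0` has a unique Hermitian solution, and it is
positive definite. -/
theorem stmt6 (n p j m : ℕ)
    (F : Matrix (Fin n) (Fin n) ℂ) (V : Matrix (Fin n) (Fin p) ℂ)
    (Z : Matrix (Fin n) (Fin j × Fin p) ℂ)
    (h : Matrix (Fin p) (Fin j × Fin p) ℂ)
    (H : Matrix (Fin j × Fin p) (Fin j × Fin p) ℂ) (s : Fin j → ℂ)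
    (htri : ∀ (i k : Fin j) (a b : Fin p), k < i → H (i, a) (k, b) = 0)
    (hdiag : ∀ (i : Fin j) (a b : Fin p),
      H (i, a) (i, b) = if a = b then s i else 0)
    (hrank : LinearIndependent ℂ
      (fun c : Fin p ⊕ (Fin j × Fin p) => (fromCols V Z)ᵀ c))
    (hbrad : F * Z = V * h + Z * H)
    (hre : ∀ i, 0 < (s i).re) (hspec : ∀ i, s i ∉ spectrum ℂ F)
    (B : Matrix (Fin n) (Fin m) ℂ) :
    ∃ Yt : Matrix (Fin j × Fin p) (Fin j × Fin p) ℂ,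
      (Yt.IsHermitian ∧ Yt * H + Hᴴ * Yt - Zᴴ * B * Bᴴ * Z - hᴴ * h = 0 ∧
        Yt.PosDef) ∧
      ∀ Y' : Matrix (Fin j × Fin p) (Fin j × Fin p) ℂ,
        Y'.IsHermitian ∧ Y' * H + Hᴴ * Y' - Zᴴ * B * Bᴴ * Z - hᴴ * h = 0 →
          Y' = Yt := by
  classical
  set C : Matrix (Fin j × Fin p) (Fin j × Fin p) ℂ := Zᴴ * B * Bᴴ * Z + hᴴ * h with hCdef
  set L : Matrix (Fin j × Fin p) (Fin j × Fin p) ℂ →ₗ[ℂ]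
      Matrix (Fin j × Fin p) (Fin j × Fin p) ℂ :=
    { toFun := fun Y => Y * H + Hᴴ * Y
      map_add' := by
        intro X Y
        simp only [Matrix.add_mul, Matrix.mul_add]
        abel
      map_smul' := by
        intro c Y
        simp only [Matrix.smul_mul, Matrix.mul_smul, RingHom.id_apply, smul_add] } with hLdef
  have hLapp : ∀ Y, L Y = Y * H + Hᴴ * Y := fun _ => rfl
  have hinj : Function.Injective L := by
    intro a b hab
    have h0 : L (a - b) = 0 := by rw [map_sub, hab, sub_self]
    rw [hLapp] at h0
    have := lyap_unique H s htri hdiag hre (a - b) h0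
    exact sub_eq_zero.1 this
  obtain ⟨Yt, hYt⟩ := (LinearMap.injective_iff_surjective).1 hinj C
  have hYtEq : Yt * H + Hᴴ * Yt = C := hYt
  have hCherm : Cᴴ = C := by
    rw [hCdef]
    simp only [Matrix.conjTranspose_add, Matrix.conjTranspose_mul,
      Matrix.conjTranspose_conjTranspose, Matrix.mul_assoc]
  have hherm : Yt.IsHermitian := by
    apply hinj
    rw [hLapp, hLapp]
    have h1 : Ytᴴ * H + Hᴴ * Ytᴴ = (Yt * H + Hᴴ * Yt)ᴴ := by
      simp only [Matrix.conjTranspose_add, Matrix.conjTranspose_mul,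
        Matrix.conjTranspose_conjTranspose]
      abel
    rw [h1, hYtEq]
    exact hCherm
  
  have hsplit : ∀ v : Fin j × Fin p → ℂ, star v ⬝ᵥ (C *ᵥ v) =
      star ((Bᴴ * Z) *ᵥ v) ⬝ᵥ ((Bᴴ * Z) *ᵥ v) + star (h *ᵥ v) ⬝ᵥ (h *ᵥ v) := by
    intro v
    have hDD : C = (Bᴴ * Z)ᴴ * (Bᴴ * Z) + hᴴ * h := by
      rw [hCdef]
      congr 1
      simp only [Matrix.conjTranspose_mul, Matrix.conjTranspose_conjTranspose, Matrix.mul_assoc]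
    rw [hDD, Matrix.add_mulVec, dotProduct_add]
    congr 1
    · rw [← Matrix.mulVec_mulVec, Matrix.dotProduct_mulVec, ← Matrix.star_mulVec]
    · rw [← Matrix.mulVec_mulVec, Matrix.dotProduct_mulVec, ← Matrix.star_mulVec]
  have hCnn : ∀ v : Fin j × Fin p → ℂ, 0 ≤ star v ⬝ᵥ (C *ᵥ v) := by
    intro v
    rw [hsplit v]
    exact add_nonneg (dotProduct_star_self_nonneg _) (dotProduct_star_self_nonneg _)
  have hself : ∀ x : Fin j × Fin p → ℂ, star (star x ⬝ᵥ (Yt *ᵥ x)) = star x ⬝ᵥ (Yt *ᵥ x) := by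
    intro x
    simp only [dotProduct, Matrix.mulVec, star_sum, star_mul', Pi.star_apply,
      star_star, Finset.mul_sum, Finset.sum_mul]
    rw [Finset.sum_comm]
    refine Finset.sum_congr rfl fun i _ => Finset.sum_congr rfl fun k _ => ?_
    rw [show star (Yt k i) = Yt i k from hherm.apply i k]
    ring
  have hpd : Yt.PosDef := by
    cases isEmpty_or_nonempty (Fin j × Fin p) with
    | inl hie =>
        exact Matrix.PosDef.of_dotProduct_mulVec_pos hherm (fun x hx => absurd (funext fun i => hie.elim i) hx)
    | inr hne =>
      have hsne : ∀ i : Fin j, s i ≠ (-1 : ℂ) := by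
        intro i hi
        have h2 := hre i
        rw [hi] at h2
        norm_num at h2
      have hH1 : IsUnit (H + 1) := by
        have := aux_isUnit H s htri hdiag (-1) hsne
        rwa [neg_smul, one_smul, sub_neg_eq_add] at this
      have hGdet : IsUnit (H + 1).det := (Matrix.isUnit_iff_isUnit_det _).1 hH1
      set G := (H + 1)⁻¹ with hGdef
      have hG1 : (H + 1) * G = 1 := Matrix.mul_nonsing_inv _ hGdet
      have hG2 : G * (H + 1) = 1 := Matrix.nonsing_inv_mul _ hGdet
      set A := (H - 1) * G with hAdef
      have hQ : Yt - Aᴴ * Yt * A = Gᴴ * ((2:ℂ) • C) * G := stein_transform H Yt C G hG1 hYtEq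
      obtain ⟨r, hr1, hrspec⟩ :=
        cayley_spec H s hre (aux_isUnit H s htri hdiag) G hG1 hG2
      have hpow : ∀ i k : Fin j × Fin p, Filter.Tendsto (fun N => (A ^ N) i k)
          Filter.atTop (nhds 0) := fun i k => pow_entry_tendsto A r hr1 hrspec i k
      have hq2 : ∀ v : Fin j × Fin p → ℂ, star v ⬝ᵥ ((Yt - Aᴴ * Yt * A) *ᵥ v) =
          2 * (star (G *ᵥ v) ⬝ᵥ (C *ᵥ (G *ᵥ v))) := by
        intro v
        rw [hQ, ← Matrix.mulVec_mulVec, ← Matrix.mulVec_mulVec, Matrix.dotProduct_mulVec,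
          ← Matrix.star_mulVec, Matrix.smul_mulVec, dotProduct_smul]
        simp [smul_eq_mul]
      have hqnn : ∀ v : Fin j × Fin p → ℂ, 0 ≤ star v ⬝ᵥ ((Yt - Aᴴ * Yt * A) *ᵥ v) := by
        intro v
        rw [hq2 v]
        exact mul_nonneg (by norm_num) (hCnn _)
      have htel := telescope A Yt (Yt - Aᴴ * Yt * A) rfl
      have hvlim : ∀ (x : Fin j × Fin p → ℂ) (i : Fin j × Fin p),
          Filter.Tendsto (fun N => (A ^ N *ᵥ x) i) Filter.atTop (nhds 0) := by
        intro x i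
        have := tendsto_finset_sum (Finset.univ : Finset (Fin j × Fin p))
          (fun k _ => ((hpow i k).mul_const (x k)))
        simpa [Matrix.mulVec, dotProduct] using this
      have htail : ∀ x : Fin j × Fin p → ℂ,
          Filter.Tendsto (fun N => star (A ^ N *ᵥ x) ⬝ᵥ (Yt *ᵥ (A ^ N *ᵥ x)))
            Filter.atTop (nhds 0) := by
        intro x
        have h1 : ∀ i : Fin j × Fin p, Filter.Tendsto
            (fun N => (star (A ^ N *ᵥ x)) i * ((Yt *ᵥ (A ^ N *ᵥ x)) i))
            Filter.atTop (nhds 0) := by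
          intro i
          have hstar : Filter.Tendsto (fun N => (star (A ^ N *ᵥ x)) i)
              Filter.atTop (nhds 0) := by
            have hcont := (hvlim x i).star
            simpa using hcont
          have hmv : Filter.Tendsto (fun N => (Yt *ᵥ (A ^ N *ᵥ x)) i)
              Filter.atTop (nhds 0) := by
            have := tendsto_finset_sum (Finset.univ : Finset (Fin j × Fin p))
              (fun k _ => ((hvlim x k).const_mul (Yt i k)))
            simpa [Matrix.mulVec, dotProduct] using this
          simpa using hstar.mul hmv
        have := tendsto_finset_sum (Finset.univ : Finset (Fin j × Fin p)) (fun i _ => h1 i)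
        simpa [dotProduct] using this
      have hpsd : ∀ x : Fin j × Fin p → ℂ, 0 ≤ star x ⬝ᵥ (Yt *ᵥ x) := by
        intro x
        have him : (star x ⬝ᵥ (Yt *ᵥ x)).im = 0 := by
          have h2 := congrArg Complex.im (hself x)
          simp only [Complex.star_def, Complex.conj_im] at h2
          linarith
        have hrege : ∀ N, (star (A ^ N *ᵥ x) ⬝ᵥ (Yt *ᵥ (A ^ N *ᵥ x))).re ≤
            (star x ⬝ᵥ (Yt *ᵥ x)).re := by
          intro N
          have ht := htel x N
          have h3 : (star x ⬝ᵥ (Yt *ᵥ x)).re =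
              (∑ k ∈ Finset.range N,
                star (A ^ k *ᵥ x) ⬝ᵥ ((Yt - Aᴴ * Yt * A) *ᵥ (A ^ k *ᵥ x))).re +
              (star (A ^ N *ᵥ x) ⬝ᵥ (Yt *ᵥ (A ^ N *ᵥ x))).re := by
            rw [ht, Complex.add_re]
          rw [h3]
          have hsumnn : 0 ≤ (∑ k ∈ Finset.range N,
              star (A ^ k *ᵥ x) ⬝ᵥ ((Yt - Aᴴ * Yt * A) *ᵥ (A ^ k *ᵥ x))).re := by
            rw [Complex.re_sum]
            apply Finset.sum_nonneg
            intro k _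
            have h4 := hqnn (A ^ k *ᵥ x)
            rw [Complex.le_def] at h4
            simpa using h4.1
          linarith
        have hrelim : Filter.Tendsto
            (fun N => (star (A ^ N *ᵥ x) ⬝ᵥ (Yt *ᵥ (A ^ N *ᵥ x))).re)
            Filter.atTop (nhds 0) := by
          have := (Complex.continuous_re.tendsto 0).comp (htail x)
          exact this
        have hge : 0 ≤ (star x ⬝ᵥ (Yt *ᵥ x)).re :=
          le_of_tendsto hrelim (Filter.Eventually.of_forall hrege)
        rw [Complex.le_def]
        constructor
        · simpa using hge
        · simpa using him.symm
      refine Matrix.PosDef.of_dotProduct_mulVec_pos hherm (fun x hx => ?_)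
      rcases lt_or_eq_of_le (hpsd x) with hlt | heq0
      · exact hlt
      · exfalso
        have hq0 : ∀ k : ℕ, star (G *ᵥ (A ^ k *ᵥ x)) ⬝ᵥ (C *ᵥ (G *ᵥ (A ^ k *ᵥ x))) = 0 := by
          intro k
          have ht := htel x (k + 1)
          rw [← heq0] at ht
          have hterm : ∀ k' ∈ Finset.range (k + 1),
              0 ≤ star (A ^ k' *ᵥ x) ⬝ᵥ ((Yt - Aᴴ * Yt * A) *ᵥ (A ^ k' *ᵥ x)) :=
            fun k' _ => hqnn _
          have hsumnn : 0 ≤ ∑ k' ∈ Finset.range (k + 1),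
              star (A ^ k' *ᵥ x) ⬝ᵥ ((Yt - Aᴴ * Yt * A) *ᵥ (A ^ k' *ᵥ x)) :=
            Finset.sum_nonneg hterm
          have htailnn : 0 ≤ star (A ^ (k+1) *ᵥ x) ⬝ᵥ (Yt *ᵥ (A ^ (k+1) *ᵥ x)) := hpsd _
          obtain ⟨hs0, _⟩ := (add_eq_zero_iff_of_nonneg hsumnn htailnn).1 ht.symm
          have hk0 := (Finset.sum_eq_zero_iff_of_nonneg hterm).1 hs0 k
            (Finset.self_mem_range_succ k)
          have h5 := hq2 (A ^ k *ᵥ x)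
          rw [hk0] at h5
          have h6 := h5.symm
          rcases mul_eq_zero.1 h6 with h7 | h7
          · norm_num at h7
          · exact h7
        set U : Submodule ℂ (Fin j × Fin p → ℂ) :=
          Submodule.span ℂ (Set.range fun k : ℕ => A ^ k *ᵥ x) with hUdef
        have hxU : x ∈ U := Submodule.subset_span ⟨0, by simp [Matrix.one_mulVec]⟩
        have hAU : ∀ u ∈ U, A *ᵥ u ∈ U := by
          intro u hu
          refine Submodule.span_induction (p := fun u _ => A *ᵥ u ∈ U) ?_ ?_ ?_ ?_ hu
          · rintro _ ⟨k, rfl⟩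
            apply Submodule.subset_span
            exact ⟨k + 1, by rw [Matrix.mulVec_mulVec, ← pow_succ']⟩
          · show A *ᵥ (0 : Fin j × Fin p → ℂ) ∈ U
            rw [Matrix.mulVec_zero]; exact U.zero_mem
          · intro y z hy hz hy' hz'
            show A *ᵥ (y + z) ∈ U
            rw [Matrix.mulVec_add]; exact U.add_mem hy' hz'
          · intro c y hy hy'
            show A *ᵥ (c • y) ∈ U
            rw [Matrix.mulVec_smul]; exact U.smul_mem c hy'
        have h1A : (1 : Matrix (Fin j × Fin p) (Fin j × Fin p) ℂ) - A = (2:ℂ) • G := by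
          calc (1 : Matrix (Fin j × Fin p) (Fin j × Fin p) ℂ) - A
              = (H + 1) * G - (H - 1) * G := by nth_rewrite 1 [← hG1]; rfl
          _ = ((H + 1) - (H - 1)) * G := (Matrix.sub_mul _ _ _).symm
          _ = ((2:ℂ) • 1) * G := by congr 1; rw [two_smul]; abel
          _ = (2:ℂ) • G := by rw [Matrix.smul_mul, Matrix.one_mul]
        have hGU : ∀ u ∈ U, G *ᵥ u ∈ U := by
          intro u hu
          have hgu : G *ᵥ u = (2⁻¹:ℂ) • ((1 - A) *ᵥ u) := by
            rw [h1A, Matrix.smul_mulVec, smul_smul]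
            norm_num
          rw [hgu, Matrix.sub_mulVec, Matrix.one_mulVec]
          exact U.smul_mem _ (U.sub_mem hu (hAU u hu))
        have hIAunit : IsUnit ((1 : Matrix (Fin j × Fin p) (Fin j × Fin p) ℂ) - A) := by
          rw [h1A]
          refine isUnit_left _ ((2⁻¹:ℂ) • (H + 1)) ?_
          rw [Matrix.smul_mul, Matrix.mul_smul, smul_smul, hG2]
          norm_num
        have hIAinj : Function.Injective
            ((1 : Matrix (Fin j × Fin p) (Fin j × Fin p) ℂ) - A).mulVec :=
          Matrix.mulVec_injective_iff_isUnit.2 hIAunit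
        have hmapsTo : ∀ u ∈ U,
            ((1 : Matrix (Fin j × Fin p) (Fin j × Fin p) ℂ) - A).mulVecLin u ∈ U := by
          intro u hu
          rw [Matrix.mulVecLin_apply, Matrix.sub_mulVec, Matrix.one_mulVec]
          exact U.sub_mem hu (hAU u hu)
        set e : U →ₗ[ℂ] U :=
          LinearMap.restrict ((1 : Matrix (Fin j × Fin p) (Fin j × Fin p) ℂ) - A).mulVecLin
            hmapsTo with hedef
        have heinj : Function.Injective e := by
          intro u v huv
          apply Subtype.ext
          apply hIAinj
          have := congrArg Subtype.val huv
          simpa [hedef, LinearMap.restrict_apply, Matrix.mulVecLin_apply, Matrix.sub_mulVec] using this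
        have hesurj := (LinearMap.injective_iff_surjective).1 heinj
        have hGsurj : ∀ u ∈ U, ∃ w ∈ U, G *ᵥ w = u := by
          intro u hu
          obtain ⟨w, hw⟩ := hesurj ⟨u, hu⟩
          refine ⟨(2:ℂ) • w.val, U.smul_mem _ w.2, ?_⟩
          have hwv : (1 - A) *ᵥ w.val = u := by
            have := congrArg Subtype.val hw
            simpa [hedef, LinearMap.restrict_apply, Matrix.mulVecLin_apply, Matrix.sub_mulVec] using this
          have h2g : (1 - A) *ᵥ w.val = (2:ℂ) • (G *ᵥ w.val) := by
            rw [h1A, Matrix.smul_mulVec]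
          rw [h2g] at hwv
          rw [Matrix.mulVec_smul]
          exact hwv
        have hHU : ∀ u ∈ U, H *ᵥ u ∈ U := by
          intro u hu
          obtain ⟨w, hwU, hwu⟩ := hGsurj u hu
          have hHG : H * G = 1 - G := by
            have h8 : H * G + G = 1 := by
              rw [← hG1, Matrix.add_mul, Matrix.one_mul]
            linear_combination (norm := module) h8
          rw [← hwu, Matrix.mulVec_mulVec, hHG, Matrix.sub_mulVec, Matrix.one_mulVec]
          exact U.sub_mem hwU (hGU w hwU)
        have hvanG : ∀ u ∈ U, h *ᵥ (G *ᵥ u) = 0 ∧ (Bᴴ * Z) *ᵥ (G *ᵥ u) = 0 := by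
          intro u hu
          refine Submodule.span_induction
            (p := fun u _ => h *ᵥ (G *ᵥ u) = 0 ∧ (Bᴴ * Z) *ᵥ (G *ᵥ u) = 0) ?_ ?_ ?_ ?_ hu
          · rintro _ ⟨k, rfl⟩
            have hc0 := hq0 k
            rw [hsplit _] at hc0
            obtain ⟨hc1, hc2⟩ := (add_eq_zero_iff_of_nonneg
              (dotProduct_star_self_nonneg _) (dotProduct_star_self_nonneg _)).1 hc0
            exact ⟨dotProduct_star_self_eq_zero.1 hc2,
              dotProduct_star_self_eq_zero.1 hc1⟩
          · show h *ᵥ (G *ᵥ (0 : Fin j × Fin p → ℂ)) = 0 ∧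
              (Bᴴ * Z) *ᵥ (G *ᵥ (0 : Fin j × Fin p → ℂ)) = 0
            constructor <;> simp [Matrix.mulVec_zero]
          · intro a b ha hb ha' hb'
            show h *ᵥ (G *ᵥ (a + b)) = 0 ∧ (Bᴴ * Z) *ᵥ (G *ᵥ (a + b)) = 0
            constructor <;> simp [Matrix.mulVec_add, ha'.1, ha'.2, hb'.1, hb'.2]
          · intro c a ha ha'
            show h *ᵥ (G *ᵥ (c • a)) = 0 ∧ (Bᴴ * Z) *ᵥ (G *ᵥ (c • a)) = 0
            constructor <;> simp [Matrix.mulVec_smul, ha'.1, ha'.2]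
        have hvan : ∀ u ∈ U, h *ᵥ u = 0 ∧ (Bᴴ * Z) *ᵥ u = 0 := by
          intro u hu
          obtain ⟨w, hwU, hwu⟩ := hGsurj u hu
          rw [← hwu]
          exact hvanG w hwU
        obtain ⟨k, y, hy, heig, hUy⟩ := NN_eigen H s htri hdiag x hx
        have hyU : y ∈ U := hUy U hxU hHU
        obtain ⟨hhy, hDy⟩ := hvan y hyU
        have hZy : Z *ᵥ y ≠ 0 := by
          intro hzy
          apply hy
          have hlin := hrank.comp Sum.inr Sum.inr_injective
          have hfun : ((fun c : Fin p ⊕ (Fin j × Fin p) => (fromCols V Z)ᵀ c) ∘ Sum.inr) =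
              fun c : Fin j × Fin p => Zᵀ c := by
            funext c
            funext rr
            simp [Matrix.transpose_apply, Matrix.fromCols_apply_inr]
          rw [hfun] at hlin
          have hzero := Fintype.linearIndependent_iff.1 hlin y ?_
          · funext c
            exact hzero c
          · funext rr
            rw [Finset.sum_apply]
            have hterm : ∑ c : Fin j × Fin p, (y c • Zᵀ c) rr = (Z *ᵥ y) rr := by
              simp [Matrix.mulVec, dotProduct, Matrix.transpose_apply, mul_comm]
            rw [hterm, hzy]
        have hFZ : F *ᵥ (Z *ᵥ y) = s k • (Z *ᵥ y) := by
          rw [Matrix.mulVec_mulVec, hbrad, Matrix.add_mulVec, ← Matrix.mulVec_mulVec,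
            ← Matrix.mulVec_mulVec, hhy, Matrix.mulVec_zero, zero_add, heig,
            Matrix.mulVec_smul]
        apply hspec k
        rw [spectrum.mem_iff]
        intro hUnit
        rw [Algebra.algebraMap_eq_smul_one] at hUnit
        have hMinj := Matrix.mulVec_injective_iff_isUnit.2 hUnit
        apply hZy
        have hzero2 : (s k • (1 : Matrix (Fin n) (Fin n) ℂ) - F) *ᵥ (Z *ᵥ y) = 0 := by
          rw [Matrix.sub_mulVec, Matrix.smul_mulVec, Matrix.one_mulVec, hFZ, sub_self]
        have h0 : (s k • (1 : Matrix (Fin n) (Fin n) ℂ) - F) *ᵥ 0 = 0 := Matrix.mulVec_zero _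
        exact hMinj (hzero2.trans h0.symm)
  refine ⟨Yt, ⟨hherm, ?_, hpd⟩, ?_⟩
  · rw [hYtEq, hCdef]
    abel
  · rintro Y' ⟨hY'h, hY'eq⟩
    apply hinj
    rw [hLapp, hLapp, hYtEq]
    rw [sub_sub] at hY'eq
    rw [sub_eq_zero.1 hY'eq, hCdef]
end

section
/- Let A ∈ ℂ^{n×n}, B ∈ ℂ^{n×m}, C ∈ ℂ^{p×n}, Z ∈ ℂ^{n×q}, h ∈ ℂ^{p×q}, H ∈ ℂ^{q×q} with Aᴴ·Z = Cᴴ·h + Z·H, and let Y ∈ ℂ^{q×q} be Hermitian. Set S = Zᴴ B Bᴴ Z. Then the Riccati residual of X = Z Y Zᴴ factors as 𝓡(X) = [Cᴴ Z] · M · [Cᴴ Z]ᴴ, where M is the (p+q)×(p+q) block matrix M = [[I_p, h·Y], [Y·hᴴ, H·Y + Y·Hᴴ − Y·S·Y]]. -/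
open Matrix

/-- Factorization of the Riccati residual of `X = Z Y Zᴴ` through the basis
`[Cᴴ Z]`: `𝓡(X) = [Cᴴ Z] · M · [Cᴴ Z]ᴴ` with
`M = [[I, hY], [Yhᴴ, HY + YHᴴ − YSY]]` and `S = ZᴴBBᴴZ`. -/
theorem stmt7 (n m p q : ℕ)
    (A : Matrix (Fin n) (Fin n) ℂ) (B : Matrix (Fin n) (Fin m) ℂ)
    (C : Matrix (Fin p) (Fin n) ℂ) (Z : Matrix (Fin n) (Fin q) ℂ)
    (h : Matrix (Fin p) (Fin q) ℂ) (H : Matrix (Fin q) (Fin q) ℂ)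
    (hbrad : Aᴴ * Z = Cᴴ * h + Z * H)
    (Y : Matrix (Fin q) (Fin q) ℂ) (hY : Y.IsHermitian) :
    Aᴴ * (Z * Y * Zᴴ) + (Z * Y * Zᴴ) * A + Cᴴ * C -
        (Z * Y * Zᴴ) * B * Bᴴ * (Z * Y * Zᴴ) =
      fromCols Cᴴ Z *
        fromBlocks 1 (h * Y) (Y * hᴴ)
          (H * Y + Y * Hᴴ - Y * (Zᴴ * B * Bᴴ * Z) * Y) *
        (fromCols Cᴴ Z)ᴴ := by
  have h2 : Zᴴ * A = hᴴ * C + Hᴴ * Zᴴ := by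
    have := congrArg conjTranspose hbrad
    simpa [conjTranspose_mul, conjTranspose_add] using this
  rw [conjTranspose_fromCols_eq_fromRows_conjTranspose,
    fromCols_mul_fromBlocks, fromCols_mul_fromRows]
  have e1 : Aᴴ * (Z * Y * Zᴴ) = (Cᴴ * h + Z * H) * Y * Zᴴ := by
    rw [← Matrix.mul_assoc, ← Matrix.mul_assoc, hbrad]
  have e2 : (Z * Y * Zᴴ) * A = Z * Y * (hᴴ * C + Hᴴ * Zᴴ) := by
    rw [Matrix.mul_assoc, h2]
  rw [e1, e2]
  simp only [Matrix.add_mul, Matrix.mul_add, Matrix.sub_mul, Matrix.mul_sub, Matrix.mul_assoc,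
    Matrix.one_mul, Matrix.mul_one, conjTranspose_conjTranspose]
  abel
end

section
/- Let A_1 ∈ ℂ^{n_1×n_1}, A_2 ∈ ℂ^{n_2×n_2}, B_1 ∈ ℂ^{n_1×m}, B_2 ∈ ℂ^{n_2×m}, C_1 ∈ ℂ^{p×n_1}, C_2 ∈ ℂ^{p×n_2}, and for i = 1, 2 let Z_i ∈ ℂ^{n_i×q}, h_i ∈ ℂ^{p×q}, H_i ∈ ℂ^{q×q} satisfy A_iᴴ·Z_i = C_iᴴ·h_i + Z_i·H_i. Let Y ∈ ℂ^{q×q} be invertible and satisfy the Sylvester equation Y^{-1}·H_1 + H_2ᴴ·Y^{-1} = S + h_2ᴴ·h_1, where S = Z_2ᴴ B_2 B_1ᴴ Z_1. Then the matrix X = Z_1 Y Z_2ᴴ satisfies A_1ᴴX + X A_2 + C_1ᴴC_2 − X B_2 B_1ᴴ X = (C_1ᴴ + Z_1·Y·h_2ᴴ)·(C_2 + h_1·Y·Z_2ᴴ); in particular, the nonsymmetric Riccati residual of X has rank at most p. -/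
open Matrix

/-- Nonsymmetric Riccati residual factorization: given two compressed block
rational Arnoldi decompositions `A_iᴴ·Z_i = C_iᴴ·h_i + Z_i·H_i` and an
invertible `Y` solving the Sylvester equation
`Y⁻¹·H₁ + H₂ᴴ·Y⁻¹ = Z₂ᴴB₂B₁ᴴZ₁ + h₂ᴴh₁`, the nonsymmetric Riccati residual of
`X = Z₁ Y Z₂ᴴ` factors as `(C₁ᴴ + Z₁Yh₂ᴴ)(C₂ + h₁YZ₂ᴴ)` and hence has rank at
most `p`. -/
theorem stmt11 (n₁ n₂ m p q : ℕ)
    (A₁ : Matrix (Fin n₁) (Fin n₁) ℂ) (A₂ : Matrix (Fin n₂) (Fin n₂) ℂ)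
    (B₁ : Matrix (Fin n₁) (Fin m) ℂ) (B₂ : Matrix (Fin n₂) (Fin m) ℂ)
    (C₁ : Matrix (Fin p) (Fin n₁) ℂ) (C₂ : Matrix (Fin p) (Fin n₂) ℂ)
    (Z₁ : Matrix (Fin n₁) (Fin q) ℂ) (Z₂ : Matrix (Fin n₂) (Fin q) ℂ)
    (h₁ h₂ : Matrix (Fin p) (Fin q) ℂ)
    (H₁ H₂ : Matrix (Fin q) (Fin q) ℂ)
    (hbrad₁ : A₁ᴴ * Z₁ = C₁ᴴ * h₁ + Z₁ * H₁)
    (hbrad₂ : A₂ᴴ * Z₂ = C₂ᴴ * h₂ + Z₂ * H₂)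
    (Y : Matrix (Fin q) (Fin q) ℂ) (hYu : IsUnit Y)
    (hsylv : Y⁻¹ * H₁ + H₂ᴴ * Y⁻¹ = Z₂ᴴ * B₂ * B₁ᴴ * Z₁ + h₂ᴴ * h₁) :
    A₁ᴴ * (Z₁ * Y * Z₂ᴴ) + (Z₁ * Y * Z₂ᴴ) * A₂ + C₁ᴴ * C₂ -
        (Z₁ * Y * Z₂ᴴ) * B₂ * B₁ᴴ * (Z₁ * Y * Z₂ᴴ) =
      (C₁ᴴ + Z₁ * Y * h₂ᴴ) * (C₂ + h₁ * Y * Z₂ᴴ) ∧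
    (A₁ᴴ * (Z₁ * Y * Z₂ᴴ) + (Z₁ * Y * Z₂ᴴ) * A₂ + C₁ᴴ * C₂ -
        (Z₁ * Y * Z₂ᴴ) * B₂ * B₁ᴴ * (Z₁ * Y * Z₂ᴴ)).rank ≤ p := by
  have hd : IsUnit Y.det := (Matrix.isUnit_iff_isUnit_det Y).mp hYu
  have key : H₁ * (Y * Z₂ᴴ) + Y * (H₂ᴴ * Z₂ᴴ) =
      Y * (Z₂ᴴ * (B₂ * (B₁ᴴ * (Z₁ * (Y * Z₂ᴴ))))) + Y * (h₂ᴴ * (h₁ * (Y * Z₂ᴴ))) := by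
    have h := congrArg (fun M => Y * M * (Y * Z₂ᴴ)) hsylv
    simp only [Matrix.mul_add, Matrix.add_mul, Matrix.mul_assoc] at h
    rw [Matrix.mul_nonsing_inv_cancel_left _ _ hd,
      Matrix.nonsing_inv_mul_cancel_left _ _ hd] at h
    simpa [Matrix.mul_assoc] using h
  have e2 : Z₂ᴴ * A₂ = h₂ᴴ * C₂ + H₂ᴴ * Z₂ᴴ := by
    have := congrArg conjTranspose hbrad₂
    simpa [Matrix.conjTranspose_mul] using this
  have fact : A₁ᴴ * (Z₁ * Y * Z₂ᴴ) + (Z₁ * Y * Z₂ᴴ) * A₂ + C₁ᴴ * C₂ -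
      (Z₁ * Y * Z₂ᴴ) * B₂ * B₁ᴴ * (Z₁ * Y * Z₂ᴴ) =
      (C₁ᴴ + Z₁ * Y * h₂ᴴ) * (C₂ + h₁ * Y * Z₂ᴴ) := by
    have h1 : A₁ᴴ * (Z₁ * Y * Z₂ᴴ) = (C₁ᴴ * h₁ + Z₁ * H₁) * (Y * Z₂ᴴ) := by
      rw [Matrix.mul_assoc Z₁ Y Z₂ᴴ, ← Matrix.mul_assoc A₁ᴴ, hbrad₁]
    have h2 : (Z₁ * Y * Z₂ᴴ) * A₂ = Z₁ * Y * (h₂ᴴ * C₂ + H₂ᴴ * Z₂ᴴ) := by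
      rw [Matrix.mul_assoc, e2]
    have key' := congrArg (fun M => Z₁ * M) key
    simp only [Matrix.mul_add] at key'
    have key2 : Z₁ * (H₁ * (Y * Z₂ᴴ)) =
        Z₁ * (Y * (Z₂ᴴ * (B₂ * (B₁ᴴ * (Z₁ * (Y * Z₂ᴴ)))))) +
          Z₁ * (Y * (h₂ᴴ * (h₁ * (Y * Z₂ᴴ)))) - Z₁ * (Y * (H₂ᴴ * Z₂ᴴ)) := by
      rw [eq_sub_iff_add_eq]; exact key'
    rw [h1, h2]
    simp only [Matrix.mul_add, Matrix.add_mul, Matrix.mul_assoc]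
    rw [key2]
    abel
  refine ⟨fact, ?_⟩
  rw [fact]
  calc ((C₁ᴴ + Z₁ * Y * h₂ᴴ) * (C₂ + h₁ * Y * Z₂ᴴ)).rank
      ≤ (C₁ᴴ + Z₁ * Y * h₂ᴴ).rank := Matrix.rank_mul_le_left _ _
    _ ≤ p := by simpa using Matrix.rank_le_width (C₁ᴴ + Z₁ * Y * h₂ᴴ)
end

section
/- Let A ∈ ℂ^{n×n}, B ∈ ℂ^{n×m}, C ∈ ℂ^{1×n}, Z ∈ ℂ^{n×j}, h ∈ ℂ^{1×j}, H ∈ ℂ^{j×j} with Aᴴ·Z = Cᴴ·h + Z·H, and let Y ∈ ℂ^{j×j} be Hermitian. Let W̃ ∈ ℂ^{n×j} satisfy W̃ᴴ·Z = I_j and W̃ᴴ·(Cᴴ + Z·Y·hᴴ) = 0. Then W̃ᴴ·Cᴴ = −Y·hᴴ, and the projected Riccati residual satisfies W̃ᴴ·𝓡(Z Y Zᴴ)·W̃ = H·Y + Y·Hᴴ − Y·(Zᴴ B Bᴴ Z + hᴴ h)·Y. In particular, W̃ᴴ·𝓡(Z Y Zᴴ)·W̃ = 0 if and only if Y solves the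 reduced Riccati equation H·Y + Y·Hᴴ − Y·(Zᴴ B Bᴴ Z + hᴴ h)·Y = 0. -/
open Matrix

/-- Projection interpretation (p = 1): if `WtᴴZ = I` and `Wt` annihilates the
residual factor `Cᴴ + ZYhᴴ`, then `WtᴴCᴴ = −Yhᴴ` and the projected Riccati
residual `Wtᴴ𝓡(ZYZᴴ)Wt` equals the reduced Riccati expression
`HY + YHᴴ − Y(ZᴴBBᴴZ + hᴴh)Y`; in particular it vanishes iff `Y` solves the
reduced Riccati equation. -/
theorem stmt12 (n m j : ℕ)
    (A : Matrix (Fin n) (Fin n) ℂ) (B : Matrix (Fin n) (Fin m) ℂ)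
    (C : Matrix (Fin 1) (Fin n) ℂ) (Z : Matrix (Fin n) (Fin j) ℂ)
    (h : Matrix (Fin 1) (Fin j) ℂ) (H : Matrix (Fin j) (Fin j) ℂ)
    (hbrad : Aᴴ * Z = Cᴴ * h + Z * H)
    (Y : Matrix (Fin j) (Fin j) ℂ) (hY : Y.IsHermitian)
    (Wt : Matrix (Fin n) (Fin j) ℂ)
    (hWZ : Wtᴴ * Z = 1) (hWR : Wtᴴ * (Cᴴ + Z * Y * hᴴ) = 0) :
    Wtᴴ * Cᴴ = -(Y * hᴴ) ∧
    Wtᴴ * (Aᴴ * (Z * Y * Zᴴ) + (Z * Y * Zᴴ) * A + Cᴴ * C -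
        (Z * Y * Zᴴ) * B * Bᴴ * (Z * Y * Zᴴ)) * Wt =
      H * Y + Y * Hᴴ - Y * (Zᴴ * B * Bᴴ * Z + hᴴ * h) * Y ∧
    (Wtᴴ * (Aᴴ * (Z * Y * Zᴴ) + (Z * Y * Zᴴ) * A + Cᴴ * C -
        (Z * Y * Zᴴ) * B * Bᴴ * (Z * Y * Zᴴ)) * Wt = 0 ↔
      H * Y + Y * Hᴴ - Y * (Zᴴ * B * Bᴴ * Z + hᴴ * h) * Y = 0) := by
  have h3 : Wtᴴ * (Z * Y * hᴴ) = Y * hᴴ := by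
    rw [← Matrix.mul_assoc, ← Matrix.mul_assoc, hWZ, Matrix.one_mul]
  have h2 : Wtᴴ * Cᴴ + Wtᴴ * (Z * Y * hᴴ) = 0 := by
    rw [← Matrix.mul_add]; exact hWR
  rw [h3] at h2
  have h1 : Wtᴴ * Cᴴ = -(Y * hᴴ) := eq_neg_of_add_eq_zero_left h2
  have hZW : Zᴴ * Wt = 1 := by
    have := congrArg conjTranspose hWZ
    simpa using this
  have hCW : C * Wt = -(h * Y) := by
    have := congrArg conjTranspose h1
    simpa [Matrix.conjTranspose_mul, hY.eq] using this
  have hZA : Zᴴ * A = hᴴ * C + Hᴴ * Zᴴ := by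
    have := congrArg conjTranspose hbrad
    simpa [Matrix.conjTranspose_mul] using this
  have key : Wtᴴ * (Aᴴ * (Z * Y * Zᴴ) + (Z * Y * Zᴴ) * A + Cᴴ * C -
      (Z * Y * Zᴴ) * B * Bᴴ * (Z * Y * Zᴴ)) * Wt =
      H * Y + Y * Hᴴ - Y * (Zᴴ * B * Bᴴ * Z + hᴴ * h) * Y := by
    have eA : Aᴴ * (Z * Y * Zᴴ) = (Cᴴ * h + Z * H) * Y * Zᴴ := by
      rw [← Matrix.mul_assoc, ← Matrix.mul_assoc, hbrad]
    have eA2 : (Z * Y * Zᴴ) * A = Z * Y * (hᴴ * C + Hᴴ * Zᴴ) := by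
      rw [Matrix.mul_assoc, hZA]
    rw [eA, eA2]
    simp only [Matrix.mul_add, Matrix.add_mul, Matrix.sub_mul, Matrix.mul_sub,
      Matrix.mul_assoc, hZW, Matrix.mul_one, Matrix.mul_neg, Matrix.neg_mul, hCW]
    simp only [← Matrix.mul_assoc, hWZ, Matrix.one_mul, h1, Matrix.neg_mul,
      Matrix.mul_neg, neg_neg]
    noncomm_ring
  exact ⟨h1, key, by rw [key]⟩
end

section
/- Let A ∈ ℂ^{n×n}, B ∈ ℂ^{n×m}, C ∈ ℂ^{1×n}, Z ∈ ℂ^{n×j}, h ∈ ℂ^{1×j}, H ∈ ℂ^{j×j} with Aᴴ·Z = Cᴴ·h + Z·H. Let Y ∈ ℂ^{j×j} be Hermitian and invertible with H·Y + Y·Hᴴ − Y·(Zᴴ B Bᴴ Z + hᴴ h)·Y = 0, and let W̃ ∈ ℂ^{n×j} satisfy W̃ᴴ·Z = I_j and W̃ᴴ·(Cᴴ + Z·Y·hᴴ) = 0. Then the projected system matrices satisfy W̃ᴴ·Aᴴ·Z = −Y·hᴴ·h + H and W̃ᴴ·(Aᴴ − Z Y Zᴴ·B Bᴴ)·Z =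 −Y·Hᴴ·Y^{-1}. -/
open Matrix

/-- Projected system matrices: under the rational Arnoldi decomposition
`Aᴴ·Z = Cᴴ·h + Z·H`, with `Y` a Hermitian invertible solution of the reduced
Riccati equation and `Wt` the oblique projection data (`WtᴴZ = I`,
`Wtᴴ(Cᴴ + ZYhᴴ) = 0`), one has `WtᴴAᴴZ = −Yhᴴh + H` and
`Wtᴴ(Aᴴ − ZYZᴴBBᴴ)Z = −YHᴴY⁻¹`. -/
theorem stmt13 (n m j : ℕ)
    (A : Matrix (Fin n) (Fin n) ℂ) (B : Matrix (Fin n) (Fin m) ℂ)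
    (C : Matrix (Fin 1) (Fin n) ℂ) (Z : Matrix (Fin n) (Fin j) ℂ)
    (h : Matrix (Fin 1) (Fin j) ℂ) (H : Matrix (Fin j) (Fin j) ℂ)
    (hbrad : Aᴴ * Z = Cᴴ * h + Z * H)
    (Y : Matrix (Fin j) (Fin j) ℂ) (hY : Y.IsHermitian) (hYu : IsUnit Y)
    (hric : H * Y + Y * Hᴴ - Y * (Zᴴ * B * Bᴴ * Z + hᴴ * h) * Y = 0)
    (Wt : Matrix (Fin n) (Fin j) ℂ)
    (hWZ : Wtᴴ * Z = 1) (hWR : Wtᴴ * (Cᴴ + Z * Y * hᴴ) = 0) :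
    Wtᴴ * Aᴴ * Z = -(Y * hᴴ * h) + H ∧
    Wtᴴ * (Aᴴ - Z * Y * Zᴴ * B * Bᴴ) * Z = -(Y * Hᴴ * Y⁻¹) := by
  have hWC : Wtᴴ * Cᴴ = -(Y * hᴴ) := by
    have h2 := hWR
    rw [Matrix.mul_add, ← Matrix.mul_assoc, ← Matrix.mul_assoc, hWZ,
      Matrix.one_mul] at h2
    exact eq_neg_of_add_eq_zero_left h2
  have key1 : Wtᴴ * Aᴴ * Z = -(Y * hᴴ * h) + H := by
    rw [Matrix.mul_assoc, hbrad, Matrix.mul_add, ← Matrix.mul_assoc,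
      ← Matrix.mul_assoc, hWC, hWZ, Matrix.one_mul, Matrix.neg_mul]
  refine ⟨key1, ?_⟩
  have hYY : Y * Y⁻¹ = 1 := Matrix.mul_nonsing_inv Y
    ((Matrix.isUnit_iff_isUnit_det Y).mp hYu)
  have key2 : Wtᴴ * (Aᴴ - Z * Y * Zᴴ * B * Bᴴ) * Z
      = -(Y * hᴴ * h) + H - Y * Zᴴ * B * Bᴴ * Z := by
    rw [Matrix.mul_sub, Matrix.sub_mul, key1]
    congr 1
    simp only [← Matrix.mul_assoc]
    rw [hWZ, Matrix.one_mul]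
  rw [key2]
  have hr : (-(Y * hᴴ * h) + H - Y * Zᴴ * B * Bᴴ * Z) * Y = -(Y * Hᴴ) := by
    have hric' := hric
    simp only [Matrix.mul_add, Matrix.add_mul, Matrix.sub_mul, Matrix.neg_mul,
      Matrix.mul_assoc] at hric' ⊢
    linear_combination (norm := abel) hric'
  calc -(Y * hᴴ * h) + H - Y * Zᴴ * B * Bᴴ * Z
      = (-(Y * hᴴ * h) + H - Y * Zᴴ * B * Bᴴ * Z) * (Y * Y⁻¹) := by
        rw [hYY, Matrix.mul_one]
    _ = ((-(Y * hᴴ * h) + H - Y * Zᴴ * B * Bᴴ * Z) * Y) * Y⁻¹ := (Matrix.mul_assoc _ _ _).symm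
    _ = -(Y * Hᴴ) * Y⁻¹ := by rw [hr]
    _ = -(Y * Hᴴ * Y⁻¹) := by rw [Matrix.neg_mul]
end

section
/- Let H ∈ ℂ^{q×q}, U_2 ∈ ℂ^{q×p}, μ ∈ ℂ, Z ∈ ℂ^{n×q}, Ẑ ∈ ℂ^{n×p}, h ∈ ℂ^{p×q}, U_1 ∈ ℂ^{p×p}, B ∈ ℂ^{n×m}. Suppose the Hermitian matrix Ỹ = [[Y_{11}, Y_{12}], [Y_{12}ᴴ, Y_{22}]] ∈ ℂ^{(q+p)×(q+p)} (with Y_{11} ∈ ℂ^{q×q} Hermitian, Y_{12} ∈ ℂ^{q×p}, Y_{22} ∈ ℂ^{p×p} Hermitian) solves the extended Lyapunov equation Ỹ·H_+ + H_+ᴴ·Ỹ = [Z Ẑ]ᴴ B Bᴴ [Z Ẑ] + [h U_1]ᴴ·[h U_1], where H_+ = [[H, U_2], [0, μ·I_p]]. Then: (i) Y_{11}·H + Hᴴ·Y_{11} = Zᴴ B Bᴴ Z + hᴴ h; (ii) (μ·I_q + Hᴴ)·Y_{12} = −Y_{11}·U_2 + Zᴴ B Bᴴ Ẑ + hᴴ·U_1;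 and (iii) (μ + μ̄)·Y_{22} = −Y_{12}ᴴ·U_2 − U_2ᴴ·Y_{12} + Ẑᴴ B Bᴴ Ẑ + U_1ᴴ·U_1. -/
open Matrix

/-- Incremental update of the Lyapunov solution: if the Hermitian block matrix
`Yt = [[Y₁₁, Y₁₂], [Y₁₂ᴴ, Y₂₂]]` solves the extended Lyapunov equation with
`H₊ = [[H, U₂], [0, μI]]`, then `Y₁₁` solves the original Lyapunov equation,
`Y₁₂` solves a shifted linear system, and `Y₂₂` is given explicitly. -/
theorem stmt14 (n m p q : ℕ)
    (H : Matrix (Fin q) (Fin q) ℂ) (U₂ : Matrix (Fin q) (Fin p) ℂ) (μ : ℂ)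
    (Z : Matrix (Fin n) (Fin q) ℂ) (Zh : Matrix (Fin n) (Fin p) ℂ)
    (h : Matrix (Fin p) (Fin q) ℂ) (U₁ : Matrix (Fin p) (Fin p) ℂ)
    (B : Matrix (Fin n) (Fin m) ℂ)
    (Y₁₁ : Matrix (Fin q) (Fin q) ℂ) (Y₁₂ : Matrix (Fin q) (Fin p) ℂ)
    (Y₂₂ : Matrix (Fin p) (Fin p) ℂ)
    (hY₁₁ : Y₁₁.IsHermitian) (hY₂₂ : Y₂₂.IsHermitian)
    (hlyap :
      fromBlocks Y₁₁ Y₁₂ Y₁₂ᴴ Y₂₂ *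
          fromBlocks H U₂ 0 (μ • (1 : Matrix (Fin p) (Fin p) ℂ)) +
        (fromBlocks H U₂ 0 (μ • (1 : Matrix (Fin p) (Fin p) ℂ)))ᴴ *
          fromBlocks Y₁₁ Y₁₂ Y₁₂ᴴ Y₂₂ =
      (fromCols Z Zh)ᴴ * B * Bᴴ * fromCols Z Zh +
        (fromCols h U₁)ᴴ * fromCols h U₁) :
    Y₁₁ * H + Hᴴ * Y₁₁ = Zᴴ * B * Bᴴ * Z + hᴴ * h ∧
    (μ • (1 : Matrix (Fin q) (Fin q) ℂ) + Hᴴ) * Y₁₂ =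
      -(Y₁₁ * U₂) + Zᴴ * B * Bᴴ * Zh + hᴴ * U₁ ∧
    (μ + (starRingEnd ℂ) μ) • Y₂₂ =
      -(Y₁₂ᴴ * U₂) - U₂ᴴ * Y₁₂ + Zhᴴ * B * Bᴴ * Zh + U₁ᴴ * U₁ := by
  rw [conjTranspose_fromCols_eq_fromRows_conjTranspose,
      conjTranspose_fromCols_eq_fromRows_conjTranspose] at hlyap
  have hB : (fromRows Zᴴ Zhᴴ * B) * Bᴴ * fromCols Z Zh
      = fromBlocks (Zᴴ*B*Bᴴ*Z) (Zᴴ*B*Bᴴ*Zh) (Zhᴴ*B*Bᴴ*Z) (Zhᴴ*B*Bᴴ*Zh) := by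
    rw [show fromRows Zᴴ Zhᴴ * B = fromRows (Zᴴ*B) (Zhᴴ*B) from fromRows_mul _ _ _,
        show fromRows (Zᴴ*B) (Zhᴴ*B) * Bᴴ = fromRows (Zᴴ*B*Bᴴ) (Zhᴴ*B*Bᴴ) from fromRows_mul _ _ _,
        fromRows_mul_fromCols]
  rw [hB, fromRows_mul_fromCols, fromBlocks_conjTranspose, fromBlocks_multiply,
      fromBlocks_multiply, fromBlocks_add, fromBlocks_add, fromBlocks_inj] at hlyap
  obtain ⟨h11, h12, h21, h22⟩ := hlyap
  refine ⟨?_, ?_, ?_⟩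
  · simpa using h11
  · rw [Matrix.add_mul, Matrix.smul_mul, Matrix.one_mul]
    simp only [Matrix.mul_zero, add_zero, Matrix.mul_smul, Matrix.mul_one,
      conjTranspose_zero, Matrix.zero_mul, zero_add] at h12
    have key : μ • Y₁₂ + Hᴴ * Y₁₂ + Y₁₁ * U₂ = Zᴴ * B * Bᴴ * Zh + hᴴ * U₁ := by
      rw [← h12]; abel
    rw [eq_sub_of_add_eq key]; abel
  · simp only [Matrix.mul_zero, add_zero, Matrix.mul_smul, Matrix.mul_one,
      conjTranspose_smul, conjTranspose_one, Matrix.smul_mul, Matrix.one_mul,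
      starRingEnd_apply] at h22
    have key : (μ + (starRingEnd ℂ) μ) • Y₂₂ + (Y₁₂ᴴ * U₂ + U₂ᴴ * Y₁₂)
        = Zhᴴ * B * Bᴴ * Zh + U₁ᴴ * U₁ := by
      rw [add_smul, ← h22, starRingEnd_apply]; abel
    rw [eq_sub_of_add_eq key]; abel
end
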